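/- arXiv:2011.03887 — 5 statements merged into one kernel-verified Lean document; each statement's English description precedes it below -/
import Mathlib

section
/- Let n be a positive integer and let R = ℤ[X]/(X^n). For every positive integer k, the number of ideals I of R such that R/I is finite with exactly k elements equals the sum, over all n-tuples (m_1, m_2, ..., m_n) of positive integers satisfying m_1^1 · m_2^2 · ... · m_n^n = k, of the products m_1^0 · m_2^1 · ... · m_n^{n-1}. (Equivalently, the ideal zeta function of ℤ[X]/(X^n) equals ζ(s)ζ(2s−1)ζ(3s−2)···ζ(ns−(n−1)) as a formal Dirichlet series.) -/
/-- `idealCount R k` is the number of ideals `I` of `R` such that `R ⧸ I` is finite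
with exactly `k` elements. -/
noncomputable def idealCount (R : Type) [CommRing R] (k : ℕ) : ℕ :=
  Set.ncard {I : Ideal R | Nat.card (R ⧸ I) = k}

open Polynomial

noncomputable section


def lowZero (j : ℕ) : Submodule ℤ (Polynomial ℤ) where
  carrier := {p | ∀ i < j, p.coeff i = 0}
  add_mem' := fun {a b} ha hb i hi => by simp [coeff_add, ha i hi, hb i hi]
  zero_mem' := fun i _ => by simp
  smul_mem' := fun c {x} hx i hi => by simp [hx i hi]

lemma mem_lowZero {j : ℕ} {p : Polynomial ℤ} : p ∈ lowZero j ↔ ∀ i < j, p.coeff i = 0 :=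
  Iff.rfl

lemma lowZero_zero : lowZero 0 = ⊤ := by
  ext p; simp [mem_lowZero]

lemma lowZero_antitone {j k : ℕ} (h : j ≤ k) : lowZero k ≤ lowZero j :=
  fun p hp i hi => hp i (lt_of_lt_of_le hi h)

lemma mem_lowZero_iff_dvd {j : ℕ} {p : Polynomial ℤ} : p ∈ lowZero j ↔ X ^ j ∣ p := by
  rw [Polynomial.X_pow_dvd_iff, mem_lowZero]

def coeffSub (J : Ideal (Polynomial ℤ)) (j : ℕ) : Submodule ℤ ℤ :=
  Submodule.map (Polynomial.lcoeff ℤ j) (J.restrictScalars ℤ ⊓ lowZero j)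

lemma mem_coeffSub {J : Ideal (Polynomial ℤ)} {j : ℕ} {c : ℤ} :
    c ∈ coeffSub J j ↔ ∃ p, p ∈ J ∧ (∀ i < j, p.coeff i = 0) ∧ p.coeff j = c := by
  simp only [coeffSub, Submodule.mem_map, Submodule.mem_inf, Submodule.restrictScalars_mem,
    mem_lowZero, lcoeff_apply]
  tauto

/-- The additive filtration of `ℤ[X]` interpolating between `⊤` and `J`. -/
def levelAdd (J : Ideal (Polynomial ℤ)) (j : ℕ) : AddSubgroup (Polynomial ℤ) :=
  (J.restrictScalars ℤ ⊔ lowZero j).toAddSubgroup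

lemma toAddSubgroup_sup (p q : Submodule ℤ (Polynomial ℤ)) :
    (p ⊔ q).toAddSubgroup = p.toAddSubgroup ⊔ q.toAddSubgroup := by
  ext x
  simp [Submodule.mem_sup, AddSubgroup.mem_sup]

lemma levelAdd_zero (J : Ideal (Polynomial ℤ)) : levelAdd J 0 = ⊤ := by
  rw [levelAdd, lowZero_zero]
  simp

lemma levelAdd_antitone (J : Ideal (Polynomial ℤ)) {j k : ℕ} (h : j ≤ k) :
    levelAdd J k ≤ levelAdd J j := by
  apply Submodule.toAddSubgroup_mono
  exact sup_le_sup le_rfl (lowZero_antitone h)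

lemma levelAdd_eq (J : Ideal (Polynomial ℤ)) {n : ℕ} (h : X ^ n ∈ J) :
    levelAdd J n = (J.restrictScalars ℤ).toAddSubgroup := by
  rw [levelAdd, sup_eq_left.2]
  intro p hp
  obtain ⟨q, rfl⟩ := mem_lowZero_iff_dvd.1 hp
  exact J.mul_mem_right q h

/-- the quotient map used to compute the graded pieces -/
def levelHom (J : Ideal (Polynomial ℤ)) (j : ℕ) :
    ↥((lowZero j).toAddSubgroup) →+ (ℤ ⧸ coeffSub J j) :=
  ((coeffSub J j).mkQ.toAddMonoidHom.comp (Polynomial.lcoeff ℤ j).toAddMonoidHom).comp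
    (lowZero j).toAddSubgroup.subtype

lemma levelHom_surjective (J : Ideal (Polynomial ℤ)) (j : ℕ) :
    Function.Surjective (levelHom J j) := by
  intro c
  obtain ⟨c', rfl⟩ := Submodule.mkQ_surjective _ c
  refine ⟨⟨c' • X ^ j, ?_⟩, ?_⟩
  · intro i hi
    simp [coeff_X_pow, Nat.ne_of_lt hi]
  · simp [levelHom, coeff_X_pow]

lemma levelHom_ker (J : Ideal (Polynomial ℤ)) (j : ℕ) :
    (levelHom J j).ker = (levelAdd J (j+1)).addSubgroupOf (lowZero j).toAddSubgroup := by
  ext ⟨x, hx⟩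
  simp only [AddMonoidHom.mem_ker, levelHom, AddMonoidHom.coe_comp, Function.comp_apply,
    AddSubgroup.coe_subtype, LinearMap.toAddMonoidHom_coe, Submodule.mkQ_apply,
    Submodule.Quotient.mk_eq_zero, lcoeff_apply, AddSubgroup.mem_addSubgroupOf]
  constructor
  · intro hc
    rw [mem_coeffSub] at hc
    obtain ⟨q, hqJ, hqlow, hqc⟩ := hc
    have hxq : x - q ∈ lowZero (j+1) := by
      intro i hi
      rcases Nat.lt_or_ge i j with h | h
      · simp [coeff_sub, hx i h, hqlow i h]
      · have : i = j := by omega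
        subst this
        simp [coeff_sub, hqc]
    have : x = q + (x - q) := by ring
    rw [levelAdd]
    show x ∈ (J.restrictScalars ℤ ⊔ lowZero (j+1) : Submodule ℤ _)
    rw [this]
    exact Submodule.add_mem_sup hqJ hxq
  · intro hmem
    have : x ∈ (J.restrictScalars ℤ ⊔ lowZero (j+1) : Submodule ℤ _) := hmem
    rw [Submodule.mem_sup] at this
    obtain ⟨q, hqJ, f, hf, rfl⟩ := this
    rw [mem_coeffSub]
    refine ⟨q, hqJ, ?_, ?_⟩
    · intro i hi
      have h1 := hx i hi
      have h2 := hf i (by omega)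
      simp only [coeff_add] at h1
      omega
    · have h2 := hf j (by omega)
      have := congrArg (fun p => Polynomial.coeff p j) (rfl : q + f = q + f)
      simp only [coeff_add] at *
      omega

lemma relindex_levelAdd (J : Ideal (Polynomial ℤ)) (j : ℕ) :
    (levelAdd J (j+1)).relIndex (levelAdd J j) = Nat.card (ℤ ⧸ coeffSub J j) := by
  have h1 : levelAdd J j = (lowZero j).toAddSubgroup ⊔ levelAdd J (j+1) := by
    rw [levelAdd, levelAdd, ← toAddSubgroup_sup]
    congr 1
    rw [sup_comm, ← sup_assoc, sup_comm (lowZero j) _, sup_assoc, sup_eq_left.2 (lowZero_antitone (by omega))]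
  rw [h1, AddSubgroup.relIndex_sup_right, AddSubgroup.relIndex, ← levelHom_ker,
    AddSubgroup.index_ker, AddMonoidHom.range_eq_top.2 (levelHom_surjective J j)]
  exact Nat.card_congr AddSubgroup.topEquiv.toEquiv

lemma index_levelAdd (J : Ideal (Polynomial ℤ)) (n : ℕ) :
    (levelAdd J n).index = ∏ j ∈ Finset.range n, Nat.card (ℤ ⧸ coeffSub J j) := by
  induction n with
  | zero => rw [levelAdd_zero]; simp
  | succ n ih =>
    rw [Finset.prod_range_succ, ← ih, ← relindex_levelAdd J n,
      ← AddSubgroup.relIndex_mul_index (levelAdd_antitone J (Nat.le_succ n)), mul_comm]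

theorem card_quot_eq_prod {J : Ideal (Polynomial ℤ)} {n : ℕ} (h : X ^ n ∈ J) :
    Nat.card (Polynomial ℤ ⧸ J) = ∏ j ∈ Finset.range n, Nat.card (ℤ ⧸ coeffSub J j) := by
  rw [← index_levelAdd J n, levelAdd_eq J h]
  rfl

/-- Division of an ideal by `X`. -/
def shiftDown (J : Ideal (Polynomial ℤ)) : Ideal (Polynomial ℤ) where
  carrier := {q | X * q ∈ J}
  add_mem' := fun {a b} ha hb => by simpa [mul_add] using add_mem ha hb
  zero_mem' := by simp
  smul_mem' := fun c {x} hx => by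
    simpa [smul_eq_mul, mul_left_comm] using Ideal.mul_mem_left _ c hx

lemma mem_shiftDown {J : Ideal (Polynomial ℤ)} {q : Polynomial ℤ} :
    q ∈ shiftDown J ↔ X * q ∈ J := Iff.rfl

lemma coeffSub_le_succ (J : Ideal (Polynomial ℤ)) (j : ℕ) :
    coeffSub J j ≤ coeffSub J (j + 1) := by
  intro c hc
  rw [mem_coeffSub] at hc ⊢
  obtain ⟨p, hpJ, hlow, hcoeff⟩ := hc
  refine ⟨X * p, J.mul_mem_left X hpJ, ?_, ?_⟩
  · intro i hi
    rcases i with _ | i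
    · simp
    · rw [coeff_X_mul]; exact hlow i (by omega)
  · rw [coeff_X_mul]; exact hcoeff

lemma coeffSub_shiftDown (J : Ideal (Polynomial ℤ)) (j : ℕ) :
    coeffSub (shiftDown J) j = coeffSub J (j + 1) := by
  ext c
  rw [mem_coeffSub, mem_coeffSub]
  constructor
  · rintro ⟨q, hq, hlow, hc⟩
    refine ⟨X * q, hq, ?_, by rw [coeff_X_mul]; exact hc⟩
    intro i hi
    rcases i with _ | i
    · simp
    · rw [coeff_X_mul]; exact hlow i (by omega)
  · rintro ⟨p, hp, hlow, hc⟩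
    have hdvd : X ∣ p := by
      rw [← pow_one X, Polynomial.X_pow_dvd_iff]
      intro i hi
      interval_cases i
      exact hlow 0 (by omega)
    obtain ⟨q, rfl⟩ := hdvd
    refine ⟨q, by rwa [mem_shiftDown], ?_, by rw [← coeff_X_mul]; exact hc⟩
    intro i hi
    have := hlow (i + 1) (by omega)
    rwa [coeff_X_mul] at this

lemma X_pow_mem_shiftDown {J : Ideal (Polynomial ℤ)} {n : ℕ} :
    X ^ n ∈ shiftDown J ↔ X ^ (n + 1) ∈ J := by
  rw [mem_shiftDown, ← pow_succ']


section
variable (K : Ideal (Polynomial ℤ))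

def kappa : AddSubgroup (Polynomial ℤ) := (K.restrictScalars ℤ).toAddSubgroup
def xi : AddSubgroup (Polynomial ℤ) := (lowZero 1).toAddSubgroup
def mulX : Polynomial ℤ →+ Polynomial ℤ := AddMonoidHom.mulLeft X
def BB : AddSubgroup (Polynomial ℤ) := (kappa K).map mulX

lemma mulX_injective : Function.Injective mulX :=
  fun a b h => mul_left_cancel₀ X_ne_zero h

lemma mulX_ker : mulX.ker = ⊥ := by
  rw [AddMonoidHom.ker_eq_bot_iff]; exact mulX_injective

lemma mulX_range : mulX.range = xi := by
  ext x
  simp only [AddMonoidHom.mem_range, mulX, AddMonoidHom.coe_mulLeft]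
  rw [xi, Submodule.mem_toAddSubgroup, mem_lowZero_iff_dvd, pow_one]
  exact ⟨fun ⟨q, hq⟩ => ⟨q, hq.symm⟩, fun ⟨q, hq⟩ => ⟨q, hq.symm⟩⟩

lemma mem_BB {x : Polynomial ℤ} : x ∈ BB K ↔ ∃ κ ∈ K, x = X * κ := by
  simp only [BB, AddSubgroup.mem_map, kappa, Submodule.mem_toAddSubgroup,
    Submodule.restrictScalars_mem, mulX, AddMonoidHom.coe_mulLeft]
  exact ⟨fun ⟨κ, h1, h2⟩ => ⟨κ, h1, h2.symm⟩, fun ⟨κ, h1, h2⟩ => ⟨κ, h1, h2.symm⟩⟩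

lemma kappa_index : (kappa K).index = Nat.card (Polynomial ℤ ⧸ K) := rfl

theorem relindex_BB (hN : Nat.card (Polynomial ℤ ⧸ K) ≠ 0) :
    (BB K).relIndex (kappa K ⊓ xi) = Nat.card (ℤ ⧸ coeffSub K 0) := by
  have h1 : (BB K).relIndex xi = (kappa K).index := by
    have h := AddSubgroup.relIndex_comap (H := BB K) mulX (⊤ : AddSubgroup (Polynomial ℤ))
    rw [show AddSubgroup.comap mulX (BB K) = kappa K from by
          rw [BB, AddSubgroup.comap_map_eq, mulX_ker, sup_bot_eq],
        AddSubgroup.relIndex_top_right, ← AddMonoidHom.range_eq_map, mulX_range] at h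
    exact h.symm
  have h4 : (kappa K ⊔ xi).index = Nat.card (ℤ ⧸ coeffSub K 0) := by
    have : kappa K ⊔ xi = (K.restrictScalars ℤ ⊔ lowZero 1).toAddSubgroup := by
      rw [toAddSubgroup_sup]; rfl
    rw [this]
    show (levelAdd K 1).index = _
    rw [index_levelAdd, Finset.prod_range_one]
  have h2 : (kappa K ⊓ xi).relIndex xi * (kappa K ⊔ xi).index = (kappa K).index := by
    rw [AddSubgroup.inf_relIndex_right, ← AddSubgroup.relIndex_sup_right, sup_comm]
    exact AddSubgroup.relIndex_mul_index le_sup_left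
  have hBle : BB K ≤ kappa K ⊓ xi := by
    intro x hx
    obtain ⟨κ, hκ, rfl⟩ := (mem_BB K).1 hx
    rw [AddSubgroup.mem_inf]
    refine ⟨K.mul_mem_left X hκ, ?_⟩
    show X * κ ∈ lowZero 1
    rw [mem_lowZero_iff_dvd, pow_one]
    exact ⟨κ, rfl⟩
  have h3 : (BB K).relIndex (kappa K ⊓ xi) * (kappa K ⊓ xi).relIndex xi = (kappa K).index := by
    rw [← h1]
    exact AddSubgroup.relIndex_mul_relIndex _ _ _ hBle inf_le_right
  have hr : (kappa K ⊓ xi).relIndex xi ≠ 0 := by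
    intro h0
    rw [h0, zero_mul] at h2
    exact hN (by rw [← kappa_index, ← h2])
  rw [← h4]
  have key : (BB K).relIndex (kappa K ⊓ xi) * (kappa K ⊓ xi).relIndex xi
      = (kappa K ⊔ xi).index * (kappa K ⊓ xi).relIndex xi := by
    rw [h3, ← h2, mul_comm]
  exact Nat.eq_of_mul_eq_mul_right (Nat.pos_of_ne_zero hr) key
end

def chainSet (n : ℕ) (d : ℕ → ℕ) : Set (Ideal (Polynomial ℤ)) :=
  {J | X ^ n ∈ J ∧ ∀ j < n, coeffSub J j = Submodule.span ℤ {(d j : ℤ)}}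

def Jv (K : Ideal (Polynomial ℤ)) (v : Polynomial ℤ) : Ideal (Polynomial ℤ) :=
  Ideal.span {X} * K ⊔ Ideal.span {v}

lemma mem_Jv {K : Ideal (Polynomial ℤ)} {v : Polynomial ℤ} (hv : v ∈ K) {p : Polynomial ℤ} :
    p ∈ Jv K v ↔ ∃ t : ℤ, ∃ κ ∈ K, p = t • v + X * κ := by
  constructor
  · intro hp
    rw [Jv, Submodule.mem_sup] at hp
    obtain ⟨a, ha, b, hb, rfl⟩ := hp
    obtain ⟨κ₁, hκ₁, rfl⟩ := Ideal.mem_span_singleton_mul.1 ha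
    obtain ⟨q, rfl⟩ := Ideal.mem_span_singleton'.1 hb
    refine ⟨q.coeff 0, κ₁ + q.divX * v, add_mem hκ₁ (K.mul_mem_left _ hv), ?_⟩
    have hq : X * q.divX + C (q.coeff 0) = q := Polynomial.X_mul_divX_add q
    calc X * κ₁ + q * v = X * κ₁ + (X * q.divX + C (q.coeff 0)) * v := by rw [hq]
    _ = q.coeff 0 • v + X * (κ₁ + q.divX * v) := by
        rw [Polynomial.smul_eq_C_mul]; ring
  · rintro ⟨t, κ, hκ, rfl⟩
    rw [add_comm]
    exact Submodule.add_mem_sup (Ideal.mem_span_singleton_mul.2 ⟨κ, hκ, rfl⟩)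
      (by rw [Polynomial.smul_eq_C_mul]
          exact Ideal.mul_mem_left _ _ (Ideal.mem_span_singleton_self v))

lemma coeff_zero_Jv {K : Ideal (Polynomial ℤ)} {v : Polynomial ℤ} (hv : v ∈ K)
    {p : Polynomial ℤ} (hp : p ∈ Jv K v) : ∃ t : ℤ, p.coeff 0 = t * v.coeff 0 := by
  obtain ⟨t, κ, hκ, rfl⟩ := (mem_Jv hv).1 hp
  refine ⟨t, ?_⟩
  simp [coeff_add, Polynomial.coeff_smul, Polynomial.mul_coeff_zero, smul_eq_mul]

lemma shiftDown_Jv {K : Ideal (Polynomial ℤ)} {v : Polynomial ℤ} (hv : v ∈ K)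
    (hc : v.coeff 0 ≠ 0) : shiftDown (Jv K v) = K := by
  ext q
  rw [mem_shiftDown]
  constructor
  · intro hq
    obtain ⟨t, κ, hκ, heq⟩ := (mem_Jv hv).1 hq
    have h0 : (X * q).coeff 0 = t * v.coeff 0 + (X * κ).coeff 0 := by
      rw [heq]; simp [coeff_add, Polynomial.coeff_smul, smul_eq_mul]
    rw [Polynomial.mul_coeff_zero, coeff_X_zero, zero_mul,
        Polynomial.mul_coeff_zero, coeff_X_zero, zero_mul] at h0
    rw [add_zero] at h0
    have ht : t = 0 := by
      rcases mul_eq_zero.1 h0.symm with h | h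
      · exact h
      · exact absurd h hc
    rw [ht, zero_smul, zero_add] at heq
    have := mul_left_cancel₀ (X_ne_zero (R := ℤ)) heq
    rwa [this]
  · intro hq
    exact (mem_Jv hv).2 ⟨0, q, hq, by rw [zero_smul, zero_add]⟩

lemma Jv_mem_chainSet {n : ℕ} {d : ℕ → ℕ} {K : Ideal (Polynomial ℤ)}
    (hK : K ∈ chainSet n (fun j => d (j + 1))) {v : Polynomial ℤ} (hv : v ∈ K)
    (hc : v.coeff 0 = (d 0 : ℤ)) (hd0 : 0 < d 0) :
    Jv K v ∈ chainSet (n + 1) d := by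
  obtain ⟨hXn, hchain⟩ := hK
  have hd0' : (v.coeff 0) ≠ 0 := by rw [hc]; exact_mod_cast hd0.ne'
  refine ⟨?_, ?_⟩
  · rw [pow_succ']
    exact (mem_Jv hv).2 ⟨0, X ^ n, hXn, by rw [zero_smul, zero_add]⟩
  · intro j hj
    rcases j with _ | j
    · -- j = 0
      ext c
      rw [mem_coeffSub, Submodule.mem_span_singleton]
      constructor
      · rintro ⟨p, hp, -, rfl⟩
        obtain ⟨t, ht⟩ := coeff_zero_Jv hv hp
        exact ⟨t, by rw [ht, hc, smul_eq_mul]⟩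
      · rintro ⟨a, rfl⟩
        refine ⟨a • v, (mem_Jv hv).2 ⟨a, 0, K.zero_mem, by rw [mul_zero, add_zero]⟩,
          fun i hi => absurd hi (by omega), ?_⟩
        rw [Polynomial.coeff_smul, hc, smul_eq_mul]
    · -- j + 1
      rw [← coeffSub_shiftDown, shiftDown_Jv hv hd0']
      exact hchain j (by omega)

lemma exists_Jv {n : ℕ} {d : ℕ → ℕ} {J : Ideal (Polynomial ℤ)}
    (hJ : J ∈ chainSet (n + 1) d) :
    ∃ v, v ∈ shiftDown J ∧ v.coeff 0 = (d 0 : ℤ) ∧ J = Jv (shiftDown J) v := by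
  obtain ⟨hXn, hchain⟩ := hJ
  have h0 : (d 0 : ℤ) ∈ coeffSub J 0 := by
    rw [hchain 0 (by omega)]
    exact Submodule.mem_span_singleton_self _
  rw [mem_coeffSub] at h0
  obtain ⟨v, hvJ, -, hc⟩ := h0
  have hvK : v ∈ shiftDown J := by rw [mem_shiftDown]; exact J.mul_mem_left X hvJ
  refine ⟨v, hvK, hc, le_antisymm ?_ ?_⟩
  · intro p hp
    have hcp : p.coeff 0 ∈ coeffSub J 0 := mem_coeffSub.2 ⟨p, hp, fun i hi => absurd hi (by omega), rfl⟩
    rw [hchain 0 (by omega), Submodule.mem_span_singleton] at hcp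
    obtain ⟨t, ht⟩ := hcp
    have hq : (p - t • v).coeff 0 = 0 := by
      rw [coeff_sub, Polynomial.coeff_smul, hc, ht, sub_self]
    have hdvd : X ∣ p - t • v := by
      rw [← pow_one X, Polynomial.X_pow_dvd_iff]
      intro i hi
      interval_cases i
      exact hq
    obtain ⟨w, hw⟩ := hdvd
    have hwJ : w ∈ shiftDown J := by
      rw [mem_shiftDown, ← hw]
      exact sub_mem hp (by rw [Polynomial.smul_eq_C_mul]; exact J.mul_mem_left _ hvJ)
    exact (mem_Jv hvK).2 ⟨t, w, hwJ, by rw [← hw]; ring⟩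
  · intro p hp
    obtain ⟨t, κ, hκ, rfl⟩ := (mem_Jv hvK).1 hp
    refine add_mem (by rw [Polynomial.smul_eq_C_mul]; exact J.mul_mem_left _ hvJ) hκ

lemma Jv_congr {K : Ideal (Polynomial ℤ)} {v w : Polynomial ℤ} (hv : v ∈ K)
    (hvw : ∃ κ ∈ K, w = v + X * κ) : Jv K w = Jv K v := by
  obtain ⟨κ, hκ, rfl⟩ := hvw
  have hw : v + X * κ ∈ K := add_mem hv (K.mul_mem_left X hκ)
  apply le_antisymm
  · intro p hp
    obtain ⟨t, κ', hκ', rfl⟩ := (mem_Jv hw).1 hp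
    refine (mem_Jv hv).2 ⟨t, t • κ + κ',
      add_mem (by rw [Polynomial.smul_eq_C_mul]; exact K.mul_mem_left _ hκ) hκ', ?_⟩
    simp only [Polynomial.smul_eq_C_mul]
    ring
  · intro p hp
    obtain ⟨t, κ', hκ', rfl⟩ := (mem_Jv hv).1 hp
    refine (mem_Jv hw).2 ⟨t, (-t) • κ + κ',
      add_mem (by rw [Polynomial.smul_eq_C_mul]; exact K.mul_mem_left _ hκ) hκ', ?_⟩
    simp only [Polynomial.smul_eq_C_mul, map_neg]
    ring

lemma Jv_inj {K : Ideal (Polynomial ℤ)} {v w : Polynomial ℤ} (hv : v ∈ K) (hw : w ∈ K)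
    (hcv : v.coeff 0 = w.coeff 0) (hc0 : v.coeff 0 ≠ 0)
    (heq : Jv K v = Jv K w) : ∃ κ ∈ K, w = v + X * κ := by
  have hwmem : w ∈ Jv K v := by
    rw [heq]
    exact (mem_Jv hw).2 ⟨1, 0, K.zero_mem, by rw [one_smul, mul_zero, add_zero]⟩
  obtain ⟨t, κ, hκ, hwe⟩ := (mem_Jv hv).1 hwmem
  have h0 : w.coeff 0 = t * v.coeff 0 := by
    rw [hwe]; simp [coeff_add, Polynomial.coeff_smul, Polynomial.mul_coeff_zero, smul_eq_mul]
  have ht : t = 1 := by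
    rw [← hcv] at h0
    have := mul_right_cancel₀ hc0 (h0.symm.trans (one_mul _).symm)
    exact this
  refine ⟨κ, hκ, ?_⟩
  rw [hwe, ht, one_smul]


def fiberSet (n : ℕ) (d : ℕ → ℕ) (K : Ideal (Polynomial ℤ)) : Set (Ideal (Polynomial ℤ)) :=
  {J | J ∈ chainSet (n + 1) d ∧ shiftDown J = K}

section fiber
variable {n : ℕ} {d : ℕ → ℕ} {K : Ideal (Polynomial ℤ)}

lemma fiber_equiv (hK : K ∈ chainSet n (fun j => d (j + 1))) (hd0 : 0 < d 0)
    (hmem : (d 0 : ℤ) ∈ coeffSub K 0) :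
    Nonempty ((↥(kappa K ⊓ xi) ⧸ (BB K).addSubgroupOf (kappa K ⊓ xi)) ≃ ↥(fiberSet n d K)) := by
  rw [mem_coeffSub] at hmem
  obtain ⟨v₀, hv₀K, -, hc₀⟩ := hmem
  have hwk : ∀ w : ↥(kappa K ⊓ xi), (w : Polynomial ℤ) ∈ K :=
    fun w => (AddSubgroup.mem_inf.1 w.2).1
  have hwx : ∀ w : ↥(kappa K ⊓ xi), (w : Polynomial ℤ).coeff 0 = 0 := by
    intro w
    have h := (AddSubgroup.mem_inf.1 w.2).2
    have h2 : (w : Polynomial ℤ) ∈ lowZero 1 := h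
    exact h2 0 (by omega)
  have hKmem : ∀ w : ↥(kappa K ⊓ xi), v₀ + (w : Polynomial ℤ) ∈ K :=
    fun w => add_mem hv₀K (hwk w)
  have hCoef : ∀ w : ↥(kappa K ⊓ xi), (v₀ + (w : Polynomial ℤ)).coeff 0 = (d 0 : ℤ) := by
    intro w
    rw [coeff_add, hwx w, add_zero, hc₀]
  have hne : ∀ w : ↥(kappa K ⊓ xi), (v₀ + (w : Polynomial ℤ)).coeff 0 ≠ 0 := by
    intro w
    rw [hCoef w]
    exact_mod_cast hd0.ne'
  have gmem : ∀ w : ↥(kappa K ⊓ xi), Jv K (v₀ + (w : Polynomial ℤ)) ∈ fiberSet n d K := by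
    intro w
    exact ⟨Jv_mem_chainSet hK (hKmem w) (hCoef w) hd0, shiftDown_Jv (hKmem w) (hne w)⟩
  set g : ↥(kappa K ⊓ xi) → ↥(fiberSet n d K) :=
    fun w => ⟨Jv K (v₀ + (w : Polynomial ℤ)), gmem w⟩ with hg
  have hwd : ∀ w w' : ↥(kappa K ⊓ xi),
      @Setoid.r _ (QuotientAddGroup.leftRel ((BB K).addSubgroupOf (kappa K ⊓ xi))) w w' →
        g w = g w' := by
    intro w w' hr
    rw [QuotientAddGroup.leftRel_apply, AddSubgroup.mem_addSubgroupOf] at hr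
    obtain ⟨κ, hκ, hκe⟩ := (mem_BB K).1 hr
    apply Subtype.ext
    show Jv K (v₀ + (w : Polynomial ℤ)) = Jv K (v₀ + (w' : Polynomial ℤ))
    have hX : (-(w : Polynomial ℤ)) + (w' : Polynomial ℤ) = X * κ := by
      rw [← hκe]
      push_cast
      ring
    refine (Jv_congr (hKmem w) ⟨κ, hκ, ?_⟩).symm
    rw [← hX]
    ring
  let F : (↥(kappa K ⊓ xi) ⧸ (BB K).addSubgroupOf (kappa K ⊓ xi)) → ↥(fiberSet n d K) :=
    fun q => Quotient.liftOn' q g hwd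
  refine ⟨Equiv.ofBijective F ⟨?_, ?_⟩⟩
  · intro q q'
    refine QuotientAddGroup.induction_on q (fun w => QuotientAddGroup.induction_on q'
      (fun w' h => ?_))
    have hJ : Jv K (v₀ + (w : Polynomial ℤ)) = Jv K (v₀ + (w' : Polynomial ℤ)) :=
      congrArg Subtype.val h
    obtain ⟨κ, hκ, he⟩ := Jv_inj (hKmem w) (hKmem w')
      (by rw [hCoef w, hCoef w']) (hne w) hJ
    rw [QuotientAddGroup.eq]
    rw [AddSubgroup.mem_addSubgroupOf]
    refine (mem_BB K).2 ⟨κ, hκ, ?_⟩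
    push_cast
    have : (v₀ + (w' : Polynomial ℤ)) - (v₀ + (w : Polynomial ℤ)) = X * κ := by
      rw [he]; ring
    rw [← this]
    ring
  · rintro ⟨J, hJc, hJs⟩
    obtain ⟨v, hv, hvc, hJeq⟩ := exists_Jv hJc
    rw [hJs] at hv hJeq
    have hwA : v - v₀ ∈ kappa K ⊓ xi := by
      rw [AddSubgroup.mem_inf]
      refine ⟨sub_mem hv hv₀K, ?_⟩
      show v - v₀ ∈ lowZero 1
      intro i hi
      interval_cases i
      rw [coeff_sub, hvc, hc₀, sub_self]
    refine ⟨QuotientAddGroup.mk ⟨v - v₀, hwA⟩, ?_⟩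
    apply Subtype.ext
    show Jv K (v₀ + (v - v₀)) = J
    rw [add_sub_cancel]
    exact hJeq.symm

lemma fiberSet_card (hK : K ∈ chainSet n (fun j => d (j + 1))) (hd0 : 0 < d 0)
    (hmem : (d 0 : ℤ) ∈ coeffSub K 0) (hN : Nat.card (Polynomial ℤ ⧸ K) ≠ 0) :
    Nat.card ↥(fiberSet n d K) = Nat.card (ℤ ⧸ coeffSub K 0) := by
  obtain ⟨e⟩ := fiber_equiv hK hd0 hmem
  rw [← Nat.card_congr e]
  rw [← relindex_BB K hN]
  rw [AddSubgroup.relIndex, AddSubgroup.index_eq_card]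

end fiber

lemma card_quot_span_nat (m : ℕ) : Nat.card (ℤ ⧸ (Submodule.span ℤ {(m : ℤ)})) = m := by
  have e := Int.quotientSpanNatEquivZMod m
  show Nat.card (ℤ ⧸ Ideal.span {(m : ℤ)}) = m
  rw [Nat.card_congr e.toEquiv, Nat.card_zmod]

lemma chainSet_zero (d : ℕ → ℕ) : chainSet 0 d = {⊤} := by
  ext J
  simp only [chainSet, pow_zero, Set.mem_setOf_eq, Set.mem_singleton_iff]
  constructor
  · rintro ⟨h1, -⟩
    exact (Ideal.eq_top_iff_one J).2 h1
  · rintro rfl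
    exact ⟨trivial, fun j hj => absurd hj (by omega)⟩

lemma coeffSub_top_zero : coeffSub ⊤ 0 = ⊤ := by
  rw [eq_top_iff]
  intro c _
  exact mem_coeffSub.2 ⟨C c, trivial, fun i hi => absurd hi (by omega), coeff_C_zero⟩

lemma shiftDown_mem_chainSet {n : ℕ} {d : ℕ → ℕ} {J : Ideal (Polynomial ℤ)}
    (hJ : J ∈ chainSet (n + 1) d) : shiftDown J ∈ chainSet n (fun j => d (j + 1)) := by
  refine ⟨X_pow_mem_shiftDown.2 hJ.1, fun j hj => ?_⟩
  rw [coeffSub_shiftDown]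
  exact hJ.2 (j + 1) (by omega)

lemma natCard_sigma {ι : Type*} [Fintype ι] (f : ι → Type*) [∀ i, Finite (f i)] :
    Nat.card ((i : ι) × f i) = ∑ i : ι, Nat.card (f i) := by
  letI : ∀ i, Fintype (f i) := fun i => Fintype.ofFinite _
  rw [Nat.card_eq_fintype_card, Fintype.card_sigma]
  exact Finset.sum_congr rfl (fun i _ => (Nat.card_eq_fintype_card).symm)

theorem chainSet_card (n : ℕ) (d : ℕ → ℕ) (hpos : ∀ j < n, 0 < d j)
    (hdvd : ∀ j, j + 1 < n → d (j + 1) ∣ d j) :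
    (chainSet n d).Finite ∧ Nat.card ↥(chainSet n d) = ∏ j ∈ Finset.Ico 1 n, d j := by
  induction n generalizing d with
  | zero =>
    rw [chainSet_zero]
    exact ⟨Set.finite_singleton _, by simp⟩
  | succ n ih =>
    obtain ⟨hTfin, hTcard⟩ := ih (fun j => d (j + 1)) (fun j hj => hpos (j + 1) (by omega))
      (fun j hj => hdvd (j + 1) (by omega))
    have hd0 : 0 < d 0 := hpos 0 (by omega)
    set T := chainSet n (fun j => d (j + 1)) with hT
    have hmem : ∀ K ∈ T, (d 0 : ℤ) ∈ coeffSub K 0 := by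
      intro K hK
      rcases n with _ | m
      · have hKtop : K = ⊤ := by
          have := hK
          rw [hT, chainSet_zero] at this
          simpa using this
        rw [hKtop, coeffSub_top_zero]
        trivial
      · have h1 := hK.2 0 (by omega)
        rw [h1, Submodule.mem_span_singleton]
        obtain ⟨c, hc⟩ := hdvd 0 (by omega)
        exact ⟨c, by rw [hc]; push_cast; rw [smul_eq_mul]; ring⟩
    have hNcard : ∀ K ∈ T, Nat.card (Polynomial ℤ ⧸ K) = ∏ j ∈ Finset.range n, d (j + 1) := by
      intro K hK
      rw [card_quot_eq_prod hK.1]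
      exact Finset.prod_congr rfl fun j hj => by
        rw [hK.2 j (Finset.mem_range.1 hj), card_quot_span_nat]
    have hNne : ∀ K ∈ T, Nat.card (Polynomial ℤ ⧸ K) ≠ 0 := by
      intro K hK
      rw [hNcard K hK]
      exact Finset.prod_ne_zero_iff.2 fun j hj =>
        (hpos (j + 1) (by have := Finset.mem_range.1 hj; omega)).ne'
    have hDval : ∀ K ∈ T, Nat.card (ℤ ⧸ coeffSub K 0) = (if n = 0 then 1 else d 1) := by
      intro K hK
      rcases n with _ | m
      · have hKtop : K = ⊤ := by
          have := hK
          rw [hT, chainSet_zero] at this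
          simpa using this
        rw [hKtop, coeffSub_top_zero]
        simp only [if_pos rfl]
        haveI : Subsingleton (ℤ ⧸ (⊤ : Submodule ℤ ℤ)) :=
          Submodule.Quotient.subsingleton_iff.2 rfl
        exact Nat.card_of_subsingleton 0
      · rw [hK.2 0 (by omega), card_quot_span_nat]
        simp
    have hfibval : ∀ K : ↥T, Nat.card ↥(fiberSet n d ↑K) = (if n = 0 then 1 else d 1) := by
      intro K
      rw [fiberSet_card K.2 hd0 (hmem _ K.2) (hNne _ K.2)]
      exact hDval _ K.2
    have hepos : 0 < (if n = 0 then 1 else d 1) := by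
      rcases n with _ | m
      · simp
      · simpa using hpos 1 (by omega)
    haveI : Finite ↥T := hTfin.to_subtype
    cases nonempty_fintype ↥T
    haveI hfibfin : ∀ K : ↥T, Finite ↥(fiberSet n d ↑K) := by
      intro K
      apply Nat.finite_of_card_ne_zero
      rw [hfibval K]
      exact hepos.ne'
    have hshift : ∀ J ∈ chainSet (n + 1) d, shiftDown J ∈ T := fun J hJ =>
      shiftDown_mem_chainSet hJ
    let eqv : ↥(chainSet (n + 1) d) ≃ Σ K : ↥T, ↥(fiberSet n d ↑K) :=
      { toFun := fun J => ⟨⟨shiftDown J.1, hshift _ J.2⟩, ⟨J.1, J.2, rfl⟩⟩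
        invFun := fun x => ⟨x.2.1, x.2.2.1⟩
        left_inv := fun J => rfl
        right_inv := by
          rintro ⟨K, Jf⟩
          have h1 : shiftDown (Jf : Ideal (Polynomial ℤ)) = (K : Ideal (Polynomial ℤ)) := Jf.2.2
          refine Sigma.ext (Subtype.ext h1) ((Subtype.heq_iff_coe_eq ?_).2 rfl)
          intro x
          show x ∈ fiberSet n d (shiftDown (Jf : Ideal (Polynomial ℤ))) ↔
            x ∈ fiberSet n d (K : Ideal (Polynomial ℤ))
          rw [h1] }
    haveI : Finite (Σ K : ↥T, ↥(fiberSet n d ↑K)) := by infer_instance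
    constructor
    · exact Set.finite_coe_iff.1 (Finite.of_equiv _ eqv.symm)
    · rw [Nat.card_congr eqv, natCard_sigma]
      rw [Finset.sum_congr rfl (fun K _ => hfibval K), Finset.sum_const, smul_eq_mul,
        Finset.card_univ, ← Nat.card_eq_fintype_card, hTcard]
      rcases n with _ | m
      · simp
      · simp only [if_neg (Nat.succ_ne_zero m)]
        rw [Finset.prod_eq_prod_Ico_succ_bot (by omega : 1 < m + 2) d]
        have hre : (∏ j ∈ Finset.Ico 1 (m + 1), d (j + 1)) = ∏ j ∈ Finset.Ico 2 (m + 2), d j := by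
          rw [Finset.prod_Ico_eq_prod_range, Finset.prod_Ico_eq_prod_range]
          exact Finset.prod_congr (by norm_num) fun i _ => by
            congr 1
            omega
        rw [hre, mul_comm]

lemma submodule_int_eq_span_card (C : Submodule ℤ ℤ) :
    C = Submodule.span ℤ {(Nat.card (ℤ ⧸ C) : ℤ)} := by
  have hC : (C : Ideal ℤ).IsPrincipal := inferInstance
  obtain ⟨g, hg⟩ := hC
  rw [hg]
  have h1 : Nat.card (ℤ ⧸ Ideal.span {g}) = g.natAbs := by
    rw [Nat.card_congr (Int.quotientSpanEquivZMod g).toEquiv, Nat.card_zmod]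
  show Ideal.span {g} = Ideal.span {((Nat.card (ℤ ⧸ Submodule.span ℤ {g}) : ℕ) : ℤ)}
  rw [show (Submodule.span ℤ {g}) = Ideal.span {g} from rfl, h1, Int.span_natAbs]

lemma prod_prod_Ico (g : ℕ → ℕ) (n : ℕ) :
    ∏ j ∈ Finset.range n, ∏ i ∈ Finset.Ico j n, g i
      = ∏ i ∈ Finset.range n, g i ^ (i + 1) := by
  induction n with
  | zero => simp
  | succ n ih =>
    have h1 : ∀ j ∈ Finset.range (n + 1), ∏ i ∈ Finset.Ico j (n + 1), g i
        = (∏ i ∈ Finset.Ico j n, g i) * g n := by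
      intro j hj
      have := Finset.mem_range.1 hj
      exact Finset.prod_Ico_succ_top (by omega) g
    rw [Finset.prod_congr rfl h1, Finset.prod_mul_distrib, Finset.prod_const,
      Finset.card_range, Finset.prod_range_succ, Finset.Ico_self, Finset.prod_empty, mul_one,
      ih, Finset.prod_range_succ]

lemma prod_prod_Ico' (g : ℕ → ℕ) (n : ℕ) :
    ∏ j ∈ Finset.Ico 1 n, ∏ i ∈ Finset.Ico j n, g i
      = ∏ i ∈ Finset.range n, g i ^ i := by
  induction n with
  | zero => simp
  | succ n ih =>
    have h1 : ∀ j ∈ Finset.Ico 1 (n + 1), ∏ i ∈ Finset.Ico j (n + 1), g i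
        = (∏ i ∈ Finset.Ico j n, g i) * g n := by
      intro j hj
      have := (Finset.mem_Ico.1 hj).2
      exact Finset.prod_Ico_succ_top (by omega) g
    rw [Finset.prod_congr rfl h1, Finset.prod_mul_distrib, Finset.prod_const, Nat.card_Ico]
    rcases Nat.eq_zero_or_pos n with rfl | hn
    · simp
    rw [Finset.prod_Ico_succ_top (by omega : 1 ≤ n), Finset.Ico_self, Finset.prod_empty,
      mul_one, ih, Finset.prod_range_succ]
    norm_num

lemma ncard_biUnion {α ι : Type*} (s : Finset ι) (f : ι → Set α)
    (hfin : ∀ i ∈ s, (f i).Finite)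
    (hdisj : ∀ i ∈ s, ∀ j ∈ s, i ≠ j → Disjoint (f i) (f j)) :
    (⋃ i ∈ s, f i).ncard = ∑ i ∈ s, (f i).ncard := by
  classical
  induction s using Finset.induction_on with
  | empty => simp
  | @insert a s ha ih =>
    rw [Finset.set_biUnion_insert, Finset.sum_insert ha]
    have hfa : (f a).Finite := hfin a (Finset.mem_insert_self a s)
    have hfs : (⋃ x ∈ s, f x).Finite := by
      apply Set.Finite.biUnion s.finite_toSet
      intro i hi
      exact hfin i (Finset.mem_insert_of_mem hi)
    have hd : Disjoint (f a) (⋃ x ∈ s, f x) := by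
      rw [Set.disjoint_iUnion₂_right]
      intro i hi
      exact hdisj a (Finset.mem_insert_self a s) i (Finset.mem_insert_of_mem hi)
        (fun h => ha (h ▸ hi))
    rw [Set.ncard_union_eq hd hfa hfs]
    rw [ih (fun i hi => hfin i (Finset.mem_insert_of_mem hi))
      (fun i hi j hj hij => hdisj i (Finset.mem_insert_of_mem hi) j
        (Finset.mem_insert_of_mem hj) hij)]

lemma card_comap_quot (n : ℕ) (I : Ideal (Polynomial ℤ ⧸ Ideal.span {(X : Polynomial ℤ) ^ n})) :
    Nat.card ((Polynomial ℤ ⧸ Ideal.span {(X : Polynomial ℤ) ^ n}) ⧸ I)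
      = Nat.card (Polynomial ℤ ⧸ I.comap (Ideal.Quotient.mk (Ideal.span {(X : Polynomial ℤ) ^ n}))) := by
  have hle : Ideal.span {(X : Polynomial ℤ) ^ n}
      ≤ I.comap (Ideal.Quotient.mk (Ideal.span {(X : Polynomial ℤ) ^ n})) := fun x hx => by
    show Ideal.Quotient.mk _ x ∈ I
    rw [Ideal.Quotient.eq_zero_iff_mem.2 hx]
    exact I.zero_mem
  have e := DoubleQuot.quotQuotEquivQuotOfLE hle
  have hmap : (I.comap (Ideal.Quotient.mk (Ideal.span {(X : Polynomial ℤ) ^ n}))).map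
      (Ideal.Quotient.mk (Ideal.span {(X : Polynomial ℤ) ^ n})) = I :=
    Ideal.map_comap_of_surjective _ Ideal.Quotient.mk_surjective I
  rw [← Nat.card_congr e.toEquiv, hmap]

set_option maxHeartbeats 1000000 in
lemma idealCount_transfer (n k : ℕ) :
    idealCount (Polynomial ℤ ⧸ Ideal.span {(X : Polynomial ℤ) ^ n}) k
      = Set.ncard {J : Ideal (Polynomial ℤ) | X ^ n ∈ J ∧ Nat.card (Polynomial ℤ ⧸ J) = k} := by
  unfold idealCount
  rw [← Nat.card_coe_set_eq, ← Nat.card_coe_set_eq]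
  apply Nat.card_congr
  have hXmem : ∀ I : Ideal (Polynomial ℤ ⧸ Ideal.span {(X : Polynomial ℤ) ^ n}),
      X ^ n ∈ I.comap (Ideal.Quotient.mk (Ideal.span {(X : Polynomial ℤ) ^ n})) := by
    intro I
    show Ideal.Quotient.mk (Ideal.span {(X : Polynomial ℤ) ^ n}) (X ^ n) ∈ I
    rw [show Ideal.Quotient.mk (Ideal.span {(X : Polynomial ℤ) ^ n}) (X ^ n) = 0 from
      Ideal.Quotient.eq_zero_iff_mem.2 (Ideal.subset_span rfl)]
    exact I.zero_mem
  have hcm : ∀ J : Ideal (Polynomial ℤ), X ^ n ∈ J →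
      (J.map (Ideal.Quotient.mk (Ideal.span {(X : Polynomial ℤ) ^ n}))).comap
        (Ideal.Quotient.mk (Ideal.span {(X : Polynomial ℤ) ^ n})) = J := by
    intro J hJ
    rw [Ideal.comap_map_of_surjective _ Ideal.Quotient.mk_surjective]
    rw [← RingHom.ker_eq_comap_bot, Ideal.mk_ker]
    rw [sup_eq_left]
    exact (Ideal.span_singleton_le_iff_mem J).2 hJ
  refine
    { toFun := fun I =>
        ⟨Ideal.comap (Ideal.Quotient.mk (Ideal.span {(X : Polynomial ℤ) ^ n})) I.1,
          hXmem I.1, ?_⟩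
      invFun := fun J =>
        ⟨Ideal.map (Ideal.Quotient.mk (Ideal.span {(X : Polynomial ℤ) ^ n})) J.1, ?_⟩
      left_inv := fun I => Subtype.ext
        (Ideal.map_comap_of_surjective _ Ideal.Quotient.mk_surjective I.1)
      right_inv := fun J => Subtype.ext (hcm J.1 J.2.1) }
  · rw [← card_comap_quot n I.1]
    exact I.2
  · have h2 := card_comap_quot n
      (Ideal.map (Ideal.Quotient.mk (Ideal.span {(X : Polynomial ℤ) ^ n})) J.1)
    rw [hcm J.1 J.2.1] at h2
    rw [Set.mem_setOf_eq, h2]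
    exact J.2.2

/-- For `R = ℤ[X]/(X^n)`, the number of ideals of index `k` equals the sum over all
`n`-tuples `(m_1, …, m_n)` of positive integers with `m_1^1 ⋯ m_n^n = k` of
`m_1^0 ⋯ m_n^{n-1}`. -/
theorem ideal_count_int_poly_quot_pow_eq (n : ℕ) (hn : 0 < n) (k : ℕ) (hk : 0 < k) :
    idealCount (Polynomial ℤ ⧸ Ideal.span {(Polynomial.X : Polynomial ℤ) ^ n}) k =
      ∑ m ∈ (Finset.Icc (fun _ => 1) (fun _ => k) : Finset (Fin n → ℕ)).filter
          (fun m => ∏ i, m i ^ (i.1 + 1) = k),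
        ∏ i, m i ^ (i.1 : ℕ) := by
  classical
  set M := (Finset.Icc (fun _ => 1) (fun _ => k) : Finset (Fin n → ℕ)).filter
      (fun m => ∏ i, m i ^ (i.1 + 1) = k) with hM
  set mE : (Fin n → ℕ) → ℕ → ℕ := fun m i => if h : i < n then m ⟨i, h⟩ else 1 with hmE
  set D : (Fin n → ℕ) → ℕ → ℕ := fun m j => ∏ i ∈ Finset.Ico j n, mE m i with hD
  -- generic facts about D for positive tuples
  have hmEpos : ∀ m : Fin n → ℕ, (∀ i, 1 ≤ m i) → ∀ i, 0 < mE m i := by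
    intro m h1 i
    rw [hmE]
    dsimp only
    split
    · exact h1 _
    · exact one_pos
  have hDpos : ∀ m : Fin n → ℕ, (∀ i, 1 ≤ m i) → ∀ j, 0 < D m j := by
    intro m h1 j
    exact Finset.prod_pos fun i _ => hmEpos m h1 i
  have hDsplit : ∀ (m : Fin n → ℕ) j, j < n → D m j = mE m j * D m (j + 1) := by
    intro m j hj
    rw [hD]
    exact Finset.prod_eq_prod_Ico_succ_bot hj _
  have hDdvd : ∀ (m : Fin n → ℕ) j, j + 1 < n → D m (j + 1) ∣ D m j := by
    intro m j hj
    exact ⟨mE m j, by rw [hDsplit m j (by omega), mul_comm]⟩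
  have hDn : ∀ m : Fin n → ℕ, D m n = 1 := by
    intro m
    rw [hD]
    dsimp only
    rw [Finset.Ico_self, Finset.prod_empty]
  have hmEeq : ∀ (m : Fin n → ℕ) (i : Fin n), mE m i.1 = m i := by
    intro m i
    rw [hmE]
    dsimp only
    rw [dif_pos i.2]
  have hDprodAll : ∀ m : Fin n → ℕ, ∏ j ∈ Finset.range n, D m j = ∏ i, m i ^ (i.1 + 1) := by
    intro m
    rw [hD]
    dsimp only
    rw [prod_prod_Ico (mE m) n, ← Fin.prod_univ_eq_prod_range (fun i => mE m i ^ (i + 1)) n]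
    exact Finset.prod_congr rfl fun i _ => by rw [hmEeq m i]
  have hDprodTail : ∀ m : Fin n → ℕ, ∏ j ∈ Finset.Ico 1 n, D m j = ∏ i, m i ^ (i.1 : ℕ) := by
    intro m
    rw [hD]
    dsimp only
    rw [prod_prod_Ico' (mE m) n, ← Fin.prod_univ_eq_prod_range (fun i => mE m i ^ i) n]
    exact Finset.prod_congr rfl fun i _ => by rw [hmEeq m i]
  have hone : ∀ m ∈ M, ∀ i, 1 ≤ m i := by
    intro m hm i
    rw [hM, Finset.mem_filter, Finset.mem_Icc] at hm
    exact hm.1.1 i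
  -- cover
  have hcover : {J : Ideal (Polynomial ℤ) | X ^ n ∈ J ∧ Nat.card (Polynomial ℤ ⧸ J) = k}
      = ⋃ m ∈ M, chainSet n (D m) := by
    ext J
    simp only [Set.mem_setOf_eq, Set.mem_iUnion, exists_prop]
    constructor
    · rintro ⟨hXJ, hcard⟩
      set c : ℕ → ℕ := fun j => Nat.card (ℤ ⧸ coeffSub J j) with hc
      have hspan : ∀ j, coeffSub J j = Submodule.span ℤ {(c j : ℤ)} := fun j =>
        submodule_int_eq_span_card _
      have hprod : ∏ j ∈ Finset.range n, c j = k := by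
        rw [← hcard, card_quot_eq_prod hXJ]
      have hcpos : ∀ j, j < n → 0 < c j := by
        intro j hj
        rcases Nat.eq_zero_or_pos (c j) with h0 | h
        · exfalso
          apply hk.ne'
          rw [← hprod]
          exact (Finset.prod_eq_zero (Finset.mem_range.2 hj) h0).symm ▸ rfl
        · exact h
      have hcle : ∀ j, j < n → c j ≤ k := by
        intro j hj
        rw [← hprod]
        exact Finset.single_le_prod' (fun i _ => hcpos i (by
          rename_i hi
          exact Finset.mem_range.1 hi)) (Finset.mem_range.2 hj)
      have hcdvd : ∀ j, c (j + 1) ∣ c j := by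
        intro j
        have hle := coeffSub_le_succ J j
        rw [hspan j, hspan (j + 1)] at hle
        have h2 : ((c (j+1) : ℤ)) ∣ ((c j : ℤ)) := Ideal.span_singleton_le_span_singleton.1 hle
        exact_mod_cast h2
      set m : Fin n → ℕ := fun i => if i.1 = n - 1 then c (n - 1) else c i.1 / c (i.1 + 1)
        with hm
      have hmval : ∀ i : ℕ, (hi : i < n) → mE m i = if i = n - 1 then c (n - 1)
          else c i / c (i + 1) := by
        intro i hi
        rw [hmE]
        dsimp only
        rw [dif_pos hi, hm]
      have hm1 : ∀ i, 1 ≤ m i := by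
        intro i
        rw [hm]
        dsimp only
        split
        · exact hcpos (n - 1) (by omega)
        · rename_i hne
          have hi1 : i.1 + 1 < n := by
            have := i.2
            omega
          rw [Nat.le_div_iff_mul_le (hcpos (i.1 + 1) hi1), one_mul]
          exact Nat.le_of_dvd (hcpos i.1 (by omega)) (hcdvd i.1)
      have hkey : ∀ t j, j < n → n - 1 - j = t → D m j = c j := by
        intro t
        induction t with
        | zero =>
          intro j hj ht
          have hj' : j = n - 1 := by omega
          subst hj'
          rw [hD]
          dsimp only
          rw [show Finset.Ico (n - 1) n = {n - 1} from by
            apply Finset.ext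
            intro x
            simp only [Finset.mem_Ico, Finset.mem_singleton]
            omega]
          rw [Finset.prod_singleton]
          rw [hmval (n - 1) (by omega)]
          rw [if_pos rfl]
        | succ t ih =>
          intro j hj ht
          have hlt : j < n - 1 := by omega
          rw [hDsplit m j hj, ih (j + 1) (by omega) (by omega)]
          rw [hmval j hj]
          rw [if_neg (by omega)]
          exact Nat.div_mul_cancel (hcdvd j)
      have hkey' : ∀ j, j < n → D m j = c j := fun j hj => hkey (n - 1 - j) j hj rfl
      refine ⟨m, ?_, hXJ, fun j hj => by rw [hkey' j hj, ← hspan j]⟩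
      rw [hM, Finset.mem_filter, Finset.mem_Icc]
      refine ⟨⟨fun i => hm1 i, fun i => ?_⟩, ?_⟩
      · rw [hm]
        dsimp only
        split
        · exact hcle (n - 1) (by omega)
        · exact le_trans (Nat.div_le_self _ _) (hcle i.1 i.2)
      · rw [← hDprodAll m, Finset.prod_congr rfl fun j hj => hkey' j (Finset.mem_range.1 hj),
          hprod]
    · rintro ⟨m, hmM, hJm⟩
      refine ⟨hJm.1, ?_⟩
      rw [card_quot_eq_prod hJm.1]
      have : ∀ j ∈ Finset.range n, Nat.card (ℤ ⧸ coeffSub J j) = D m j := by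
        intro j hj
        rw [hJm.2 j (Finset.mem_range.1 hj), card_quot_span_nat]
      rw [Finset.prod_congr rfl this, hDprodAll m]
      rw [hM, Finset.mem_filter] at hmM
      exact hmM.2
  -- disjointness
  have hdisj : ∀ m ∈ M, ∀ m' ∈ M, m ≠ m' →
      Disjoint (chainSet n (D m)) (chainSet n (D m')) := by
    intro m hm m' hm' hne
    rw [Set.disjoint_left]
    intro J hJ hJ'
    apply hne
    have hDeq : ∀ j, j ≤ n → D m j = D m' j := by
      intro j hj
      rcases eq_or_lt_of_le hj with rfl | hjlt
      · rw [hDn m, hDn m']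
      · have h1 := hJ.2 j hjlt
        have h2 := hJ'.2 j hjlt
        rw [← card_quot_span_nat (D m j), ← card_quot_span_nat (D m' j), ← h1, ← h2]
    funext i
    have h3 := hDsplit m i.1 i.2
    have h4 := hDsplit m' i.1 i.2
    rw [hDeq i.1 i.2.le, hDeq (i.1 + 1) i.2] at h3
    have h6 := h3.symm.trans h4
    have h5 : mE m i.1 = mE m' i.1 :=
      Nat.eq_of_mul_eq_mul_right (hDpos m' (hone m' hm') (i.1 + 1)) h6
    rw [hmEeq m i, hmEeq m' i] at h5
    exact h5
  -- finish
  rw [idealCount_transfer n k, hcover]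
  rw [ncard_biUnion M _ (fun m hm => (chainSet_card n (D m) (fun j _ => hDpos m (hone m hm) j)
      (fun j hj => hDdvd m j hj)).1) hdisj]
  apply Finset.sum_congr rfl
  intro m hm
  rw [← Nat.card_coe_set_eq,
    (chainSet_card n (D m) (fun j _ => hDpos m (hone m hm) j) (fun j hj => hDdvd m j hj)).2,
    hDprodTail m]
end
end

section
/- Let R be a commutative ring with identity whose additive group is a free abelian group of finite rank n. Then for every positive integer k the number a_R(k) of ideals of R of index k is finite, and a_R is multiplicative: for all coprime positive integers m and k, a_R(mk) = a_R(m) · a_R(k). -/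
section Aux

variable {R : Type} [CommRing R]

/-- If `R ⧸ I` has positive finite cardinality `k`, then `(k : R) ∈ I`. -/
lemma natCast_mem_of_card {I : Ideal R} {k : ℕ} (hI : Nat.card (R ⧸ I) = k) (hk : 0 < k) :
    (k : R) ∈ I := by
  have hfin : Finite (R ⧸ I) := Nat.finite_of_card_ne_zero (by omega)
  have h1 : (k : ℕ) • (1 : R ⧸ I) = 0 := by
    rw [← hI]; exact card_nsmul_eq_zero'
  have : ((k : R) : R ⧸ I) = 0 := by
    rw [show ((k : R) : R ⧸ I) = (k : R ⧸ I) from map_natCast (Ideal.Quotient.mk I) k]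
    simpa [nsmul_eq_mul] using h1
  exact (Ideal.Quotient.eq_zero_iff_mem).mp this

lemma smul_mem_of_card {I : Ideal R} {k : ℕ} (hI : Nat.card (R ⧸ I) = k) (hk : 0 < k) (x : R) :
    (k : ℕ) • x ∈ I := by
  have := I.mul_mem_right x (natCast_mem_of_card hI hk)
  simpa [nsmul_eq_mul] using this


/-- The quotient of `R` by the ideal generated by `(k : R)`, `k > 0`, is finite when `R` is a
finitely generated `ℤ`-module. -/
lemma finite_quotient_span_natCast [Module.Finite ℤ R] {k : ℕ} (hk : 0 < k) :
    Finite (R ⧸ Ideal.span {(k : R)}) := by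
  set I := Ideal.span {(k : R)}
  have hfgR : AddGroup.FG R := Module.Finite.iff_addGroup_fg.mp ‹_›
  have hfg : AddGroup.FG (R ⧸ I) := by
    let f : R →+ R ⧸ I := (Ideal.Quotient.mk I).toAddMonoidHom
    exact AddGroup.fg_of_surjective (f := f) Ideal.Quotient.mk_surjective
  refine AddCommGroup.finite_of_fg_torsion _ ?_
  intro x
  obtain ⟨y, rfl⟩ := Ideal.Quotient.mk_surjective x
  rw [isOfFinAddOrder_iff_nsmul_eq_zero]
  refine ⟨k, hk, ?_⟩
  have hmem : k • y ∈ I := by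
    rw [nsmul_eq_mul]
    exact Ideal.mul_mem_right y I (Ideal.subset_span rfl)
  calc k • (Ideal.Quotient.mk I) y = (Ideal.Quotient.mk I) (k • y) :=
        (map_nsmul (Ideal.Quotient.mk I).toAddMonoidHom k y).symm
    _ = 0 := Ideal.Quotient.eq_zero_iff_mem.mpr hmem

lemma set_finite [Module.Finite ℤ R] {k : ℕ} (hk : 0 < k) :
    {I : Ideal R | Nat.card (R ⧸ I) = k}.Finite := by
  have hS : Finite (R ⧸ Ideal.span {(k : R)}) := finite_quotient_span_natCast hk
  have : Finite (Ideal (R ⧸ Ideal.span {(k : R)})) :=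
    Finite.of_injective (fun I : Ideal (R ⧸ Ideal.span {(k : R)}) => (I : Set (R ⧸ Ideal.span {(k : R)}))) SetLike.coe_injective
  rw [← Set.finite_coe_iff]
  refine Finite.of_injective
    (fun I => Ideal.map (Ideal.Quotient.mk (Ideal.span {(k : R)})) I.1) ?_
  rintro ⟨I, hI⟩ ⟨J, hJ⟩ h
  have hle : ∀ (L : Ideal R), Nat.card (R ⧸ L) = k → Ideal.span {(k : R)} ≤ L := by
    intro L hL
    rw [Ideal.span_le, Set.singleton_subset_iff]
    exact natCast_mem_of_card hL hk
  have hker : RingHom.ker (Ideal.Quotient.mk (Ideal.span {(k : R)})) =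
      Ideal.span {(k : R)} := Ideal.mk_ker
  have e1 := Ideal.comap_map_of_surjective (Ideal.Quotient.mk (Ideal.span {(k : R)})) Ideal.Quotient.mk_surjective I
  have e2 := Ideal.comap_map_of_surjective (Ideal.Quotient.mk (Ideal.span {(k : R)})) Ideal.Quotient.mk_surjective J
  simp only at h
  apply Subtype.ext
  show I = J
  have : I ⊔ Ideal.span {(k : R)} = J ⊔ Ideal.span {(k : R)} := by
    rw [← hker, RingHom.ker_eq_comap_bot, ← e1, ← e2, h]
  rwa [sup_eq_left.mpr (hle I hI), sup_eq_left.mpr (hle J hJ)] at this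


lemma bezout {m k : ℕ} (h : Nat.Coprime m k) : ∃ u v : ℤ, u * m + v * k = 1 := by
  have : IsCoprime (m : ℤ) (k : ℤ) := Nat.isCoprime_iff_coprime.mpr h
  obtain ⟨u, v, huv⟩ := this
  exact ⟨u, v, huv⟩

/-- If `(m : R) ∈ J₁` and `(k : R) ∈ J₂` with `m, k` coprime, then `J₁ ⊔ J₂ = ⊤`. -/
lemma sup_eq_top_of_coprime {J₁ J₂ : Ideal R} {m k : ℕ} (h : Nat.Coprime m k)
    (h₁ : (m : R) ∈ J₁) (h₂ : (k : R) ∈ J₂) : J₁ ⊔ J₂ = ⊤ := by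
  obtain ⟨u, v, huv⟩ := bezout h
  rw [Ideal.eq_top_iff_one]
  have : (1 : R) = (u : R) * (m : R) + (v : R) * (k : R) := by
    have := congrArg (fun z : ℤ => (z : R)) huv
    push_cast at this
    exact this.symm
  rw [this]
  exact Submodule.add_mem_sup (J₁.mul_mem_left _ h₁) (J₂.mul_mem_left _ h₂)

lemma card_quot_inf {J₁ J₂ : Ideal R} (h : J₁ ⊔ J₂ = ⊤) :
    Nat.card (R ⧸ (J₁ ⊓ J₂)) = Nat.card (R ⧸ J₁) * Nat.card (R ⧸ J₂) := by
  have e := Ideal.quotientInfEquivQuotientProd J₁ J₂ (Ideal.isCoprime_iff_sup_eq.mpr h)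
  rw [Nat.card_congr e.toEquiv, Nat.card_prod]

/-- In a finite quotient `R ⧸ J` with `(m : R) ∈ J`, every element is killed by `m`. -/
lemma nsmul_quot_eq_zero {J : Ideal R} {m : ℕ} (hm : (m : R) ∈ J) (x : R ⧸ J) :
    m • x = 0 := by
  obtain ⟨y, rfl⟩ := Ideal.Quotient.mk_surjective x
  have hmem : m • y ∈ J := by
    rw [nsmul_eq_mul]
    exact J.mul_mem_right y hm
  calc m • (Ideal.Quotient.mk J) y = (Ideal.Quotient.mk J) (m • y) :=
        (map_nsmul (Ideal.Quotient.mk J).toAddMonoidHom m y).symm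
    _ = 0 := Ideal.Quotient.eq_zero_iff_mem.mpr hmem

/-- If every element of a finite additive group `A` is killed by `m`, and `m` is coprime
to `k`, then `Nat.card A` is coprime to `k`. -/
lemma card_coprime {A : Type*} [AddCommGroup A] [Finite A] {m k : ℕ}
    (hm : ∀ x : A, m • x = 0) (h : Nat.Coprime m k) : Nat.Coprime (Nat.card A) k := by
  rw [Nat.coprime_iff_gcd_eq_one]
  by_contra hg
  obtain ⟨p, hp, hpdvd⟩ := Nat.exists_prime_and_dvd hg
  have hpc : p ∣ Nat.card A := hpdvd.trans (Nat.gcd_dvd_left _ _)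
  have hpk : p ∣ k := hpdvd.trans (Nat.gcd_dvd_right _ _)
  haveI : Fact p.Prime := ⟨hp⟩
  obtain ⟨x, hx⟩ := exists_prime_addOrderOf_dvd_card' (G := A) p hpc
  have : addOrderOf x ∣ m := addOrderOf_dvd_of_nsmul_eq_zero (hm x)
  rw [hx] at this
  have : p ∣ Nat.gcd m k := Nat.dvd_gcd this hpk
  rw [Nat.coprime_iff_gcd_eq_one.mp h] at this
  exact hp.ne_one (Nat.eq_one_of_dvd_one this)

/-- The two sups intersect back to `I`. -/
lemma inf_sup_eq {I : Ideal R} {m k : ℕ} (hm : 0 < m) (hk : 0 < k)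
    (h : Nat.Coprime m k) (hI : Nat.card (R ⧸ I) = m * k) :
    (I ⊔ Ideal.span {(m : R)}) ⊓ (I ⊔ Ideal.span {(k : R)}) = I := by
  set J₁ := I ⊔ Ideal.span {(m : R)} with hJ₁
  set J₂ := I ⊔ Ideal.span {(k : R)} with hJ₂
  have hmk : 0 < m * k := Nat.mul_pos hm hk
  have hfinI : Finite (R ⧸ I) := Nat.finite_of_card_ne_zero (by omega)
  show J₁ ⊓ J₂ = I
  apply le_antisymm
  · intro x hx
    obtain ⟨hx₁, hx₂⟩ := hx
    -- reduce mod I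
    rw [← Ideal.Quotient.eq_zero_iff_mem]
    set xb := Ideal.Quotient.mk I x with hxb
    -- m • xb and k • xb are both zero after multiplying by the complementary factor
    have hm0 : k • xb = 0 := by
      obtain ⟨i, hi, z, hz, hxz⟩ := Submodule.mem_sup.mp hx₁
      obtain ⟨r, hr⟩ := Ideal.mem_span_singleton'.mp hz
      have : xb = Ideal.Quotient.mk I z := by
        rw [hxb, ← hxz, map_add, Ideal.Quotient.eq_zero_iff_mem.mpr hi, zero_add]
      rw [this, ← hr]
      have e1 : (k : ℕ) • (Ideal.Quotient.mk I (r * (m : R)))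
          = Ideal.Quotient.mk I ((k : ℕ) • (r * (m : R))) :=
        (map_nsmul (Ideal.Quotient.mk I).toAddMonoidHom k _).symm
      have e2 : (k : ℕ) • (r * (m : R)) = (k * m : ℕ) • r := by
        rw [nsmul_eq_mul, nsmul_eq_mul]; push_cast; ring
      have e3 : Ideal.Quotient.mk I ((k * m : ℕ) • r)
          = (k * m : ℕ) • Ideal.Quotient.mk I r :=
        map_nsmul (Ideal.Quotient.mk I).toAddMonoidHom _ _
      rw [e1, e2, e3, show (k * m : ℕ) = Nat.card (R ⧸ I) by rw [hI]; ring]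
      exact card_nsmul_eq_zero'
    have hk0 : m • xb = 0 := by
      obtain ⟨i, hi, z, hz, hxz⟩ := Submodule.mem_sup.mp hx₂
      obtain ⟨r, hr⟩ := Ideal.mem_span_singleton'.mp hz
      have : xb = Ideal.Quotient.mk I z := by
        rw [hxb, ← hxz, map_add, Ideal.Quotient.eq_zero_iff_mem.mpr hi, zero_add]
      rw [this, ← hr]
      have e1 : (m : ℕ) • (Ideal.Quotient.mk I (r * (k : R)))
          = Ideal.Quotient.mk I ((m : ℕ) • (r * (k : R))) :=
        (map_nsmul (Ideal.Quotient.mk I).toAddMonoidHom m _).symm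
      have e2 : (m : ℕ) • (r * (k : R)) = (m * k : ℕ) • r := by
        rw [nsmul_eq_mul, nsmul_eq_mul]; push_cast; ring
      have e3 : Ideal.Quotient.mk I ((m * k : ℕ) • r)
          = (m * k : ℕ) • Ideal.Quotient.mk I r :=
        map_nsmul (Ideal.Quotient.mk I).toAddMonoidHom _ _
      rw [e1, e2, e3, ← hI]
      exact card_nsmul_eq_zero'
    obtain ⟨u, v, huv⟩ := bezout h
    calc xb = (1 : ℤ) • xb := (one_smul ℤ xb).symm
      _ = (u * m + v * k : ℤ) • xb := by rw [huv]
      _ = u • ((m : ℕ) • xb) + v • ((k : ℕ) • xb) := by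
          rw [add_smul, mul_smul, mul_smul, natCast_zsmul, natCast_zsmul]
      _ = 0 := by rw [hm0, hk0, smul_zero, smul_zero, add_zero]
  · exact le_inf le_sup_left le_sup_left


/-- main counting lemma: if `R ⧸ I` has order `m * k` with `m, k` coprime, then
`R ⧸ (I ⊔ (m))` has order `m`. -/
lemma card_quot_sup {I : Ideal R} {m k : ℕ} (hm : 0 < m) (hk : 0 < k)
    (h : Nat.Coprime m k) (hI : Nat.card (R ⧸ I) = m * k) :
    Nat.card (R ⧸ (I ⊔ Ideal.span {(m : R)})) = m := by
  set J₁ := I ⊔ Ideal.span {(m : R)} with hJ₁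
  set J₂ := I ⊔ Ideal.span {(k : R)} with hJ₂
  have hmk : 0 < m * k := Nat.mul_pos hm hk
  have hfinI : Finite (R ⧸ I) := Nat.finite_of_card_ne_zero (by omega)
  have hmJ₁ : (m : R) ∈ J₁ := Ideal.mem_sup_right (Ideal.subset_span rfl)
  have hkJ₂ : (k : R) ∈ J₂ := Ideal.mem_sup_right (Ideal.subset_span rfl)
  have hsurj : ∀ (J : Ideal R) (hIJ : I ≤ J), Function.Surjective (Ideal.Quotient.factor (S := I) (T := J) hIJ) := by
    intro J hIJ z
    obtain ⟨y, rfl⟩ := Ideal.Quotient.mk_surjective z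
    exact ⟨Ideal.Quotient.mk I y, Ideal.Quotient.factor_mk (S := I) (T := J) hIJ y⟩
  have hfin₁ : Finite (R ⧸ J₁) :=
    Finite.of_surjective (Ideal.Quotient.factor (S := I) (T := J₁) le_sup_left) (hsurj J₁ le_sup_left)
  have hfin₂ : Finite (R ⧸ J₂) :=
    Finite.of_surjective (Ideal.Quotient.factor (S := I) (T := J₂) le_sup_left) (hsurj J₂ le_sup_left)
  have hsup : J₁ ⊔ J₂ = ⊤ := sup_eq_top_of_coprime h hmJ₁ hkJ₂
  have hinf : J₁ ⊓ J₂ = I := inf_sup_eq hm hk h hI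
  -- now count
  have hcard : Nat.card (R ⧸ J₁) * Nat.card (R ⧸ J₂) = m * k := by
    rw [← card_quot_inf hsup, hinf, hI]
  set a := Nat.card (R ⧸ J₁) with ha
  set b := Nat.card (R ⧸ J₂) with hb
  have hcopa : Nat.Coprime a k := card_coprime (nsmul_quot_eq_zero hmJ₁) h
  have hcopb : Nat.Coprime b m := card_coprime (nsmul_quot_eq_zero hkJ₂) h.symm
  have hadvd : a ∣ m := by
    have : a ∣ m * k := ⟨b, hcard.symm⟩
    exact (Nat.Coprime.dvd_of_dvd_mul_right hcopa this)
  have hbdvd : b ∣ k := by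
    have : b ∣ m * k := Dvd.intro_left a hcard
    rw [mul_comm] at this
    exact (Nat.Coprime.dvd_of_dvd_mul_right hcopb this)
  obtain ⟨c, hc⟩ := hadvd
  obtain ⟨d, hd⟩ := hbdvd
  have ha0 : 0 < a := Nat.pos_of_ne_zero (by rintro h0; rw [h0, zero_mul] at hcard; omega)
  have hb0 : 0 < b := Nat.pos_of_ne_zero (by rintro h0; rw [h0, mul_zero] at hcard; omega)
  have : a * b * (c * d) = a * b * 1 := by
    rw [mul_one]
    calc a * b * (c * d) = (a * c) * (b * d) := by ring
      _ = m * k := by rw [← hc, ← hd]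
      _ = a * b := hcard.symm
  have hcd : c * d = 1 := Nat.eq_of_mul_eq_mul_left (Nat.mul_pos ha0 hb0) this
  have hc1 : c = 1 := Nat.eq_one_of_mul_eq_one_right hcd
  show a = m
  rw [hc, hc1, mul_one]

/-- recovery lemma: from coprime-index ideals, taking `⊓` then `⊔ (m)` recovers the first. -/
lemma sup_inf_recover {J₁ J₂ : Ideal R} {m k : ℕ} (hm : 0 < m) (hk : 0 < k)
    (h : Nat.Coprime m k) (h₁ : Nat.card (R ⧸ J₁) = m) (h₂ : Nat.card (R ⧸ J₂) = k) :
    (J₁ ⊓ J₂) ⊔ Ideal.span {(m : R)} = J₁ := by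
  apply le_antisymm
  · apply sup_le inf_le_left
    rw [Ideal.span_le, Set.singleton_subset_iff]
    exact natCast_mem_of_card h₁ hm
  · intro x hx
    obtain ⟨u, v, huv⟩ := bezout h
    have hrw : x = ((v * k : ℤ) : R) * x + ((u * m : ℤ) : R) * x := by
      have : (((u * m + v * k : ℤ)) : R) = 1 := by rw [huv]; norm_cast
      calc x = (((u * m + v * k : ℤ)) : R) * x := by rw [this, one_mul]
        _ = ((v * k : ℤ) : R) * x + ((u * m : ℤ) : R) * x := by push_cast; ring
    rw [hrw]
    apply Submodule.add_mem_sup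
    · -- (v*k) * x ∈ J₁ ⊓ J₂
      constructor
      · exact J₁.mul_mem_left _ hx
      · have hkx : (k : R) * x ∈ J₂ := by
          have := smul_mem_of_card h₂ hk x
          rwa [nsmul_eq_mul] at this
        have : ((v * k : ℤ) : R) * x = (v : R) * ((k : R) * x) := by push_cast; ring
        rw [this]
        exact J₂.mul_mem_left _ hkx
    · have : ((u * m : ℤ) : R) * x = ((u : ℤ) : R) * x * (m : R) := by push_cast; ring
      rw [this]
      exact Ideal.mul_mem_left _ _ (Ideal.subset_span rfl)

end Aux

/-- From coprime-index ideals, the intersection has index the product. -/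
lemma card_inf_eq {R : Type} [CommRing R] {J₁ J₂ : Ideal R} {m k : ℕ} (hm : 0 < m) (hk : 0 < k)
    (h : Nat.Coprime m k) (h₁ : Nat.card (R ⧸ J₁) = m) (h₂ : Nat.card (R ⧸ J₂) = k) :
    Nat.card (R ⧸ (J₁ ⊓ J₂)) = m * k := by
  rw [card_quot_inf (sup_eq_top_of_coprime h (natCast_mem_of_card h₁ hm)
    (natCast_mem_of_card h₂ hk)), h₁, h₂]


/-- If `R` is a commutative ring whose additive group is free abelian of finite rank `n`,
then `R` has finitely many ideals of each finite index, and `a_R` is multiplicative on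
coprime arguments. -/
theorem ideal_count_finite_and_multiplicative (R : Type) [CommRing R]
    [Module.Free ℤ R] [Module.Finite ℤ R] (n : ℕ) (hrank : Module.finrank ℤ R = n) :
    (∀ k : ℕ, 0 < k → {I : Ideal R | Nat.card (R ⧸ I) = k}.Finite) ∧
    (∀ m k : ℕ, 0 < m → 0 < k → Nat.Coprime m k →
      idealCount R (m * k) = idealCount R m * idealCount R k) := by
  refine ⟨fun k hk => set_finite hk, fun m k hm hk h => ?_⟩
  unfold idealCount
  rw [← Nat.card_coe_set_eq, ← Nat.card_coe_set_eq, ← Nat.card_coe_set_eq,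
    ← Nat.card_prod]
  apply Nat.card_congr
  refine
    { toFun := fun I =>
        (⟨I.1 ⊔ Ideal.span {(m : R)}, card_quot_sup hm hk h I.2⟩,
         ⟨I.1 ⊔ Ideal.span {(k : R)}, card_quot_sup hk hm h.symm (show Nat.card (R ⧸ I.1) = k * m from (mul_comm m k) ▸ I.2)⟩)
      invFun := fun p => ⟨p.1.1 ⊓ p.2.1, card_inf_eq hm hk h p.1.2 p.2.2⟩
      left_inv := ?_
      right_inv := ?_ }
  · rintro ⟨I, hI⟩
    apply Subtype.ext
    exact inf_sup_eq hm hk h hI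
  · rintro ⟨⟨J₁, h₁⟩, ⟨J₂, h₂⟩⟩
    ext : 1
    · apply Subtype.ext
      exact sup_inf_recover hm hk h h₁ h₂
    · apply Subtype.ext
      show (J₁ ⊓ J₂) ⊔ Ideal.span {(k : R)} = J₂
      rw [inf_comm]
      exact sup_inf_recover hk hm h.symm h₂ h₁
end

section
/- Let p ≥ 1 and x be real numbers with 0 ≤ x and p^{j−1} x^j < 1 for all 1 ≤ j ≤ m, where m is a positive integer, and let B be a non-negative integer. Then the sum over all non-decreasing m-tuples of integers B ≤ c_1 ≤ c_2 ≤ ... ≤ c_m of the quantity p^{c_1 + c_2 + ... + c_{m−1}} · x^{c_1 + c_2 + ... + c_m} converges and equals (p^{m−1} x^m)^B · ∏_{j=1}^{m} (1 − p^{j−1} x^j)^{−1}. (Here for m = 1 the exponent of p in each summand is 0.) -/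
open Finset

private lemma sum_erase_last {n : ℕ} (f : Fin (n + 1) → ℕ) :
    ∑ i ∈ Finset.univ.erase (Fin.last n), f i = ∑ i : Fin n, f i.castSucc := by
  have h1 : (∑ i ∈ Finset.univ.erase (Fin.last n), f i) + f (Fin.last n)
      = ∑ i : Fin (n+1), f i := Finset.sum_erase_add _ _ (Finset.mem_univ _)
  have h2 := Fin.sum_univ_castSucc f
  omega

private def eNat (B : ℕ) : ℕ ≃ {n : ℕ // B ≤ n} where
  toFun n := ⟨n + B, Nat.le_add_left B n⟩
  invFun b := b.1 - B
  left_inv _ := by simp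
  right_inv b := Subtype.ext (by have := b.2; simp; omega)

private lemma geom_subtype {q C : ℝ} (h0 : 0 ≤ q) (h1 : q < 1) (B : ℕ) :
    HasSum (fun b : {n : ℕ // B ≤ n} => q ^ (b : ℕ) * C) (q ^ B * (1 - q)⁻¹ * C) := by
  rw [← (eNat B).hasSum_iff]
  have h := (hasSum_geometric_of_lt_one h0 h1).mul_left (q ^ B * C)
  have hfun : ((fun b : {n : ℕ // B ≤ n} => q ^ (b : ℕ) * C) ∘ (eNat B))
      = fun n : ℕ => q ^ B * C * q ^ n := by
    funext n
    simp [eNat, pow_add]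
    ring
  rw [hfun]
  convert h using 1
  case e'_3 => rfl
  ring

private def eOne (B : ℕ) : {n : ℕ // B ≤ n} ≃ {c : Fin 1 → ℕ // Monotone c ∧ B ≤ c 0} where
  toFun n := ⟨fun _ => n.1, monotone_const, n.2⟩
  invFun c := ⟨c.1 0, c.2.2⟩
  left_inv n := rfl
  right_inv c := Subtype.ext (funext fun i => congrArg c.1 (Subsingleton.elim 0 i))

private def consEquiv (k B : ℕ) :
    (Σ b : {n : ℕ // B ≤ n}, {c : Fin (k + 1) → ℕ // Monotone c ∧ (b : ℕ) ≤ c 0}) ≃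
      {c : Fin (k + 2) → ℕ // Monotone c ∧ B ≤ c 0} where
  toFun s := ⟨Fin.cons s.1.1 s.2.1, by
      rw [Fin.monotone_iff_le_succ]
      intro i
      induction i using Fin.cases with
      | zero => simpa using s.2.2.2
      | succ j =>
        rw [← Fin.succ_castSucc]
        simpa using (Fin.monotone_iff_le_succ.mp s.2.2.1) j, by
      simpa using s.1.2⟩
  invFun c := ⟨⟨c.1 0, c.2.2⟩, ⟨Fin.tail c.1,
    c.2.1.comp (Fin.strictMono_succ).monotone,
    c.2.1 (Fin.zero_le 1)⟩⟩
  left_inv s := by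
    refine Sigma.ext rfl ?_
    simp [Fin.tail_cons]
    rfl
  right_inv c := by
    ext i
    simp [Fin.cons_self_tail]

private lemma aux (p x : ℝ) (hp : 1 ≤ p) (hx : 0 ≤ x) :
    ∀ (m : ℕ), (∀ j : ℕ, 1 ≤ j → j ≤ m + 1 → p ^ (j - 1) * x ^ j < 1) → ∀ (B : ℕ),
    HasSum
      (fun c : {c : Fin (m + 1) → ℕ // Monotone c ∧ B ≤ c 0} =>
        p ^ (∑ i ∈ Finset.univ.erase (Fin.last m), c.1 i) * x ^ (∑ i, c.1 i))
      ((p ^ m * x ^ (m + 1)) ^ B * ∏ j ∈ Finset.range (m + 1), (1 - p ^ j * x ^ (j + 1))⁻¹) := by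
  have hp0 : 0 < p := lt_of_lt_of_le one_pos hp
  intro m
  induction m with
  | zero =>
    intro hsmall B
    have hx1 : x < 1 := by simpa using hsmall 1 le_rfl le_rfl
    rw [← (eOne B).hasSum_iff]
    have h := geom_subtype hx hx1 (C := (1:ℝ)) B
    simp only [mul_one] at h
    have hfun : ((fun c : {c : Fin 1 → ℕ // Monotone c ∧ B ≤ c 0} =>
        p ^ (∑ i ∈ Finset.univ.erase (Fin.last 0), c.1 i) * x ^ (∑ i, c.1 i)) ∘ (eOne B))
        = fun b : {n : ℕ // B ≤ n} => x ^ (b : ℕ) := by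
      funext n
      simp [eOne, sum_erase_last]
    rw [hfun]
    convert h using 1
    norm_num
  | succ k ih =>
    intro hsmall B
    set q : ℝ := p ^ (k + 1) * x ^ (k + 1 + 1) with hq
    have hq0 : 0 ≤ q := by positivity
    have hq1 : q < 1 := hsmall (k + 2) (by omega) le_rfl
    have hsmall' : ∀ j : ℕ, 1 ≤ j → j ≤ k + 1 → p ^ (j - 1) * x ^ j < 1 :=
      fun j h1 h2 => hsmall j h1 (by omega)
    rw [← (consEquiv k B).hasSum_iff]
    have hfun : ((fun c : {c : Fin (k + 1 + 1) → ℕ // Monotone c ∧ B ≤ c 0} =>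
        p ^ (∑ i ∈ Finset.univ.erase (Fin.last (k + 1)), c.1 i) * x ^ (∑ i, c.1 i))
          ∘ (consEquiv k B))
        = fun s : (Σ b : {n : ℕ // B ≤ n},
            {c : Fin (k + 1) → ℕ // Monotone c ∧ (b : ℕ) ≤ c 0}) =>
          (p * x) ^ (s.1 : ℕ) *
            (p ^ (∑ i ∈ Finset.univ.erase (Fin.last k), s.2.1 i) * x ^ (∑ i, s.2.1 i)) := by
      funext s
      have h1 : ∑ i ∈ Finset.univ.erase (Fin.last (k + 1)),
          (Fin.cons s.1.1 s.2.1 : Fin (k+2) → ℕ) i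
          = s.1.1 + ∑ i ∈ Finset.univ.erase (Fin.last k), s.2.1 i := by
        rw [sum_erase_last, Fin.sum_univ_succ, sum_erase_last]
        simp only [Fin.castSucc_zero, Fin.cons_zero]
        congr 1
      have h2 : ∑ i, (Fin.cons s.1.1 s.2.1 : Fin (k+2) → ℕ) i = s.1.1 + ∑ i, s.2.1 i := by
        rw [Fin.sum_univ_succ]
        simp
      simp only [consEquiv, Equiv.coe_fn_mk, Function.comp_apply]
      rw [h1, h2, pow_add, pow_add, mul_pow]
      ring
    rw [hfun]
    -- fiberwise sums
    have hq' : q = (p * x) * (p ^ k * x ^ (k + 1)) := by rw [hq]; ring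
    have hfib : ∀ b : {n : ℕ // B ≤ n},
        HasSum (fun c : {c : Fin (k + 1) → ℕ // Monotone c ∧ (b : ℕ) ≤ c 0} =>
          (p * x) ^ (b : ℕ) *
            (p ^ (∑ i ∈ Finset.univ.erase (Fin.last k), c.1 i) * x ^ (∑ i, c.1 i)))
          (q ^ (b : ℕ) * ∏ j ∈ Finset.range (k + 1), (1 - p ^ j * x ^ (j + 1))⁻¹) := by
      intro b
      have hval : q ^ (b : ℕ) * ∏ j ∈ Finset.range (k + 1), (1 - p ^ j * x ^ (j + 1))⁻¹
          = (p * x) ^ (b : ℕ) * ((p ^ k * x ^ (k + 1)) ^ (b : ℕ) *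
            ∏ j ∈ Finset.range (k + 1), (1 - p ^ j * x ^ (j + 1))⁻¹) := by
        rw [hq', mul_pow]
        ring
      rw [hval]
      exact (ih hsmall' (b : ℕ)).mul_left _
    have houter : HasSum (fun b : {n : ℕ // B ≤ n} =>
        q ^ (b : ℕ) * ∏ j ∈ Finset.range (k + 1), (1 - p ^ j * x ^ (j + 1))⁻¹)
        (q ^ B * (1 - q)⁻¹ * ∏ j ∈ Finset.range (k + 1), (1 - p ^ j * x ^ (j + 1))⁻¹) :=
      geom_subtype hq0 hq1 B
    have hnonneg : ∀ s : (Σ b : {n : ℕ // B ≤ n},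
        {c : Fin (k + 1) → ℕ // Monotone c ∧ (b : ℕ) ≤ c 0}),
        0 ≤ (p * x) ^ (s.1 : ℕ) *
          (p ^ (∑ i ∈ Finset.univ.erase (Fin.last k), s.2.1 i) * x ^ (∑ i, s.2.1 i)) := by
      intro s; positivity
    have hsummable : Summable (fun s : (Σ b : {n : ℕ // B ≤ n},
        {c : Fin (k + 1) → ℕ // Monotone c ∧ (b : ℕ) ≤ c 0}) =>
        (p * x) ^ (s.1 : ℕ) *
          (p ^ (∑ i ∈ Finset.univ.erase (Fin.last k), s.2.1 i) * x ^ (∑ i, s.2.1 i))) := by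
      rw [summable_sigma_of_nonneg hnonneg]
      refine ⟨fun b => (hfib b).summable, ?_⟩
      apply houter.summable.congr
      intro b
      exact ((hfib b).tsum_eq).symm
    have htot := houter.sigma_of_hasSum hfib hsummable
    convert htot using 1
    rw [Finset.prod_range_succ]
    ring

/-- Iterated geometric series identity: for `p ≥ 1`, `x ≥ 0` with `p^{j-1} x^j < 1` for
`1 ≤ j ≤ m`, and `B ∈ ℕ`, the sum of `p^{c_1 + ⋯ + c_{m-1}} x^{c_1 + ⋯ + c_m}` over all
nondecreasing tuples `B ≤ c_1 ≤ ⋯ ≤ c_m` equals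
`(p^{m-1} x^m)^B ∏_{j=1}^m (1 - p^{j-1} x^j)⁻¹`. -/
theorem iterated_geometric_sum (p x : ℝ) (hp : 1 ≤ p) (hx : 0 ≤ x)
    (m : ℕ) (hm : 0 < m)
    (hsmall : ∀ j : ℕ, 1 ≤ j → j ≤ m → p ^ (j - 1) * x ^ j < 1) (B : ℕ) :
    HasSum
      (fun c : {c : Fin m → ℕ // Monotone c ∧ B ≤ c ⟨0, hm⟩} =>
        p ^ (∑ i ∈ Finset.univ.erase (⟨m - 1, Nat.sub_lt hm Nat.one_pos⟩ : Fin m), c.1 i) *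
          x ^ (∑ i, c.1 i))
      ((p ^ (m - 1) * x ^ m) ^ B * ∏ j ∈ Finset.range m, (1 - p ^ j * x ^ (j + 1))⁻¹) := by
  match m, hm with
  | k + 1, _ => exact aux p x hp hx k hsmall B
end

section
/- Let λ be a nonzero integer, let f(X) = X²(X−λ), let R = ℤ[X]/(f), and let p be a prime not dividing λ. Then for every non-negative integer l, the number of ideals I of R with R/I finite of cardinality p^l equals the sum, over all triples of non-negative integers (b_1, b_2, b_3) with b_2 ≤ b_1 and b_1 + b_2 + b_3 = l, of p^{b_1 − b_2 − ⌈(b_1 − b_2)/2⌉}. -/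
open Polynomial Function

namespace IdealCountAux


/-- An element of a quotient-finite ideal: the cardinality, as a ring element, lies in `I`. -/
lemma natCast_mem_of_card {A : Type*} [CommRing A] {I : Ideal A} {n : ℕ} (hn : n ≠ 0)
    (h : Nat.card (A ⧸ I) = n) : (n : A) ∈ I := by
  have : Finite (A ⧸ I) := Nat.finite_of_card_ne_zero (by rw [h]; exact hn)
  have h1 : (n : A ⧸ I) = 0 := by
    have hd : addOrderOf (1 : A ⧸ I) ∣ n := by
      rw [← h]; exact addOrderOf_dvd_natCard _
    have := addOrderOf_dvd_iff_nsmul_eq_zero.mp hd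
    simpa [nsmul_eq_mul] using this
  have h2 : (Ideal.Quotient.mk I) ((n : ℕ) : A) = 0 := by
    rw [map_natCast]; exact h1
  exact (Ideal.Quotient.eq_zero_iff_mem).mp h2

/-- Correspondence of quotient-counted ideals along a surjection. -/
lemma ncard_ideal_comap {A B : Type*} [CommRing A] [CommRing B] (φ : A →+* B)
    (hφ : Surjective φ) (k : ℕ) :
    Set.ncard {I : Ideal A | RingHom.ker φ ≤ I ∧ Nat.card (A ⧸ I) = k}
      = Set.ncard {J : Ideal B | Nat.card (B ⧸ J) = k} := by
  have key : ∀ J : Ideal B, Nat.card (A ⧸ Ideal.comap φ J) = Nat.card (B ⧸ J) := by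
    intro J
    have hs : Surjective ((Ideal.Quotient.mk J).comp φ) :=
      (Ideal.Quotient.mk_surjective).comp hφ
    have hker : Ideal.comap φ J = RingHom.ker ((Ideal.Quotient.mk J).comp φ) := by
      rw [← RingHom.comap_ker, Ideal.mk_ker]
    exact Nat.card_congr ((Ideal.quotEquivOfEq hker).toEquiv.trans
      (RingHom.quotientKerEquivOfSurjective hs).toEquiv)
  have himg : {I : Ideal A | RingHom.ker φ ≤ I ∧ Nat.card (A ⧸ I) = k}
      = (Ideal.comap φ) '' {J : Ideal B | Nat.card (B ⧸ J) = k} := by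
    ext I
    constructor
    · rintro ⟨h1, h2⟩
      refine ⟨Ideal.map φ I, ?_, ?_⟩
      · have hcm : Ideal.comap φ (Ideal.map φ I) = I := by
          rw [Ideal.comap_map_of_surjective φ hφ]
          rw [← RingHom.ker_eq_comap_bot]
          exact sup_eq_left.mpr h1
        show Nat.card _ = k
        rw [← key, hcm]; exact h2
      · rw [Ideal.comap_map_of_surjective φ hφ, ← RingHom.ker_eq_comap_bot]
        exact sup_eq_left.mpr h1
    · rintro ⟨J, hJ, rfl⟩
      refine ⟨?_, (key J).trans hJ⟩
      rw [RingHom.ker_eq_comap_bot]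
      exact Ideal.comap_mono bot_le
  rw [himg, Set.ncard_image_of_injective _ (Ideal.comap_injective_of_surjective φ hφ)]

/-- Write any integer polynomial as linear part plus a multiple of `X ^ 2`. -/
lemma exists_trunc (h : ℤ[X]) :
    ∃ g, h = C (h.coeff 0) + C (h.coeff 1) * X + X ^ 2 * g := by
  have hdvd : X ^ 2 ∣ h - (C (h.coeff 0) + C (h.coeff 1) * X) := by
    rw [Polynomial.X_pow_dvd_iff]
    intro d hd
    rw [coeff_sub, coeff_add, coeff_C_mul, coeff_C, coeff_X]
    interval_cases d <;> norm_num
  obtain ⟨g, hg⟩ := hdvd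
  exact ⟨g, by linear_combination hg⟩

lemma linear_mem_iff {I : Ideal ℤ[X]} (hX : X ^ 2 ∈ I) (h : ℤ[X]) :
    h ∈ I ↔ C (h.coeff 0) + C (h.coeff 1) * X ∈ I := by
  obtain ⟨g, hg⟩ := exists_trunc h
  have h2 : C (h.coeff 0) + C (h.coeff 1) * X = h - X ^ 2 * g := by linear_combination -hg
  constructor
  · intro hh
    rw [h2]
    exact I.sub_mem hh (I.mul_mem_right g hX)
  · intro hh
    rw [hg]
    exact I.add_mem hh (I.mul_mem_right g hX)



lemma coeff_one_mul' (q r : ℤ[X]) :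
    (q * r).coeff 1 = q.coeff 0 * r.coeff 1 + q.coeff 1 * r.coeff 0 := by
  rw [Polynomial.coeff_mul, Finset.Nat.sum_antidiagonal_eq_sum_range_succ_mk]
  simp [Finset.sum_range_succ]

noncomputable def Jone (p : ℕ) (b1 b2 : ℕ) (c : ℤ) : Ideal ℤ[X] :=
  Ideal.span {C ((p:ℤ)^b1) + C c * X, C ((p:ℤ)^b2) * X, X ^ 2}

lemma X_sq_mem_Jone {p b1 b2 : ℕ} {c : ℤ} : X ^ 2 ∈ Jone p b1 b2 c :=
  Ideal.subset_span (by simp)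

lemma gen1_mem_Jone {p b1 b2 : ℕ} {c : ℤ} : C ((p:ℤ)^b1) + C c * X ∈ Jone p b1 b2 c :=
  Ideal.subset_span (by simp)

lemma gen2_mem_Jone {p b1 b2 : ℕ} {c : ℤ} : C ((p:ℤ)^b2) * X ∈ Jone p b1 b2 c :=
  Ideal.subset_span (by simp)

lemma linear_mem_Jone {p b1 b2 : ℕ} {c : ℤ} (u v : ℤ) :
    C (u * (p:ℤ)^b1) + C (u * c + v * (p:ℤ)^b2) * X ∈ Jone p b1 b2 c := by
  have : C (u * (p:ℤ)^b1) + C (u * c + v * (p:ℤ)^b2) * X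
      = C u * (C ((p:ℤ)^b1) + C c * X) + C v * (C ((p:ℤ)^b2) * X) := by
    push_cast [map_mul, map_add]
    ring
  rw [this]
  exact Ideal.add_mem _ (Ideal.mul_mem_left _ _ gen1_mem_Jone)
    (Ideal.mul_mem_left _ _ gen2_mem_Jone)

lemma mem_Jone_iff {p b1 b2 : ℕ} {c : ℤ} (hb : b2 ≤ b1) {a b : ℤ} :
    C a + C b * X ∈ Jone p b1 b2 c ↔
      ∃ u v : ℤ, a = u * (p:ℤ)^b1 ∧ b = u * c + v * (p:ℤ)^b2 := by
  constructor
  · intro hmem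
    rw [Jone, Ideal.mem_span_insert] at hmem
    obtain ⟨q1, z, hz, hx⟩ := hmem
    rw [Ideal.mem_span_insert] at hz
    obtain ⟨q2, z2, hz2, rfl⟩ := hz
    rw [Ideal.mem_span_singleton] at hz2
    obtain ⟨q3, rfl⟩ := hz2
    have h0 := congrArg (fun r : ℤ[X] => r.coeff 0) hx
    have h1 := congrArg (fun r : ℤ[X] => r.coeff 1) hx
    simp only [coeff_add, Polynomial.mul_coeff_zero, coeff_one_mul', coeff_C_mul,
      coeff_C_zero, coeff_C, coeff_X_zero, coeff_X_one, coeff_X_pow] at h0 h1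
    norm_num at h0 h1
    refine ⟨q1.coeff 0, q1.coeff 1 * (p:ℤ)^(b1 - b2) + q2.coeff 0, h0, ?_⟩
    have hpow : ((p:ℤ))^b1 = (p:ℤ)^(b1-b2) * (p:ℤ)^b2 := by
      rw [← pow_add]; congr 1; omega
    rw [h1, hpow]; ring
  · rintro ⟨u, v, rfl, rfl⟩
    exact linear_mem_Jone u v



lemma mk_linear_eq {p b1 b2 : ℕ} {c : ℤ} (a b : ℤ) :
    (Ideal.Quotient.mk (Jone p b1 b2 c)) (C a + C b * X)
      = (Ideal.Quotient.mk (Jone p b1 b2 c))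
          (C (a % (p:ℤ)^b1) + C ((b - a / (p:ℤ)^b1 * c) % (p:ℤ)^b2) * X) := by
  rw [Ideal.Quotient.mk_eq_mk_iff_sub_mem]
  set u := a / (p:ℤ)^b1 with hu
  set v := (b - u * c) / (p:ℤ)^b2 with hv
  have key : C a + C b * X -
      (C (a % (p:ℤ)^b1) + C ((b - u * c) % (p:ℤ)^b2) * X)
      = C (u * (p:ℤ)^b1) + C (u * c + v * (p:ℤ)^b2) * X := by
    have e1 : a % (p:ℤ)^b1 = a - (p:ℤ)^b1 * u := Int.emod_def a _
    have e2 : (b - u * c) % (p:ℤ)^b2 = (b - u * c) - (p:ℤ)^b2 * v := Int.emod_def _ _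
    rw [e1, e2, map_sub, map_sub, map_sub, map_add]
    ring
  rw [key]
  exact linear_mem_Jone u v

lemma card_Jone {p : ℕ} (hp : p.Prime) {b1 b2 : ℕ} (hb : b2 ≤ b1) (c : ℤ) :
    Nat.card (ℤ[X] ⧸ Jone p b1 b2 c) = p ^ (b1 + b2) := by
  have hppos : 0 < p := hp.pos
  have h1pos : (0:ℤ) < (p:ℤ)^b1 := by positivity
  have h2pos : (0:ℤ) < (p:ℤ)^b2 := by positivity
  have hbij : Bijective (fun x : Fin (p^b1) × Fin (p^b2) =>
      (Ideal.Quotient.mk (Jone p b1 b2 c)) (C ((x.1 : ℕ) : ℤ) + C ((x.2 : ℕ) : ℤ) * X)) := by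
    constructor
    · rintro ⟨a, b⟩ ⟨a', b'⟩ hab
      simp only at hab
      rw [Ideal.Quotient.mk_eq_mk_iff_sub_mem] at hab
      have hsub : C (((a:ℕ):ℤ) - ((a':ℕ):ℤ)) + C (((b:ℕ):ℤ) - ((b':ℕ):ℤ)) * X
          ∈ Jone p b1 b2 c := by
        have heq : C (((a:ℕ):ℤ) - ((a':ℕ):ℤ)) + C (((b:ℕ):ℤ) - ((b':ℕ):ℤ)) * X
            = C ((a:ℕ):ℤ) + C ((b:ℕ):ℤ) * X - (C ((a':ℕ):ℤ) + C ((b':ℕ):ℤ) * X) := by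
          rw [map_sub, map_sub]; ring
        rw [heq]; exact hab
      rw [mem_Jone_iff hb] at hsub
      obtain ⟨u, v, h1, h2⟩ := hsub
      have hc1 : ((a:ℕ):ℤ) < (p:ℤ)^b1 := by exact_mod_cast a.2
      have hc2 : ((a':ℕ):ℤ) < (p:ℤ)^b1 := by exact_mod_cast a'.2
      have hd1 : ((b:ℕ):ℤ) < (p:ℤ)^b2 := by exact_mod_cast b.2
      have hd2 : ((b':ℕ):ℤ) < (p:ℤ)^b2 := by exact_mod_cast b'.2
      have hn1 : (0:ℤ) ≤ ((a:ℕ):ℤ) := Int.ofNat_nonneg _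
      have hn2 : (0:ℤ) ≤ ((a':ℕ):ℤ) := Int.ofNat_nonneg _
      have hm1 : (0:ℤ) ≤ ((b:ℕ):ℤ) := Int.ofNat_nonneg _
      have hm2 : (0:ℤ) ≤ ((b':ℕ):ℤ) := Int.ofNat_nonneg _
      have hdvd1 : ((p:ℤ)^b1) ∣ (((a:ℕ):ℤ) - ((a':ℕ):ℤ)) := ⟨u, by rw [h1, mul_comm]⟩
      have ha0 : ((a:ℕ):ℤ) - ((a':ℕ):ℤ) = 0 := by
        refine Int.eq_zero_of_abs_lt_dvd hdvd1 ?_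
        rw [abs_lt]; constructor <;> linarith
      have hu : u = 0 := by
        have := ha0 ▸ h1.symm
        rcases mul_eq_zero.mp this with h | h
        · exact h
        · exact absurd h (by positivity)
      have hdvd2 : ((p:ℤ)^b2) ∣ (((b:ℕ):ℤ) - ((b':ℕ):ℤ)) := ⟨v, by rw [h2, hu, mul_comm]; ring⟩
      have hb0 : ((b:ℕ):ℤ) - ((b':ℕ):ℤ) = 0 := by
        refine Int.eq_zero_of_abs_lt_dvd hdvd2 ?_
        rw [abs_lt]; constructor <;> linarith
      have hanat : (a:ℕ) = (a':ℕ) := by exact_mod_cast sub_eq_zero.mp ha0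
      have hbnat : (b:ℕ) = (b':ℕ) := by exact_mod_cast sub_eq_zero.mp hb0
      exact Prod.ext (Fin.ext hanat) (Fin.ext hbnat)
    · intro y
      obtain ⟨h, rfl⟩ := Ideal.Quotient.mk_surjective y
      obtain ⟨g, hg⟩ := exists_trunc h
      have hlin : (Ideal.Quotient.mk (Jone p b1 b2 c)) h
          = (Ideal.Quotient.mk (Jone p b1 b2 c)) (C (h.coeff 0) + C (h.coeff 1) * X) := by
        rw [Ideal.Quotient.mk_eq_mk_iff_sub_mem]
        have heq : h - (C (h.coeff 0) + C (h.coeff 1) * X) = X ^ 2 * g := by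
          linear_combination hg
        rw [heq]
        exact Ideal.mul_mem_right _ _ X_sq_mem_Jone
      have han : 0 ≤ h.coeff 0 % (p:ℤ)^b1 := Int.emod_nonneg _ (by positivity)
      have hal : h.coeff 0 % (p:ℤ)^b1 < (p:ℤ)^b1 := Int.emod_lt_of_pos _ h1pos
      have hbn : 0 ≤ (h.coeff 1 - h.coeff 0 / (p:ℤ)^b1 * c) % (p:ℤ)^b2 :=
        Int.emod_nonneg _ (by positivity)
      have hbl : (h.coeff 1 - h.coeff 0 / (p:ℤ)^b1 * c) % (p:ℤ)^b2 < (p:ℤ)^b2 :=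
        Int.emod_lt_of_pos _ h2pos
      have hafin : (h.coeff 0 % (p:ℤ)^b1).toNat < p^b1 := by
        rw [← Nat.cast_lt (α := ℤ), Int.toNat_of_nonneg han]
        exact_mod_cast hal
      have hbfin : ((h.coeff 1 - h.coeff 0 / (p:ℤ)^b1 * c) % (p:ℤ)^b2).toNat < p^b2 := by
        rw [← Nat.cast_lt (α := ℤ), Int.toNat_of_nonneg hbn]
        exact_mod_cast hbl
      refine ⟨(⟨_, hafin⟩, ⟨_, hbfin⟩), ?_⟩
      simp only
      rw [Int.toNat_of_nonneg han, Int.toNat_of_nonneg hbn, hlin]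
      exact (mk_linear_eq (h.coeff 0) (h.coeff 1)).symm
  have hcard := Nat.card_eq_of_bijective _ hbij
  rw [← hcard]
  simp [Nat.card_eq_fintype_card, pow_add]



/-- Any ideal of ℤ containing `p ^ m` is `span {p ^ k}` for some `k ≤ m`. -/
lemma int_ideal_eq_pow {p : ℕ} (hp : p.Prime) {G : Ideal ℤ} {m : ℕ}
    (hm : ((p:ℤ))^m ∈ G) : ∃ k ≤ m, G = Ideal.span {((p:ℤ))^k} := by
  obtain ⟨g, hg⟩ := (IsPrincipalIdealRing.principal G).principal
  have hdvd : g ∣ (p:ℤ)^m := Ideal.mem_span_singleton.mp (by rwa [hg] at hm)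
  have hnat : g.natAbs ∣ p^m := by
    have := Int.natAbs_dvd_natAbs.mpr hdvd
    rwa [Int.natAbs_pow, Int.natAbs_natCast] at this
  obtain ⟨k, hk, hgk⟩ := (Nat.dvd_prime_pow hp).mp hnat
  refine ⟨k, hk, hg.trans (Ideal.span_singleton_eq_span_singleton.mpr ?_)⟩
  rw [Int.associated_iff_natAbs, hgk, Int.natAbs_pow, Int.natAbs_natCast]

/-- The set of coefficients of `X` among elements `C b * X` of `I`, as an ideal. -/
def coeffOneIdeal (I : Ideal ℤ[X]) : Ideal ℤ where
  carrier := {b | C b * X ∈ I}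
  add_mem' := by
    intro x y hx hy
    have := I.add_mem hx hy
    simpa [← add_mul, ← map_add] using this
  zero_mem' := by simp [I.zero_mem]
  smul_mem' := by
    intro r b hb
    have := I.mul_mem_left (C r) hb
    simpa [smul_eq_mul, map_mul, mul_assoc] using this

lemma mem_coeffOneIdeal {I : Ideal ℤ[X]} {b : ℤ} :
    b ∈ coeffOneIdeal I ↔ C b * X ∈ I := Iff.rfl

lemma evalzero_surj : Surjective (evalRingHom (0:ℤ)) := fun a => ⟨C a, eval_C⟩

lemma mem_coeffZeroIdeal_iff {I : Ideal ℤ[X]} (hX : X ^ 2 ∈ I) (a : ℤ) :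
    a ∈ I.map (evalRingHom (0:ℤ)) ↔ ∃ b, C a + C b * X ∈ I := by
  constructor
  · intro ha
    obtain ⟨h, hhI, hha⟩ := Ideal.mem_image_of_mem_map_of_surjective _ evalzero_surj ha
    have h0 : h.coeff 0 = a := by rw [coeff_zero_eq_eval_zero]; exact hha
    have := (linear_mem_iff hX h).mp hhI
    exact ⟨h.coeff 1, h0 ▸ this⟩
  · rintro ⟨b, hb⟩
    have := Ideal.mem_map_of_mem (evalRingHom (0:ℤ)) hb
    simpa using this

theorem exists_Jone {p : ℕ} (hp : p.Prime) {I : Ideal ℤ[X]} (hX : X ^ 2 ∈ I) {m : ℕ}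
    (hcard : Nat.card (ℤ[X] ⧸ I) = p ^ m) :
    ∃ b1 b2 : ℕ, ∃ c : ℤ, b2 ≤ b1 ∧ b1 + b2 = m ∧ 0 ≤ c ∧ c < (p:ℤ)^b2 ∧
      I = Jone p b1 b2 c := by
  have hppos : 0 < p := hp.pos
  -- p^m ∈ I
  have hpm : C ((p:ℤ)^m) ∈ I := by
    have := natCast_mem_of_card (pow_ne_zero m hp.ne_zero) hcard
    have hcast : ((p^m : ℕ) : ℤ[X]) = C ((p:ℤ)^m) := by
      rw [map_pow, map_natCast]; push_cast; ring
    rwa [hcast] at this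
  -- the two invariant ideals
  set G := I.map (evalRingHom (0:ℤ)) with hGdef
  set H := coeffOneIdeal I with hHdef
  have hpmG : ((p:ℤ))^m ∈ G :=
    (mem_coeffZeroIdeal_iff hX _).mpr ⟨0, by simpa using hpm⟩
  have hpmH : ((p:ℤ))^m ∈ H := by
    rw [mem_coeffOneIdeal]
    exact I.mul_mem_right X hpm
  obtain ⟨b1, hb1m, hG⟩ := int_ideal_eq_pow hp hpmG
  obtain ⟨b2, hb2m, hH⟩ := int_ideal_eq_pow hp hpmH
  -- a witness β with C p^b1 + C β X ∈ I
  have hpb1G : ((p:ℤ))^b1 ∈ G := hG ▸ Ideal.mem_span_singleton.mpr dvd_rfl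
  obtain ⟨β, hβ⟩ := (mem_coeffZeroIdeal_iff hX _).mp hpb1G
  have hpb2H : C ((p:ℤ)^b2) * X ∈ I := by
    have : ((p:ℤ))^b2 ∈ H := hH ▸ Ideal.mem_span_singleton.mpr dvd_rfl
    exact this
  -- b2 ≤ b1
  have hb21 : b2 ≤ b1 := by
    have hXmul : C ((p:ℤ)^b1) * X ∈ I := by
      have h1 : X * (C ((p:ℤ)^b1) + C β * X) ∈ I := I.mul_mem_left X hβ
      have h2 : C β * X ^ 2 ∈ I := I.mul_mem_left (C β) hX
      have heq : C ((p:ℤ)^b1) * X = X * (C ((p:ℤ)^b1) + C β * X) - C β * X ^ 2 := by ring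
      rw [heq]; exact I.sub_mem h1 h2
    have : ((p:ℤ))^b1 ∈ H := hXmul
    rw [hH, Ideal.mem_span_singleton] at this
    have hnat : p^b2 ∣ p^b1 := by
      have := Int.natAbs_dvd_natAbs.mpr this
      rwa [Int.natAbs_pow, Int.natAbs_pow, Int.natAbs_natCast] at this
    exact (Nat.pow_dvd_pow_iff_le_right hp.one_lt).mp hnat
  have h2pos : (0:ℤ) < (p:ℤ)^b2 := by positivity
  -- the constant c
  set c := β % (p:ℤ)^b2 with hcdef
  have hcI : C ((p:ℤ)^b1) + C c * X ∈ I := by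
    have hq : C (β / (p:ℤ)^b2) * (C ((p:ℤ)^b2) * X) ∈ I :=
      I.mul_mem_left _ hpb2H
    have heq : C ((p:ℤ)^b1) + C c * X
        = (C ((p:ℤ)^b1) + C β * X) - C (β / (p:ℤ)^b2) * (C ((p:ℤ)^b2) * X) := by
      rw [hcdef, Int.emod_def, map_sub, map_mul]
      ring
    rw [heq]
    exact I.sub_mem hβ hq
  -- I = Jone
  have hIJ : I = Jone p b1 b2 c := by
    apply le_antisymm
    · intro h hh
      rw [linear_mem_iff hX] at hh
      rw [linear_mem_iff (X_sq_mem_Jone (p := p) (b1 := b1) (b2 := b2) (c := c))]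
      set a := h.coeff 0 with hadef
      set b := h.coeff 1 with hbdef
      have haG : a ∈ G := (mem_coeffZeroIdeal_iff hX a).mpr ⟨b, hh⟩
      rw [hG, Ideal.mem_span_singleton] at haG
      obtain ⟨u, hu⟩ := haG
      have hbv : C (b - u * c) * X ∈ I := by
        have hsub : (C a + C b * X) - C u * (C ((p:ℤ)^b1) + C c * X) ∈ I :=
          I.sub_mem hh (I.mul_mem_left _ hcI)
        have heq : (C a + C b * X) - C u * (C ((p:ℤ)^b1) + C c * X)
            = C (b - u * c) * X := by
          rw [hu, map_sub, map_mul, map_mul]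
          ring
        rwa [heq] at hsub
      have : b - u * c ∈ H := hbv
      rw [hH, Ideal.mem_span_singleton] at this
      obtain ⟨v, hv⟩ := this
      rw [mem_Jone_iff hb21]
      exact ⟨u, v, by rw [hu]; ring, by linarith [hv]⟩
    · rw [Jone, Ideal.span_le]
      rintro x hx
      simp only [Set.mem_insert_iff, Set.mem_singleton_iff] at hx
      rcases hx with rfl | rfl | rfl
      · exact hcI
      · exact hpb2H
      · exact hX
  -- cardinality identification
  have hcard2 : (p:ℕ)^(b1+b2) = p^m := by
    rw [← card_Jone hp hb21 c, ← hIJ, hcard]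
  have hm12 : b1 + b2 = m := Nat.pow_right_injective hp.two_le hcard2
  exact ⟨b1, b2, c, hb21, hm12, Int.emod_nonneg _ (by positivity), Int.emod_lt_of_pos _ h2pos, hIJ⟩



/-- `C` of the cardinality power lies in the ideal. -/
lemma Cpow_mem_of_card {p : ℕ} (hp : p.Prime) {I : Ideal ℤ[X]} {n : ℕ}
    (h : Nat.card (ℤ[X] ⧸ I) = p ^ n) : C ((p:ℤ)^n) ∈ I := by
  have := natCast_mem_of_card (pow_ne_zero n hp.ne_zero) h
  have hcast : ((p^n : ℕ) : ℤ[X]) = C ((p:ℤ)^n) := by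
    rw [map_pow, map_natCast]; push_cast; ring
  rwa [hcast] at this

noncomputable def Jtwo (lam : ℤ) (p : ℕ) (b3 : ℕ) : Ideal ℤ[X] :=
  Ideal.span {X - C lam, C ((p:ℤ)^b3)}

lemma gen1_mem_Jtwo {lam : ℤ} {p b3 : ℕ} : X - C lam ∈ Jtwo lam p b3 :=
  Ideal.subset_span (by simp)

lemma gen2_mem_Jtwo {lam : ℤ} {p b3 : ℕ} : C ((p:ℤ)^b3) ∈ Jtwo lam p b3 :=
  Ideal.subset_span (by simp)

lemma mem_Jtwo_of {lam : ℤ} {p b3 : ℕ} {h : ℤ[X]} (hd : ((p:ℤ))^b3 ∣ eval lam h) :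
    h ∈ Jtwo lam p b3 := by
  obtain ⟨k, hk⟩ := hd
  have h1 : h - C (eval lam h) ∈ Jtwo lam p b3 := by
    obtain ⟨q, hq⟩ := Polynomial.X_sub_C_dvd_sub_C_eval (a := lam) (p := h)
    rw [hq]
    exact Ideal.mul_mem_right _ _ gen1_mem_Jtwo
  have h2 : C (eval lam h) ∈ Jtwo lam p b3 := by
    rw [hk, map_mul]
    exact Ideal.mul_mem_right _ _ gen2_mem_Jtwo
  simpa using Ideal.add_mem _ h1 h2

lemma eval_mem_Jtwo {lam : ℤ} {p b3 : ℕ} {h : ℤ[X]} (hh : h ∈ Jtwo lam p b3) :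
    ((p:ℤ))^b3 ∣ eval lam h := by
  rw [Jtwo, Ideal.mem_span_pair] at hh
  obtain ⟨q1, q2, hq⟩ := hh
  have := congrArg (Polynomial.eval lam) hq
  simp only [eval_add, eval_mul, eval_sub, eval_X, eval_C, sub_self, mul_zero, zero_add] at this
  exact ⟨Polynomial.eval lam q2, by rw [← this]; ring⟩

lemma card_Jtwo {lam : ℤ} {p : ℕ} (hp : p.Prime) (b3 : ℕ) :
    Nat.card (ℤ[X] ⧸ Jtwo lam p b3) = p ^ b3 := by
  have : NeZero (p ^ b3) := ⟨pow_ne_zero _ hp.ne_zero⟩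
  set χ : ℤ[X] →+* ZMod (p ^ b3) :=
    (Int.castRingHom (ZMod (p ^ b3))).comp (evalRingHom lam) with hχ
  have hsurj : Surjective χ := by
    intro y
    obtain ⟨a, ha⟩ := ZMod.intCast_surjective (n := p ^ b3) y
    exact ⟨C a, by simp [hχ, ha]⟩
  have hker : RingHom.ker χ = Jtwo lam p b3 := by
    ext h
    rw [RingHom.mem_ker]
    constructor
    · intro hh
      apply mem_Jtwo_of
      have : ((eval lam h : ℤ) : ZMod (p ^ b3)) = 0 := hh
      rw [ZMod.intCast_zmod_eq_zero_iff_dvd] at this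
      have hc : (((p:ℕ)^b3 : ℕ) : ℤ) = ((p:ℤ))^b3 := by push_cast; ring
      rwa [hc] at this
    · intro hh
      obtain ⟨k, hk⟩ := eval_mem_Jtwo hh
      show ((eval lam h : ℤ) : ZMod (p ^ b3)) = 0
      rw [ZMod.intCast_zmod_eq_zero_iff_dvd]
      rw [hk]
      exact Dvd.dvd.mul_right (by push_cast; ring_nf; exact dvd_rfl) k
  have : Nat.card (ℤ[X] ⧸ Jtwo lam p b3) = Nat.card (ZMod (p ^ b3)) := by
    refine Nat.card_congr ?_
    refine ((Ideal.quotEquivOfEq hker.symm).toEquiv.trans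
      (RingHom.quotientKerEquivOfSurjective hsurj).toEquiv)
  rw [this, Nat.card_zmod]

lemma exists_Jtwo {lam : ℤ} {p : ℕ} (hp : p.Prime) {I : Ideal ℤ[X]}
    (hX : X - C lam ∈ I) {n : ℕ} (hcard : Nat.card (ℤ[X] ⧸ I) = p ^ n) :
    I = Jtwo lam p n := by
  -- the ideal of constants
  have hCmem : ∀ h : ℤ[X], h ∈ I → C (eval lam h) ∈ I := by
    intro h hh
    obtain ⟨q, hq⟩ := Polynomial.X_sub_C_dvd_sub_C_eval (a := lam) (p := h)
    have h1 : (X - C lam) * q ∈ I := I.mul_mem_right _ hX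
    have heq : C (eval lam h) = h - (X - C lam) * q := by rw [← hq]; ring
    rw [heq]
    exact I.sub_mem hh h1
  set G : Ideal ℤ := Ideal.comap (C : ℤ →+* ℤ[X]) I with hGdef
  have hpn : ((p:ℤ))^n ∈ G := by
    show C ((p:ℤ)^n) ∈ I
    exact Cpow_mem_of_card hp hcard
  obtain ⟨k, hk, hG⟩ := int_ideal_eq_pow hp hpn
  -- ℤ ⧸ G ≃ ℤ[X] ⧸ I
  have hsurj : Surjective ((Ideal.Quotient.mk I).comp (C : ℤ →+* ℤ[X])) := by
    intro y
    obtain ⟨h, rfl⟩ := Ideal.Quotient.mk_surjective y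
    refine ⟨eval lam h, ?_⟩
    rw [RingHom.comp_apply, Ideal.Quotient.mk_eq_mk_iff_sub_mem]
    obtain ⟨q, hq⟩ := Polynomial.X_sub_C_dvd_sub_C_eval (a := lam) (p := h)
    have heq : C (eval lam h) - h = -((X - C lam) * q) := by rw [← hq]; ring
    rw [heq]
    exact I.neg_mem (I.mul_mem_right _ hX)
  have hkerC : RingHom.ker ((Ideal.Quotient.mk I).comp (C : ℤ →+* ℤ[X])) = G := by
    rw [← RingHom.comap_ker, Ideal.mk_ker]
  have hcardG : Nat.card (ℤ ⧸ G) = p ^ n := by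
    rw [← hcard]
    exact Nat.card_congr ((Ideal.quotEquivOfEq hkerC.symm).toEquiv.trans
      (RingHom.quotientKerEquivOfSurjective hsurj).toEquiv)
  -- identify k = n
  have hcardZ : Nat.card (ℤ ⧸ G) = p ^ k := by
    rw [hG]
    have := Nat.card_congr (Int.quotientSpanEquivZMod ((p:ℤ)^k)).toEquiv
    rw [this, Nat.card_zmod, Int.natAbs_pow, Int.natAbs_natCast]
  have hkn : k = n := Nat.pow_right_injective hp.two_le (show p^k = p^n by rw [← hcardZ, hcardG])
  subst hkn
  -- conclude
  apply le_antisymm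
  · intro h hh
    apply mem_Jtwo_of
    have : eval lam h ∈ G := hCmem h hh
    rw [hG, Ideal.mem_span_singleton] at this
    exact this
  · rw [Jtwo, Ideal.span_le]
    rintro x hx
    simp only [Set.mem_insert_iff, Set.mem_singleton_iff] at hx
    rcases hx with rfl | rfl
    · exact hX
    · show C ((p:ℤ)^k) ∈ I
      have : ((p:ℤ))^k ∈ G := hG ▸ Ideal.mem_span_singleton.mpr dvd_rfl
      exact this



lemma coprime_pow_lam {p : ℕ} {lam : ℤ} (hp : p.Prime) (hpl : ¬ (p:ℤ) ∣ lam) (l : ℕ) :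
    IsCoprime ((p:ℤ)^l) (lam^2) := by
  have h1 : IsCoprime (p:ℤ) lam := by
    rw [Int.isCoprime_iff_gcd_eq_one]
    have : ¬ p ∣ lam.natAbs := by
      intro hd
      exact hpl (dvd_trans (Int.natCast_dvd_natCast.mpr hd) (Int.natAbs_dvd.mpr dvd_rfl))
    exact Nat.Coprime.gcd_eq_one (hp.coprime_iff_not_dvd.mpr this)
  exact h1.pow

/-- CRT for cardinalities. -/
lemma card_inf {A : Type*} [CommRing A] (I J : Ideal A) (h : I ⊔ J = ⊤) :
    Nat.card (A ⧸ (I ⊓ J)) = Nat.card (A ⧸ I) * Nat.card (A ⧸ J) := by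
  rw [← Nat.card_prod]
  exact Nat.card_congr
    (Ideal.quotientInfEquivQuotientProd I J (Ideal.isCoprime_iff_sup_eq.mpr h)).toEquiv

lemma sup_eq_top {p l : ℕ} {lam : ℤ} (hcop : IsCoprime ((p:ℤ)^l) (lam^2))
    {I₁ I₂ : Ideal ℤ[X]} (hX2 : X ^ 2 ∈ I₁) (hC1 : C ((p:ℤ)^l) ∈ I₁)
    (hXl : X - C lam ∈ I₂) : I₁ ⊔ I₂ = ⊤ := by
  obtain ⟨u, v, huv⟩ := hcop
  rw [Ideal.eq_top_iff_one]
  have hlam : C lam * C lam - X ^ 2 ∈ I₁ ⊔ I₂ := by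
    have h2 : (X - C lam) * (X + C lam) ∈ I₂ := I₂.mul_mem_right _ hXl
    have heq : C lam * C lam - X ^ 2 = -(X ^ 2) + - ((X - C lam) * (X + C lam)) + 2 * X^2
        - X^2 := by ring
    have hx2' : X ^ 2 ∈ I₁ ⊔ I₂ := Submodule.mem_sup_left hX2
    have h2' : (X - C lam) * (X + C lam) ∈ I₁ ⊔ I₂ := Submodule.mem_sup_right h2
    have : C lam * C lam - X ^ 2 = X ^ 2 - (X - C lam) * (X + C lam) - X ^2 + X^2 - X^2 := by
      ring
    rw [this]
    exact Submodule.sub_mem _ (Submodule.add_mem _ (Submodule.sub_mem _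
      (Submodule.sub_mem _ hx2' h2') hx2') hx2') hx2'
  have hone : (1 : ℤ[X]) = C u * C ((p:ℤ)^l) + C v * (C lam * C lam - X^2) + C v * X^2 := by
    have hcast : C (u * (p:ℤ)^l + v * lam ^ 2) = (1 : ℤ[X]) := by rw [huv, map_one]
    rw [← hcast]
    simp only [map_add, map_mul, map_pow]
    ring
  rw [hone]
  refine Submodule.add_mem _ (Submodule.add_mem _ ?_ ?_) ?_
  · exact Submodule.mem_sup_left (I₁.mul_mem_left _ hC1)
  · exact Ideal.mul_mem_left _ _ hlam
  · exact Submodule.mem_sup_left (I₁.mul_mem_left _ hX2)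

section Recover

variable {p l : ℕ} {lam u v : ℤ} {I₁ I₂ : Ideal ℤ[X]}

lemma recover_one (huv : u * (p:ℤ)^l + v * lam^2 = 1)
    (hX2 : X ^ 2 ∈ I₁) (hC1 : C ((p:ℤ)^l) ∈ I₁)
    (hXl : X - C lam ∈ I₂) (hC2 : C ((p:ℤ)^l) ∈ I₂) :
    I₁ = (I₁ ⊓ I₂) ⊔ Ideal.span {X ^ 2} := by
  apply le_antisymm
  · intro x hx
    set e : ℤ[X] := C v * (C lam * C lam - X ^ 2) with he
    have he2 : e ∈ I₂ := by
      have heq : e = (X - C lam) * (-(C v * (X + C lam))) := by rw [he]; ring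
      rw [heq]
      exact I₂.mul_mem_right _ hXl
    have h1e : (1 : ℤ[X]) - e = C u * C ((p:ℤ)^l) + C v * X ^ 2 := by
      have hcast : C (u * (p:ℤ)^l + v * lam ^ 2) = (1 : ℤ[X]) := by rw [huv, map_one]
      rw [he, ← hcast]
      simp only [map_add, map_mul, map_pow]
      ring
    have hxe : x * e ∈ (I₁ ⊓ I₂) ⊔ Ideal.span {X ^ 2} :=
      Submodule.mem_sup_left (Ideal.mem_inf.mpr
        ⟨I₁.mul_mem_right e hx, I₂.mul_mem_left x he2⟩)
    have ht1 : x * (C u * C ((p:ℤ)^l)) ∈ (I₁ ⊓ I₂) ⊔ Ideal.span {X ^ 2} := by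
      refine Submodule.mem_sup_left (Ideal.mem_inf.mpr ⟨I₁.mul_mem_right _ hx, ?_⟩)
      have : x * (C u * C ((p:ℤ)^l)) = (x * C u) * C ((p:ℤ)^l) := by ring
      rw [this]
      exact I₂.mul_mem_left _ hC2
    have ht2 : x * (C v * X ^ 2) ∈ (I₁ ⊓ I₂) ⊔ Ideal.span {X ^ 2} :=
      Submodule.mem_sup_right (Ideal.mem_span_singleton.mpr ⟨x * C v, by ring⟩)
    have hdecomp : x = x * e + (x * (C u * C ((p:ℤ)^l)) + x * (C v * X ^ 2)) := by
      have : x * (C u * C ((p:ℤ)^l)) + x * (C v * X ^ 2) = x * (1 - e) := by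
        rw [h1e]; ring
      rw [this]; ring
    rw [hdecomp]
    exact Submodule.add_mem _ hxe (Submodule.add_mem _ ht1 ht2)
  · refine sup_le inf_le_left ?_
    rw [Ideal.span_le, Set.singleton_subset_iff]
    exact hX2

lemma recover_two (huv : u * (p:ℤ)^l + v * lam^2 = 1)
    (hX2 : X ^ 2 ∈ I₁) (hC1 : C ((p:ℤ)^l) ∈ I₁)
    (hXl : X - C lam ∈ I₂) :
    I₂ = (I₁ ⊓ I₂) ⊔ Ideal.span {X - C lam} := by
  apply le_antisymm
  · intro x hx
    set e : ℤ[X] := C v * (C lam * C lam - X ^ 2) with he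
    have h1e : (1 : ℤ[X]) - e = C u * C ((p:ℤ)^l) + C v * X ^ 2 := by
      have hcast : C (u * (p:ℤ)^l + v * lam ^ 2) = (1 : ℤ[X]) := by rw [huv, map_one]
      rw [he, ← hcast]
      simp only [map_add, map_mul, map_pow]
      ring
    have hxe : x * e ∈ (I₁ ⊓ I₂) ⊔ Ideal.span {X - C lam} := by
      refine Submodule.mem_sup_right (Ideal.mem_span_singleton.mpr ⟨-(C v * (X + C lam)) * x, ?_⟩)
      rw [he]; ring
    have ht1 : x * (C u * C ((p:ℤ)^l)) ∈ (I₁ ⊓ I₂) ⊔ Ideal.span {X - C lam} := by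
      refine Submodule.mem_sup_left (Ideal.mem_inf.mpr ⟨?_, I₂.mul_mem_right _ hx⟩)
      have : x * (C u * C ((p:ℤ)^l)) = (x * C u) * C ((p:ℤ)^l) := by ring
      rw [this]
      exact I₁.mul_mem_left _ hC1
    have ht2 : x * (C v * X ^ 2) ∈ (I₁ ⊓ I₂) ⊔ Ideal.span {X - C lam} := by
      refine Submodule.mem_sup_left (Ideal.mem_inf.mpr ⟨?_, I₂.mul_mem_right _ hx⟩)
      have : x * (C v * X ^ 2) = (x * C v) * X ^ 2 := by ring
      rw [this]
      exact I₁.mul_mem_left _ hX2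
    have hdecomp : x = x * e + (x * (C u * C ((p:ℤ)^l)) + x * (C v * X ^ 2)) := by
      have : x * (C u * C ((p:ℤ)^l)) + x * (C v * X ^ 2) = x * (1 - e) := by
        rw [h1e]; ring
      rw [this]; ring
    rw [hdecomp]
    exact Submodule.add_mem _ hxe (Submodule.add_mem _ ht1 ht2)
  · refine sup_le inf_le_right ?_
    rw [Ideal.span_le, Set.singleton_subset_iff]
    exact hXl

lemma inf_sup_eq (huv : u * (p:ℤ)^l + v * lam^2 = 1) {I : Ideal ℤ[X]}
    (hf : X ^ 2 * (X - C lam) ∈ I) (hpl : C ((p:ℤ)^l) ∈ I) :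
    (I ⊔ Ideal.span {X ^ 2}) ⊓ (I ⊔ Ideal.span {X - C lam}) = I := by
  apply le_antisymm
  · intro x hx
    obtain ⟨hx1, hx2⟩ := Ideal.mem_inf.mp hx
    set e : ℤ[X] := C v * (C lam * C lam - X ^ 2) with he
    have h1e : (1 : ℤ[X]) - e = C u * C ((p:ℤ)^l) + C v * X ^ 2 := by
      have hcast : C (u * (p:ℤ)^l + v * lam ^ 2) = (1 : ℤ[X]) := by rw [huv, map_one]
      rw [he, ← hcast]
      simp only [map_add, map_mul, map_pow]
      ring
    -- x * e ∈ I
    have hxe : x * e ∈ I := by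
      obtain ⟨i, hi, s, hs, hx1e⟩ := Submodule.mem_sup.mp hx1
      obtain ⟨g, rfl⟩ := Ideal.mem_span_singleton.mp hs
      have hX2e : X ^ 2 * g * e = (X ^ 2 * (X - C lam)) * (-(C v * (X + C lam)) * g) := by
        rw [he]; ring
      have hX2e' : X ^ 2 * g * e ∈ I := by
        rw [hX2e]; exact I.mul_mem_right _ hf
      have : x * e = i * e + X ^ 2 * g * e := by rw [← hx1e]; ring
      rw [this]
      exact I.add_mem (I.mul_mem_right e hi) hX2e'
    -- x * (1 - e) ∈ I
    have hx1e' : x * (1 - e) ∈ I := by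
      obtain ⟨i, hi, s, hs, hx2e⟩ := Submodule.mem_sup.mp hx2
      obtain ⟨g, rfl⟩ := Ideal.mem_span_singleton.mp hs
      have hterm : (X - C lam) * g * (1 - e) ∈ I := by
        have heq : (X - C lam) * g * (1 - e)
            = (C u * (X - C lam) * g) * C ((p:ℤ)^l)
              + (C v * g) * (X ^ 2 * (X - C lam)) := by
          rw [h1e]; ring
        rw [heq]
        exact I.add_mem (I.mul_mem_left _ hpl) (I.mul_mem_left _ hf)
      have : x * (1 - e) = i * (1 - e) + (X - C lam) * g * (1 - e) := by
        rw [← hx2e]; ring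
      rw [this]
      exact I.add_mem (I.mul_mem_right _ hi) hterm
    have : x = x * e + x * (1 - e) := by ring
    rw [this]
    exact I.add_mem hxe hx1e'
  · exact le_inf le_sup_left le_sup_left

end Recover


lemma pow_dvd_le {p : ℕ} (hp : p.Prime) {a b : ℕ} (h : ((p:ℤ))^a ∣ (p:ℤ)^b) : a ≤ b := by
  have := Int.natAbs_dvd_natAbs.mpr h
  rw [Int.natAbs_pow, Int.natAbs_pow, Int.natAbs_natCast] at this
  exact (Nat.pow_dvd_pow_iff_le_right hp.one_lt).mp this

lemma Cpow_mem_Jone {p b1 b2 : ℕ} {c : ℤ} :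
    C ((p:ℤ)^(b1+b2)) ∈ Jone p b1 b2 c := by
  have heq : C ((p:ℤ)^(b1+b2))
      = C ((p:ℤ)^b2) * (C ((p:ℤ)^b1) + C c * X) - C c * (C ((p:ℤ)^b2) * X) := by
    rw [pow_add]
    simp only [map_mul]
    ring
  rw [heq]
  exact Ideal.sub_mem _ (Ideal.mul_mem_left _ _ gen1_mem_Jone)
    (Ideal.mul_mem_left _ _ gen2_mem_Jone)

lemma Cl_mem_Jone {p b1 b2 l : ℕ} {c : ℤ} (h : b1 + b2 ≤ l) :
    C ((p:ℤ)^l) ∈ Jone p b1 b2 c := by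
  have heq : C ((p:ℤ)^l) = C ((p:ℤ)^(l - (b1+b2))) * C ((p:ℤ)^(b1+b2)) := by
    rw [← map_mul, ← pow_add]
    congr 2
    omega
  rw [heq]
  exact Ideal.mul_mem_left _ _ Cpow_mem_Jone

lemma Cl_mem_Jtwo {lam : ℤ} {p b3 l : ℕ} (h : b3 ≤ l) :
    C ((p:ℤ)^l) ∈ Jtwo lam p b3 := by
  have heq : C ((p:ℤ)^l) = C ((p:ℤ)^(l - b3)) * C ((p:ℤ)^b3) := by
    rw [← map_mul, ← pow_add]
    congr 2
    omega
  rw [heq]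
  exact Ideal.mul_mem_left _ _ (Ideal.subset_span (by simp))

lemma Jone_inj {p : ℕ} (hp : p.Prime) {b1 b2 b1' b2' : ℕ} {c c' : ℤ}
    (hb : b2 ≤ b1) (hb' : b2' ≤ b1')
    (hc0 : 0 ≤ c) (hcb : c < (p:ℤ)^b2) (hc0' : 0 ≤ c') (hcb' : c' < (p:ℤ)^b2')
    (h : Jone p b1 b2 c = Jone p b1' b2' c') : b1 = b1' ∧ b2 = b2' ∧ c = c' := by
  have hppos : (0:ℤ) < (p:ℤ) := by exact_mod_cast hp.pos
  -- symmetrically usable facts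
  have key : ∀ (a1 a2 a1' a2' : ℕ) (d d' : ℤ), a2 ≤ a1 →
      Jone p a1 a2 d = Jone p a1' a2' d' → a1 ≤ a1' ∧ a2 ≤ a2' := by
    intro a1 a2 a1' a2' d d' ha hJ
    constructor
    · have hm : C ((p:ℤ)^a1') + C d' * X ∈ Jone p a1 a2 d := hJ ▸ gen1_mem_Jone
      rw [mem_Jone_iff ha] at hm
      obtain ⟨u, v, h1, _⟩ := hm
      exact pow_dvd_le hp ⟨u, by rw [h1]; ring⟩
    · have hm : C ((p:ℤ)^a2') * X ∈ Jone p a1 a2 d := hJ ▸ gen2_mem_Jone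
      have hm' : C (0:ℤ) + C ((p:ℤ)^a2') * X ∈ Jone p a1 a2 d := by
        rw [map_zero, zero_add]; exact hm
      rw [mem_Jone_iff ha] at hm'
      obtain ⟨u, v, h1, h2⟩ := hm'
      have hu : u = 0 := by
        rcases mul_eq_zero.mp h1.symm with h | h
        · exact h
        · exact absurd h (by positivity)
      exact pow_dvd_le hp ⟨v, by rw [h2, hu]; ring⟩
  obtain ⟨h11, h21⟩ := key b1 b2 b1' b2' c c' hb h
  obtain ⟨h12, h22⟩ := key b1' b2' b1 b2 c' c hb' h.symm
  have hb1 : b1 = b1' := le_antisymm h11 h12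
  have hb2 : b2 = b2' := le_antisymm h21 h22
  refine ⟨hb1, hb2, ?_⟩
  subst hb1; subst hb2
  have hm : C ((p:ℤ)^b1) + C c' * X ∈ Jone p b1 b2 c := h ▸ gen1_mem_Jone
  rw [mem_Jone_iff hb] at hm
  obtain ⟨u, v, h1, h2⟩ := hm
  have hpb1 : (0:ℤ) < (p:ℤ)^b1 := by positivity
  have hu : u = 1 := by
    have := h1
    nlinarith [h1]
  have hdvd : ((p:ℤ)^b2) ∣ (c' - c) := ⟨v, by rw [h2, hu]; ring⟩
  have : c' - c = 0 := by
    refine Int.eq_zero_of_abs_lt_dvd hdvd ?_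
    rw [abs_lt]; constructor <;> linarith
  linarith
lemma Jtwo_inj {lam : ℤ} {p : ℕ} (hp : p.Prime) {a b : ℕ}
    (h : Jtwo lam p a = Jtwo lam p b) : a = b := by
  have := card_Jtwo (lam := lam) hp a
  rw [h, card_Jtwo hp b] at this
  exact (Nat.pow_right_injective hp.two_le this.symm)


end IdealCountAux

open IdealCountAux Polynomial Function

lemma reindex_sum (p l : ℕ) :
    ∑ b ∈ (Finset.range (l + 1) ×ˢ Finset.range (l + 1) ×ˢ Finset.range (l + 1)).filter
        (fun b => b.2.1 ≤ b.1 ∧ b.1 + b.2.1 + b.2.2 = l), p ^ b.2.1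
      = ∑ b ∈ (Finset.range (l + 1) ×ˢ Finset.range (l + 1) ×ˢ Finset.range (l + 1)).filter
        (fun b => b.2.1 ≤ b.1 ∧ b.1 + b.2.1 + b.2.2 = l),
        p ^ (b.1 - b.2.1 - (b.1 - b.2.1 + 1) / 2) := by
  have hT_iff : ∀ b : ℕ × ℕ × ℕ,
      b ∈ (Finset.range (l + 1) ×ˢ Finset.range (l + 1) ×ˢ Finset.range (l + 1)).filter
        (fun b => b.2.1 ≤ b.1 ∧ b.1 + b.2.1 + b.2.2 = l)
        ↔ b.2.1 ≤ b.1 ∧ b.1 + b.2.1 + b.2.2 = l := by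
    intro b
    simp only [Finset.mem_filter, Finset.mem_product, Finset.mem_range]
    constructor
    · rintro ⟨_, h⟩; exact h
    · rintro ⟨h1, h2⟩; exact ⟨⟨by omega, by omega, by omega⟩, h1, h2⟩
  refine Finset.sum_nbij'
    (i := fun b => (b.1 + b.2.1 - (b.1 - b.2.1) / 2, (b.1 - b.2.1) / 2, b.2.2))
    (j := fun b => (b.1 + b.2.1 - (b.1 - b.2.1) / 2, (b.1 - b.2.1) / 2, b.2.2))
    ?_ ?_ ?_ ?_ ?_
  · rintro ⟨b1, b2, b3⟩ ha
    rw [hT_iff] at ha ⊢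
    dsimp only at ha ⊢
    omega
  · rintro ⟨b1, b2, b3⟩ ha
    rw [hT_iff] at ha ⊢
    dsimp only at ha ⊢
    omega
  · rintro ⟨b1, b2, b3⟩ ha
    rw [hT_iff] at ha
    dsimp only at ha ⊢
    simp only [Prod.mk.injEq]
    refine ⟨?_, ?_, ?_⟩ <;> first | trivial | omega
  · rintro ⟨b1, b2, b3⟩ ha
    rw [hT_iff] at ha
    dsimp only at ha ⊢
    simp only [Prod.mk.injEq]
    refine ⟨?_, ?_, ?_⟩ <;> first | trivial | omega
  · rintro ⟨b1, b2, b3⟩ ha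
    rw [hT_iff] at ha
    dsimp only at ha ⊢
    congr 1
    omega




/-- For `f = X²(X - λ)` and a prime `p ∤ λ`, the number of ideals of `ℤ[X]/(f)` of index
`p^l` equals the sum, over all triples `(b₁, b₂, b₃)` of non-negative integers with
`b₂ ≤ b₁` and `b₁ + b₂ + b₃ = l`, of `p^{b₁ - b₂ - ⌈(b₁ - b₂)/2⌉}` (noting that
`⌈k/2⌉ = (k + 1)/2` in natural-number division). -/
theorem ideal_count_prime_power_lambda (lam : ℤ) (hlam : lam ≠ 0)
    (p : ℕ) (hp : p.Prime) (hpl : ¬ (p : ℤ) ∣ lam) (l : ℕ) :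
    idealCount
        (Polynomial ℤ ⧸ Ideal.span
          {(Polynomial.X : Polynomial ℤ) ^ 2 * (Polynomial.X - Polynomial.C lam)})
        (p ^ l) =
      ∑ b ∈ (Finset.range (l + 1) ×ˢ Finset.range (l + 1) ×ˢ Finset.range (l + 1)).filter
          (fun b => b.2.1 ≤ b.1 ∧ b.1 + b.2.1 + b.2.2 = l),
        p ^ (b.1 - b.2.1 - (b.1 - b.2.1 + 1) / 2) := by
  classical
  have hcop := coprime_pow_lam hp hpl l
  obtain ⟨u, v, huv⟩ := hcop
  have hppos : (0:ℤ) < (p:ℤ) := by exact_mod_cast hp.pos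
  have hp1 : (1:ℤ) ≤ (p:ℤ) := by exact_mod_cast hp.one_lt.le
  -- the target set of ideals of ℤ[X]
  set S : Set (Ideal ℤ[X]) :=
    {I : Ideal ℤ[X] | X ^ 2 * (X - C lam) ∈ I ∧ Nat.card (ℤ[X] ⧸ I) = p ^ l} with hS
  -- Step 1 : reduce to ℤ[X]
  have hstep1 : idealCount
      (Polynomial ℤ ⧸ Ideal.span {(X : ℤ[X]) ^ 2 * (X - C lam)}) (p ^ l) = S.ncard := by
    rw [idealCount,
      ← ncard_ideal_comap (Ideal.Quotient.mk (Ideal.span {(X : ℤ[X]) ^ 2 * (X - C lam)}))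
        Ideal.Quotient.mk_surjective]
    congr 1
    ext I
    rw [hS]
    simp only [Set.mem_setOf_eq, Ideal.mk_ker, Ideal.span_singleton_le_iff_mem]
  -- index finsets
  set T : Finset (ℕ × ℕ × ℕ) :=
    (Finset.range (l + 1) ×ˢ Finset.range (l + 1) ×ˢ Finset.range (l + 1)).filter
      (fun b => b.2.1 ≤ b.1 ∧ b.1 + b.2.1 + b.2.2 = l) with hT
  have hT_iff : ∀ b : ℕ × ℕ × ℕ, b ∈ T ↔ b.2.1 ≤ b.1 ∧ b.1 + b.2.1 + b.2.2 = l := by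
    intro b
    rw [hT]
    simp only [Finset.mem_filter, Finset.mem_product, Finset.mem_range]
    constructor
    · rintro ⟨_, h⟩; exact h
    · rintro ⟨h1, h2⟩; exact ⟨⟨by omega, by omega, by omega⟩, h1, h2⟩
  set Ξ : Finset ((ℕ × ℕ × ℕ) × ℤ) :=
    (T ×ˢ Finset.Ico (0:ℤ) ((p:ℤ)^l)).filter (fun q => q.2 < (p:ℤ)^q.1.2.1) with hΞ
  have hΞ_iff : ∀ q : (ℕ × ℕ × ℕ) × ℤ, q ∈ Ξ ↔
      q.1.2.1 ≤ q.1.1 ∧ q.1.1 + q.1.2.1 + q.1.2.2 = l ∧ 0 ≤ q.2 ∧ q.2 < (p:ℤ)^q.1.2.1 := by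
    intro q
    rw [hΞ]
    simp only [Finset.mem_filter, Finset.mem_product, Finset.mem_Ico, hT_iff]
    constructor
    · rintro ⟨⟨⟨h1, h2⟩, h3, _⟩, h5⟩; exact ⟨h1, h2, h3, h5⟩
    · rintro ⟨h1, h2, h3, h4⟩
      refine ⟨⟨⟨h1, h2⟩, h3, lt_of_lt_of_le h4 ?_⟩, h4⟩
      exact pow_le_pow_right₀ hp1 (by omega)
  set Φ : (ℕ × ℕ × ℕ) × ℤ → Ideal ℤ[X] :=
    fun q => Jone p q.1.1 q.1.2.1 q.2 ⊓ Jtwo lam p q.1.2.2 with hΦ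
  -- BijOn
  have hbij : Set.BijOn Φ (↑Ξ) S := by
    refine ⟨?_, ?_, ?_⟩
    · -- MapsTo
      rintro ⟨⟨b1, b2, b3⟩, c⟩ hq
      rw [Finset.mem_coe, hΞ_iff] at hq
      obtain ⟨hb, hsum, hc0, hcb⟩ := hq
      dsimp only at hb hsum hc0 hcb
      simp only [hΦ, hS, Set.mem_setOf_eq]
      constructor
      · refine Ideal.mem_inf.mpr ⟨?_, ?_⟩
        · exact Ideal.mul_mem_right _ _ X_sq_mem_Jone
        · exact Ideal.mul_mem_left _ _ gen1_mem_Jtwo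
      · have hsup : Jone p b1 b2 c ⊔ Jtwo lam p b3 = ⊤ :=
          sup_eq_top ⟨u, v, huv⟩ X_sq_mem_Jone (Cl_mem_Jone (by omega)) gen1_mem_Jtwo
        have hex : b1 + b2 + b3 = l := by omega
        rw [card_inf _ _ hsup, card_Jone hp hb c, card_Jtwo hp b3, ← pow_add, hex]
    · -- InjOn
      rintro ⟨⟨b1, b2, b3⟩, c⟩ hq ⟨⟨b1', b2', b3'⟩, c'⟩ hq' heq
      rw [Finset.mem_coe, hΞ_iff] at hq hq'
      obtain ⟨hb, hsum, hc0, hcb⟩ := hq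
      obtain ⟨hb', hsum', hc0', hcb'⟩ := hq'
      dsimp only at hb hsum hc0 hcb hb' hsum' hc0' hcb'
      simp only [hΦ] at heq
      have hra : Jone p b1 b2 c = Jone p b1' b2' c' := by
        have r1 := recover_one (I₁ := Jone p b1 b2 c) (I₂ := Jtwo lam p b3) huv X_sq_mem_Jone
          (Cl_mem_Jone (by omega)) gen1_mem_Jtwo (Cl_mem_Jtwo (by omega))
        have r1' := recover_one (I₁ := Jone p b1' b2' c') (I₂ := Jtwo lam p b3') huv X_sq_mem_Jone
          (Cl_mem_Jone (by omega)) gen1_mem_Jtwo (Cl_mem_Jtwo (by omega))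
        rw [r1, r1', heq]
      have hrb : Jtwo lam p b3 = Jtwo lam p b3' := by
        have r2 := recover_two (I₁ := Jone p b1 b2 c) (I₂ := Jtwo lam p b3) huv X_sq_mem_Jone
          (Cl_mem_Jone (by omega)) gen1_mem_Jtwo
        have r2' := recover_two (I₁ := Jone p b1' b2' c') (I₂ := Jtwo lam p b3') huv X_sq_mem_Jone
          (Cl_mem_Jone (by omega)) gen1_mem_Jtwo
        rw [r2, r2', heq]
      obtain ⟨e1, e2, e3⟩ := Jone_inj hp hb hb' hc0 hcb hc0' hcb' hra
      have e4 := Jtwo_inj hp hrb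
      simp only [Prod.mk.injEq]
      exact ⟨⟨e1, e2, e4⟩, e3⟩
    · -- SurjOn
      intro I hI
      rw [hS, Set.mem_setOf_eq] at hI
      obtain ⟨hf, hcard⟩ := hI
      have hClI : C ((p:ℤ)^l) ∈ I := Cpow_mem_of_card hp hcard
      set J₁ : Ideal ℤ[X] := I ⊔ Ideal.span {X ^ 2} with hJ₁
      set J₂ : Ideal ℤ[X] := I ⊔ Ideal.span {X - C lam} with hJ₂
      have hX2J1 : X ^ 2 ∈ J₁ :=
        Submodule.mem_sup_right (Ideal.subset_span (by simp))
      have hXlJ2 : X - C lam ∈ J₂ :=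
        Submodule.mem_sup_right (Ideal.subset_span (by simp))
      have hinf : J₁ ⊓ J₂ = I := inf_sup_eq huv hf hClI
      have hsupJ : J₁ ⊔ J₂ = ⊤ :=
        sup_eq_top ⟨u, v, huv⟩ hX2J1 (Submodule.mem_sup_left hClI) hXlJ2
      have hprod : Nat.card (ℤ[X] ⧸ J₁) * Nat.card (ℤ[X] ⧸ J₂) = p ^ l := by
        rw [← card_inf _ _ hsupJ, hinf, hcard]
      obtain ⟨m, hmle, hm⟩ := (Nat.dvd_prime_pow hp).mp
        (⟨Nat.card (ℤ[X] ⧸ J₂), hprod.symm⟩ : Nat.card (ℤ[X] ⧸ J₁) ∣ p ^ l)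
      have hn2 : Nat.card (ℤ[X] ⧸ J₂) = p ^ (l - m) := by
        have hpm_pos : 0 < p ^ m := pow_pos hp.pos m
        rw [hm] at hprod
        refine Nat.eq_of_mul_eq_mul_left hpm_pos ?_
        rw [hprod, ← pow_add]
        congr 1
        omega
      obtain ⟨b1, b2, c, hb, hb12, hc0, hcb, hJ1eq⟩ := exists_Jone hp hX2J1 hm
      have hJ2eq := exists_Jtwo hp hXlJ2 hn2
      refine ⟨((b1, b2, l - m), c), ?_, ?_⟩
      · rw [Finset.mem_coe, hΞ_iff]
        dsimp only
        exact ⟨hb, by omega, hc0, hcb⟩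
      · simp only [hΦ]
        rw [← hJ1eq, ← hJ2eq, hinf]
  -- counting
  have hncard : S.ncard = Ξ.card := by
    rw [← hbij.image_eq, Set.ncard_image_of_injOn hbij.injOn, Set.ncard_coe_finset]
  -- fiberwise count
  have hfiber : Ξ.card = ∑ b ∈ T, p ^ b.2.1 := by
    rw [Finset.card_eq_sum_card_fiberwise
      (f := Prod.fst) (t := T)
      (fun q hq => by
        rw [Finset.mem_coe, hΞ, Finset.mem_filter, Finset.mem_product] at hq
        exact hq.1.1)]
    refine Finset.sum_congr rfl ?_
    intro b hbT
    rw [hT_iff] at hbT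
    have hfib : Ξ.filter (fun q => q.1 = b) = {b} ×ˢ Finset.Ico (0:ℤ) ((p:ℤ)^b.2.1) := by
      ext q
      rw [Finset.mem_filter, hΞ_iff, Finset.mem_product, Finset.mem_singleton,
        Finset.mem_Ico]
      constructor
      · rintro ⟨⟨h1, h2, h3, h4⟩, h5⟩
        subst h5
        exact ⟨rfl, h3, h4⟩
      · rintro ⟨h5, h3, h4⟩
        subst h5
        exact ⟨⟨hbT.1, hbT.2, h3, h4⟩, rfl⟩
    rw [hfib, Finset.card_product, Finset.card_singleton, one_mul, Int.card_Ico]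
    have : ((p:ℤ))^b.2.1 - 0 = ((p ^ b.2.1 : ℕ) : ℤ) := by push_cast; ring
    rw [this, Int.toNat_natCast]
  rw [hstep1, hncard, hfiber, hT]
  exact reindex_sum p l
end

section
/- Let λ be a nonzero integer, let f(X) = X²(X−λ), let R = ℤ[X]/(f), and let p be a prime not dividing λ. Then in the formal power series ring ℤ⟦X⟧ one has (Σ_{l≥0} a_R(p^l) X^l) · (1 − X)² · (1 − pX²) = 1; that is, the local ideal zeta factor of R at p equals (1 − p^{−s})^{−2} (1 − p^{1−2s})^{−1}. -/
noncomputable def Acoef' (p l : ℕ) : ℕ := ∑ m ∈ Finset.range (l/2 + 1), (l + 1 - 2*m) * p^m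

section PartA
open PowerSeries Finset


noncomputable def S1 : PowerSeries ℤ := PowerSeries.mk fun _ => 1

lemma S1_spec : S1 * (1 - PowerSeries.X) = 1 := by
  ext n
  rw [mul_sub, mul_one, map_sub]
  cases n with
  | zero => simp [S1]
  | succ m => simp [S1, PowerSeries.coeff_succ_mul_X]

noncomputable def S2 (p : ℕ) : PowerSeries ℤ :=
  PowerSeries.mk fun n => if 2 ∣ n then (p : ℤ) ^ (n / 2) else 0

lemma S2_spec (p : ℕ) : S2 p * (1 - PowerSeries.C (p:ℤ) * PowerSeries.X ^ 2) = 1 := by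
  ext n
  rw [mul_sub, mul_one, map_sub, mul_comm (PowerSeries.C (p:ℤ)), ← mul_assoc,
    PowerSeries.coeff_mul_C, PowerSeries.coeff_mul_X_pow']
  rcases Nat.lt_or_ge n 2 with h | h
  · interval_cases n <;> simp [S2]
  · have h2 : ¬ n = 0 := by omega
    simp only [if_pos h, S2, PowerSeries.coeff_mk, PowerSeries.coeff_one, h2, if_false]
    rcases Nat.even_or_odd n with he | ho
    · have : 2 ∣ n := he.two_dvd
      have : 2 ∣ (n-2) := by omega
      rw [if_pos ‹2 ∣ n›, if_pos this]
      have : (n-2)/2 + 1 = n/2 := by omega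
      rw [← this, pow_succ]
      ring
    · have h1 : ¬ (2 ∣ n) := by
        rcases ho with ⟨k, hk⟩; omega
      have h3 : ¬ (2 ∣ (n-2)) := by
        rcases ho with ⟨k, hk⟩; omega
      simp [h1, h3]


lemma mkA_eq (p : ℕ) :
    (PowerSeries.mk fun l => (Acoef' p l : ℤ)) = S1 * S1 * S2 p := by
  have h11 : S1 * S1 = PowerSeries.mk fun n => (n + 1 : ℤ) := by
    ext n
    rw [PowerSeries.coeff_mul]
    simp [S1, Finset.Nat.card_antidiagonal]
  rw [h11]
  ext l
  rw [PowerSeries.coeff_mul]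
  simp only [PowerSeries.coeff_mk, S2]
  rw [Finset.Nat.sum_antidiagonal_eq_sum_range_succ
    (f := fun i k => ((i:ℤ)+1) * (if 2 ∣ k then (p:ℤ)^(k/2) else 0))]
  simp only [mul_ite, mul_zero]
  rw [← Finset.sum_filter]
  rw [show (range (l+1)).filter (fun k => 2 ∣ (l - k)) = ((range (l/2+1)).image (fun m => l - 2*m)) from ?_]
  · rw [Finset.sum_image ?_]
    · push_cast [Acoef']
      apply Finset.sum_congr rfl
      intro m hm
      simp only [Finset.mem_range] at hm
      have h2 : 2*m ≤ l := by omega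
      have : l - (l - 2*m) = 2*m := by omega
      rw [this]
      have : (2*m)/2 = m := by omega
      rw [this]
      have hc : ((l + 1 - 2*m : ℕ) : ℤ) = ((l - 2*m : ℕ) : ℤ) + 1 := by omega
      rw [hc]
    · intro a ha b hb hab
      simp only [Finset.coe_range, Set.mem_Iio, Finset.mem_coe, Finset.mem_range] at ha hb hab
      omega
  · ext k
    simp only [Finset.mem_filter, Finset.mem_range, Finset.mem_image]
    constructor
    · rintro ⟨hk, d, hd⟩
      exact ⟨d, by omega, by omega⟩
    · rintro ⟨m, hm, hmk⟩
      exact ⟨by omega, m, by omega⟩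

lemma partA (p : ℕ) :
    (PowerSeries.mk fun l => (Acoef' p l : ℤ)) * (1 - PowerSeries.X) ^ 2 *
      (1 - PowerSeries.C (p : ℤ) * PowerSeries.X ^ 2) = 1 := by
  rw [mkA_eq, show S1 * S1 * S2 p * (1 - PowerSeries.X) ^ 2 *
      (1 - PowerSeries.C (p:ℤ) * PowerSeries.X ^ 2)
    = (S1 * (1 - PowerSeries.X)) * (S1 * (1 - PowerSeries.X)) *
      (S2 p * (1 - PowerSeries.C (p:ℤ) * PowerSeries.X ^ 2)) by ring,
    S1_spec, S2_spec]
  ring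

end PartA

section PartB
open Polynomial


noncomputable def Jone (p : ℕ) (a b : ℕ) (c : ℤ) : Ideal (Polynomial ℤ) :=
  Ideal.span {X^2, C ((p:ℤ)^b) * X, C ((p:ℤ)^a) + C c * X}

noncomputable def SIdeal (p : ℕ) (a b : ℕ) (c : ℤ) (hba : b ≤ a) : Ideal (Polynomial ℤ) where
  carrier := {f | (p:ℤ)^a ∣ f.coeff 0 ∧ (p:ℤ)^(a+b) ∣ (p:ℤ)^a * f.coeff 1 - c * f.coeff 0}
  add_mem' := by
    rintro f g ⟨h1, h2⟩ ⟨h3, h4⟩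
    refine ⟨by simpa using dvd_add h1 h3, ?_⟩
    have := dvd_add h2 h4
    simpa [coeff_add, mul_add, add_sub_add_comm] using this
  zero_mem' := by simp
  smul_mem' := by
    rintro g f ⟨h1, h2⟩
    simp only [smul_eq_mul, Set.mem_setOf_eq, mul_coeff_zero]
    constructor
    · exact Dvd.dvd.mul_left h1 _
    · have hc1 : (g * f).coeff 1 = g.coeff 0 * f.coeff 1 + g.coeff 1 * f.coeff 0 := by
        rw [coeff_mul]
        simp [Finset.Nat.antidiagonal_succ, Prod.map]
      rw [hc1]
      have key : (p:ℤ)^a * (g.coeff 0 * f.coeff 1 + g.coeff 1 * f.coeff 0)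
          - c * (g.coeff 0 * f.coeff 0)
          = g.coeff 0 * ((p:ℤ)^a * f.coeff 1 - c * f.coeff 0)
            + g.coeff 1 * ((p:ℤ)^a * f.coeff 0) := by ring
      rw [key]
      refine dvd_add (h2.mul_left _) ?_
      obtain ⟨d, hd⟩ := h1
      refine Dvd.dvd.mul_left ?_ _
      refine ⟨(p:ℤ)^(a-b) * d, ?_⟩
      rw [hd]
      have hpp : (p:ℤ)^(a+b) * (p:ℤ)^(a-b) = (p:ℤ)^a * (p:ℤ)^a := by
        rw [← pow_add, ← pow_add]
        congr 1
        omega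
      rw [← mul_assoc, ← hpp]
      ring

lemma poly_decomp (f : Polynomial ℤ) :
    f = f.divX.divX * X^2 + C (f.coeff 1) * X + C (f.coeff 0) := by
  conv_lhs => rw [← divX_mul_X_add f]
  conv_lhs => rw [← divX_mul_X_add f.divX]
  simp [coeff_divX]
  ring

lemma mem_Jone (p : ℕ) (a b : ℕ) (c : ℤ) (hp : p ≠ 0) (hba : b ≤ a) (f : Polynomial ℤ) :
    f ∈ Jone p a b c ↔
      (p:ℤ)^a ∣ f.coeff 0 ∧ (p:ℤ)^(a+b) ∣ (p:ℤ)^a * f.coeff 1 - c * f.coeff 0 := by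
  constructor
  · intro hf
    have hle : Jone p a b c ≤ SIdeal p a b c hba := by
      rw [Jone, Ideal.span_le]
      rintro g hg
      simp only [Set.mem_insert_iff, Set.mem_singleton_iff] at hg
      rcases hg with rfl | rfl | rfl
      · constructor <;> simp [coeff_X_pow]
      · have e0 : ∀ r : ℤ, (C r * X).coeff 0 = 0 := fun r => by simp
        have e1 : ∀ r : ℤ, (C r * X).coeff 1 = r := fun r => by simp
        refine ⟨by rw [e0]; exact dvd_zero _, ?_⟩
        rw [e0, e1, pow_add, mul_zero, sub_zero]
      · have e0 : ∀ r : ℤ, (C r + C c * X).coeff 0 = r := fun r => by simp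
        have e1 : ∀ r : ℤ, (C r + C c * X).coeff 1 = c := fun r => by rw [coeff_add, coeff_C]; simp
        refine ⟨by rw [e0], ?_⟩
        rw [e0, e1, mul_comm, sub_self]
        exact dvd_zero _
    exact hle hf
  · rintro ⟨⟨d, hd⟩, ⟨e, he⟩⟩
    have hpane : ((p:ℤ)^a) ≠ 0 := by
      exact pow_ne_zero _ (by exact_mod_cast hp)
    have hf1 : f.coeff 1 = c * d + (p:ℤ)^b * e := by
      have : (p:ℤ)^a * f.coeff 1 = (p:ℤ)^a * (c * d + (p:ℤ)^b * e) := by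
        have : (p:ℤ)^(a+b) = (p:ℤ)^a * (p:ℤ)^b := pow_add _ _ _
        rw [this] at he
        rw [hd] at he
        linarith [he]
      exact mul_left_cancel₀ hpane this
    have hX2 : X^2 ∈ Jone p a b c := Ideal.subset_span (by simp)
    have hg2 : C ((p:ℤ)^b) * X ∈ Jone p a b c := Ideal.subset_span (by simp)
    have hg3 : C ((p:ℤ)^a) + C c * X ∈ Jone p a b c := Ideal.subset_span (by simp)
    have hcomb : C (f.coeff 1) * X + C (f.coeff 0)
        = C d * (C ((p:ℤ)^a) + C c * X) + C e * (C ((p:ℤ)^b) * X) := by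
      rw [hd, hf1]
      simp only [map_mul, map_add]
      ring
    rw [poly_decomp f, add_assoc]
    refine add_mem (Ideal.mul_mem_left _ _ hX2) ?_
    rw [hcomb]
    exact add_mem (Ideal.mul_mem_left _ _ hg3) (Ideal.mul_mem_left _ _ hg2)

lemma zsmul_pi (p : ℕ) (a b : ℕ) (c : ℤ) (z : ℤ) :
    z • (Ideal.Quotient.mk (Jone p a b c) X) = Ideal.Quotient.mk (Jone p a b c) (C z * X) := by
  rw [← smul_eq_C_mul, ← map_zsmul]

lemma card_Jone (p : ℕ) (a b : ℕ) (c : ℤ) (hp : p.Prime) (hba : b ≤ a) :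
    Nat.card (Polynomial ℤ ⧸ Jone p a b c) = p^(a+b) := by
  have hp0 : p ≠ 0 := hp.ne_zero
  set J := Jone p a b c with hJ
  set π := Ideal.Quotient.mk J with hπ
  have hsmul : ∀ n : ℕ, n • (π X) = π (C (n:ℤ) * X) := by
    intro n
    have : (n : ℕ) • (π X) = ((n : ℤ)) • (π X) := by
      rw [natCast_zsmul]
    rw [this, zsmul_pi]
  have hmemX : ∀ n : ℤ, (C n * X ∈ J) ↔ (p:ℤ)^b ∣ n := by
    intro n
    rw [hJ, mem_Jone p a b c hp0 hba]
    have e0 : (C n * X).coeff 0 = 0 := by simp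
    have e1 : (C n * X).coeff 1 = n := by simp
    rw [e0, e1, mul_zero, sub_zero]
    constructor
    · rintro ⟨-, h⟩
      rw [pow_add] at h
      exact (mul_dvd_mul_iff_left (pow_ne_zero a (by exact_mod_cast hp0))).mp h
    · intro h
      exact ⟨dvd_zero _, by rw [pow_add]; exact mul_dvd_mul_left _ h⟩
  have hord : addOrderOf (π X) = p^b := by
    rw [addOrderOf_eq_iff (by positivity)]
    constructor
    · rw [hsmul, Ideal.Quotient.eq_zero_iff_mem, hmemX]
      push_cast
      rfl
    · intro m hmlt hmpos
      rw [hsmul, Ne, Ideal.Quotient.eq_zero_iff_mem, hmemX]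
      intro hdvd
      have : (p^b : ℤ) ∣ (m : ℤ) := by exact_mod_cast hdvd
      have : (p^b : ℕ) ∣ m := by exact_mod_cast this
      have := Nat.le_of_dvd hmpos this
      omega
  have hcardH : Nat.card (AddSubgroup.zmultiples (π X)) = p^b := by
    rw [Nat.card_zmultiples, hord]
  -- the ring hom to ZMod (p^a)
  have hcast : (((p^a : ℕ)) : ℤ) = (p:ℤ)^a := by push_cast; rfl
  let φ : Polynomial ℤ →+* ZMod (p^a) := (Int.castRingHom _).comp (evalRingHom 0)
  have hφ : ∀ f : Polynomial ℤ, φ f = ((f.coeff 0 : ℤ) : ZMod (p^a)) := by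
    intro f
    simp [φ, evalRingHom, ← coeff_zero_eq_eval_zero]
  have hφJ : ∀ f ∈ J, φ f = 0 := by
    intro f hf
    rw [hφ, ZMod.intCast_zmod_eq_zero_iff_dvd, hcast]
    exact ((mem_Jone p a b c hp0 hba f).mp hf).1
  let φbar : (Polynomial ℤ ⧸ J) →+* ZMod (p^a) := Ideal.Quotient.lift J φ hφJ
  have hsurj : Function.Surjective φbar := by
    intro z
    obtain ⟨n, rfl⟩ := ZMod.intCast_surjective z
    exact ⟨π (C n), by rw [hπ, Ideal.Quotient.lift_mk, hφ]; simp⟩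
  let φa : (Polynomial ℤ ⧸ J) →+ ZMod (p^a) := φbar.toAddMonoidHom
  have hsurja : Function.Surjective φa := hsurj
  have hker : φa.ker = AddSubgroup.zmultiples (π X) := by
    ext x
    constructor
    · intro hx
      obtain ⟨f, rfl⟩ := Ideal.Quotient.mk_surjective (I := J) x
      have h0 : φ f = 0 := hx
      rw [hφ, ZMod.intCast_zmod_eq_zero_iff_dvd, hcast] at h0
      obtain ⟨d, hd⟩ := h0
      rw [AddSubgroup.mem_zmultiples_iff]
      refine ⟨f.coeff 1 - d * c, ?_⟩
      rw [zsmul_pi]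
      rw [Ideal.Quotient.eq, mem_Jone p a b c hp0 hba]
      constructor
      · simpa [hd] using Dvd.intro d rfl
      · have e1 : (C (f.coeff 1 - d * c) * X - f).coeff 1 = - (d * c) := by simp
        have e0 : (C (f.coeff 1 - d * c) * X - f).coeff 0 = - f.coeff 0 := by simp
        rw [e0, e1, hd]
        refine ⟨0, by ring⟩
    · intro hx
      obtain ⟨z, hz⟩ := AddSubgroup.mem_zmultiples_iff.mp hx
      rw [← hz]
      have : φa (π X) = 0 := by
        show φ X = 0
        rw [hφ]
        simp
      rw [AddMonoidHom.mem_ker, map_zsmul, this, smul_zero]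
  rw [AddSubgroup.card_eq_card_quotient_mul_card_addSubgroup (φa.ker),
    Nat.card_congr (QuotientAddGroup.quotientKerEquivOfSurjective φa hsurja).toEquiv,
    Nat.card_zmod, hker, hcardH, pow_add]

lemma C_coeff_mem (J : Ideal (Polynomial ℤ)) (hX2 : X^2 ∈ J) (f : Polynomial ℤ) (hf : f ∈ J) :
    C (f.coeff 1) * X + C (f.coeff 0) ∈ J := by
  have hf2 : f.divX.divX * X^2 + C (f.coeff 1) * X + C (f.coeff 0) ∈ J := by
    rw [← poly_decomp f]
    exact hf
  have := Ideal.sub_mem _ hf2 (Ideal.mul_mem_left _ f.divX.divX hX2)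
  convert this using 1
  ring

lemma classify_Jone (p : ℕ) (hp : p.Prime) (k : ℕ) (J : Ideal (Polynomial ℤ))
    (hX2 : X^2 ∈ J) (hcard : Nat.card (Polynomial ℤ ⧸ J) = p^k) :
    ∃ a b : ℕ, ∃ c : ℕ, b ≤ a ∧ a + b = k ∧ c < p^b ∧ J = Jone p a b (c:ℤ) := by
  have hp0 : p ≠ 0 := hp.ne_zero
  have hpZ : Prime (p : ℤ) := Nat.prime_iff_prime_int.mp hp
  -- p^k ∈ J
  have hfin : Finite (Polynomial ℤ ⧸ J) := by
    refine Nat.finite_of_card_ne_zero ?_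
    rw [hcard]
    positivity
  have hpk : (C ((p:ℤ)^k) : Polynomial ℤ) ∈ J := by
    have h1 : (p^k : ℕ) • (1 : Polynomial ℤ ⧸ J) = 0 := by
      rw [← hcard]
      exact card_nsmul_eq_zero'
    have h2 : ((p^k : ℕ) • (1 : Polynomial ℤ ⧸ J)) =
        Ideal.Quotient.mk J (C ((p:ℤ)^k)) := by
      rw [← map_one (Ideal.Quotient.mk J), ← map_nsmul]
      congr 1
      rw [nsmul_eq_mul, mul_one]
      push_cast
      simp
    rw [← Ideal.Quotient.eq_zero_iff_mem, ← h2, h1]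
  -- the two ℤ-ideals
  let Sb : Ideal ℤ := {
    carrier := {n : ℤ | C n * X ∈ J}
    add_mem' := by
      intro x y hx hy
      simp only [Set.mem_setOf_eq, map_add, add_mul] at *
      exact Ideal.add_mem _ hx hy
    zero_mem' := by simp
    smul_mem' := by
      intro z n hn
      simp only [Set.mem_setOf_eq, smul_eq_mul, map_mul, mul_assoc] at *
      exact Ideal.mul_mem_left _ _ hn }
  let Sa : Ideal ℤ := {
    carrier := {n : ℤ | ∃ m : ℤ, C n + C m * X ∈ J}
    add_mem' := by
      rintro x y ⟨mx, hx⟩ ⟨my, hy⟩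
      refine ⟨mx + my, ?_⟩
      have := Ideal.add_mem _ hx hy
      convert this using 1
      simp only [map_add]
      ring
    zero_mem' := ⟨0, by simp⟩
    smul_mem' := by
      rintro z n ⟨m, hm⟩
      refine ⟨z * m, ?_⟩
      have := Ideal.mul_mem_left _ (C z) hm
      convert this using 1
      simp only [map_mul, smul_eq_mul]
      ring }
  have hpkSb : (p:ℤ)^k ∈ Sb := by
    show C ((p:ℤ)^k) * X ∈ J
    exact Ideal.mul_mem_right _ _ hpk
  have hpkSa : (p:ℤ)^k ∈ Sa := ⟨0, by simpa using hpk⟩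
  -- generators
  obtain ⟨b, hbk, hSb⟩ : ∃ b : ℕ, b ≤ k ∧ ∀ n : ℤ, n ∈ Sb ↔ (p:ℤ)^b ∣ n := by
    have hgen : ∀ n : ℤ, n ∈ Sb ↔ Submodule.IsPrincipal.generator Sb ∣ n :=
      fun n => Submodule.IsPrincipal.mem_iff_generator_dvd Sb
    set g := Submodule.IsPrincipal.generator Sb with hg
    have hdvd : g ∣ (p:ℤ)^k := (hgen _).mp hpkSb
    have : g.natAbs ∣ p^k := by
      have h' := Int.natAbs_dvd_natAbs.mpr hdvd
      rwa [Int.natAbs_pow, Int.natAbs_natCast] at h'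
    obtain ⟨b, hbk, hb⟩ := (Nat.dvd_prime_pow hp).mp this
    refine ⟨b, hbk, fun n => ?_⟩
    rw [hgen n, ← Int.natAbs_dvd, hb]
    push_cast
    rfl
  obtain ⟨a, hak, hSa⟩ : ∃ a : ℕ, a ≤ k ∧ ∀ n : ℤ, n ∈ Sa ↔ (p:ℤ)^a ∣ n := by
    have hgen : ∀ n : ℤ, n ∈ Sa ↔ Submodule.IsPrincipal.generator Sa ∣ n :=
      fun n => Submodule.IsPrincipal.mem_iff_generator_dvd Sa
    set g := Submodule.IsPrincipal.generator Sa with hg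
    have hdvd : g ∣ (p:ℤ)^k := (hgen _).mp hpkSa
    have : g.natAbs ∣ p^k := by
      have h' := Int.natAbs_dvd_natAbs.mpr hdvd
      rwa [Int.natAbs_pow, Int.natAbs_natCast] at h'
    obtain ⟨a, hak, ha⟩ := (Nat.dvd_prime_pow hp).mp this
    refine ⟨a, hak, fun n => ?_⟩
    rw [hgen n, ← Int.natAbs_dvd, ha]
    push_cast
    rfl
  -- b ≤ a
  obtain ⟨m₀, hm₀⟩ : ∃ m : ℤ, C ((p:ℤ)^a) + C m * X ∈ J := by
    have : (p:ℤ)^a ∈ Sa := (hSa _).mpr dvd_rfl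
    exact this
  have hpbX : C ((p:ℤ)^b) * X ∈ J := (hSb _).mpr dvd_rfl
  have hba : b ≤ a := by
    have h1 : X * (C ((p:ℤ)^a) + C m₀ * X) ∈ J := Ideal.mul_mem_left _ _ hm₀
    have h2 : C m₀ * X^2 ∈ J := Ideal.mul_mem_left _ _ hX2
    have h3 : C ((p:ℤ)^a) * X ∈ J := by
      have := Ideal.sub_mem _ h1 h2
      convert this using 1
      ring
    have h4 : (p:ℤ)^a ∈ Sb := h3
    rw [hSb] at h4
    exact (pow_dvd_pow_iff (by exact_mod_cast hp0) hpZ.not_unit).mp h4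
  have hpb_pos : (0:ℤ) < (p:ℤ)^b := by positivity
  set cz : ℤ := m₀ % (p:ℤ)^b with hcz
  have hcz_nonneg : 0 ≤ cz := Int.emod_nonneg _ (ne_of_gt hpb_pos)
  have hcz_lt : cz < (p:ℤ)^b := Int.emod_lt_of_pos _ hpb_pos
  have hgen3 : C ((p:ℤ)^a) + C cz * X ∈ J := by
    have hdiff : (p:ℤ)^b ∣ m₀ - cz := Int.dvd_self_sub_of_emod_eq rfl
    obtain ⟨t, ht⟩ := hdiff
    have hrw : C ((p:ℤ)^a) + C cz * X
        = (C ((p:ℤ)^a) + C m₀ * X) - C t * (C ((p:ℤ)^b) * X) := by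
      have hm : m₀ = cz + (p:ℤ)^b * t := by linarith
      rw [hm]
      simp only [map_add, map_mul]
      ring
    rw [hrw]
    exact Ideal.sub_mem _ hm₀ (Ideal.mul_mem_left _ _ hpbX)
  have hJone_le : Jone p a b cz ≤ J := by
    rw [Jone, Ideal.span_le]
    rintro g hg
    simp only [Set.mem_insert_iff, Set.mem_singleton_iff] at hg
    rcases hg with rfl | rfl | rfl
    · exact hX2
    · exact hpbX
    · exact hgen3
  have hle : J ≤ Jone p a b cz := by
    intro f hf
    rw [mem_Jone p a b cz hp0 hba]
    have h01 := C_coeff_mem J hX2 f hf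
    have hf0 : (p:ℤ)^a ∣ f.coeff 0 := by
      refine (hSa _).mp ⟨f.coeff 1, ?_⟩
      convert h01 using 1
      ring
    obtain ⟨d, hd⟩ := hf0
    refine ⟨⟨d, hd⟩, ?_⟩
    have hsub : C (f.coeff 1 - d * cz) * X ∈ J := by
      have hdmul : C d * (C ((p:ℤ)^a) + C cz * X) ∈ J := Ideal.mul_mem_left _ _ hgen3
      have hmem := Ideal.sub_mem _ h01 hdmul
      convert hmem using 1
      rw [hd]
      simp only [map_mul, map_add, map_sub]
      ring
    have hb1 : (p:ℤ)^b ∣ f.coeff 1 - d * cz := (hSb _).mp hsub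
    obtain ⟨e, he⟩ := hb1
    rw [hd]
    refine ⟨e, ?_⟩
    have hfe : f.coeff 1 = d * cz + (p:ℤ)^b * e := by linarith
    rw [hfe, pow_add]
    ring
  have hJeq : J = Jone p a b cz := le_antisymm hle hJone_le
  have hab : a + b = k := by
    have h1 : (p:ℕ)^(a+b) = p^k := by
      rw [← card_Jone p a b cz hp hba, ← hJeq, hcard]
    exact Nat.pow_right_injective hp.two_le h1
  refine ⟨a, b, cz.toNat, hba, hab, ?_, ?_⟩
  · have h2 : (cz.toNat : ℤ) < ((p^b : ℕ) : ℤ) := by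
      rw [Int.toNat_of_nonneg hcz_nonneg]
      push_cast
      exact hcz_lt
    exact_mod_cast h2
  · rw [hJeq]
    congr 1
    rw [Int.toNat_of_nonneg hcz_nonneg]

noncomputable def Jtwo (lam : ℤ) (p : ℕ) (k : ℕ) : Ideal (Polynomial ℤ) :=
  Ideal.span {X - C lam, C ((p:ℤ)^k)}

lemma mem_Jtwo (lam : ℤ) (p : ℕ) (k : ℕ) (f : Polynomial ℤ) :
    f ∈ Jtwo lam p k ↔ (p:ℤ)^k ∣ f.eval lam := by
  constructor
  · intro hf
    have hle : Jtwo lam p k ≤ Ideal.comap (Polynomial.evalRingHom lam)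
        (Ideal.span {((p:ℤ)^k : ℤ)}) := by
      rw [Jtwo, Ideal.span_le]
      rintro g hg
      simp only [Set.mem_insert_iff, Set.mem_singleton_iff] at hg
      rcases hg with rfl | rfl
      · simp only [SetLike.mem_coe, Ideal.mem_comap]
        simp
      · simp only [SetLike.mem_coe, Ideal.mem_comap, coe_evalRingHom, eval_C]
        exact Ideal.subset_span rfl
    have := hle hf
    rwa [Ideal.mem_comap, coe_evalRingHom, Ideal.mem_span_singleton] at this
  · rintro ⟨d, hd⟩
    have h1 : f - C (f.eval lam) ∈ Jtwo lam p k := by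
      obtain ⟨q, hq⟩ := Polynomial.X_sub_C_dvd_sub_C_eval (a := lam) (p := f)
      rw [hq]
      exact Ideal.mul_mem_right _ _ (Ideal.subset_span (by simp))
    have h2 : C (f.eval lam) ∈ Jtwo lam p k := by
      rw [hd, map_mul]
      exact Ideal.mul_mem_right _ _ (Ideal.subset_span (by simp))
    simpa using Ideal.add_mem _ h1 h2

lemma card_Jtwo (lam : ℤ) (p : ℕ) (k : ℕ) (hp : p ≠ 0) :
    Nat.card (Polynomial ℤ ⧸ Jtwo lam p k) = p^k := by
  have hcast : (((p^k : ℕ)) : ℤ) = (p:ℤ)^k := by push_cast; rfl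
  let ψ : Polynomial ℤ →+* ZMod (p^k) := (Int.castRingHom _).comp (evalRingHom lam)
  have hker : RingHom.ker ψ = Jtwo lam p k := by
    ext f
    rw [RingHom.mem_ker, mem_Jtwo]
    show ((f.eval lam : ℤ) : ZMod (p^k)) = 0 ↔ _
    rw [ZMod.intCast_zmod_eq_zero_iff_dvd, hcast]
  have hsurj : Function.Surjective ψ := by
    intro z
    obtain ⟨n, rfl⟩ := ZMod.intCast_surjective z
    exact ⟨C n, by simp [ψ]⟩
  have := Nat.card_congr (RingHom.quotientKerEquivOfSurjective hsurj).toEquiv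
  rw [hker] at this
  rw [this, Nat.card_zmod]

lemma C_natCard_mem (J : Ideal (Polynomial ℤ)) (n : ℕ) (hcard : Nat.card (Polynomial ℤ ⧸ J) = n) :
    (C ((n:ℤ)) : Polynomial ℤ) ∈ J := by
  have h1 : (n : ℕ) • (1 : Polynomial ℤ ⧸ J) = 0 := by
    rw [← hcard]
    exact card_nsmul_eq_zero'
  have h2 : ((n : ℕ) • (1 : Polynomial ℤ ⧸ J)) = Ideal.Quotient.mk J (C ((n:ℤ))) := by
    rw [← map_one (Ideal.Quotient.mk J), ← map_nsmul]
    congr 1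
    rw [nsmul_eq_mul, mul_one]
    push_cast
    simp
  rw [← Ideal.Quotient.eq_zero_iff_mem, ← h2, h1]

lemma classify_Jtwo (lam : ℤ) (p : ℕ) (hp : p.Prime) (k : ℕ) (J : Ideal (Polynomial ℤ))
    (hXl : X - C lam ∈ J) (hcard : Nat.card (Polynomial ℤ ⧸ J) = p^k) :
    J = Jtwo lam p k := by
  have hp0 : p ≠ 0 := hp.ne_zero
  have hpk : (C ((p:ℤ)^k) : Polynomial ℤ) ∈ J := by
    have := C_natCard_mem J (p^k) hcard
    rwa [show (((p^k : ℕ)) : ℤ) = (p:ℤ)^k by push_cast; rfl] at this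
  let Sl : Ideal ℤ := {
    carrier := {n : ℤ | C n ∈ J}
    add_mem' := by
      intro x y hx hy
      simp only [Set.mem_setOf_eq, map_add] at *
      exact Ideal.add_mem _ hx hy
    zero_mem' := by simp
    smul_mem' := by
      intro z n hn
      simp only [Set.mem_setOf_eq, smul_eq_mul, map_mul] at *
      exact Ideal.mul_mem_left _ _ hn }
  have hpkSl : (p:ℤ)^k ∈ Sl := hpk
  obtain ⟨j, hjk, hSl⟩ : ∃ j : ℕ, j ≤ k ∧ ∀ n : ℤ, n ∈ Sl ↔ (p:ℤ)^j ∣ n := by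
    have hgen : ∀ n : ℤ, n ∈ Sl ↔ Submodule.IsPrincipal.generator Sl ∣ n :=
      fun n => Submodule.IsPrincipal.mem_iff_generator_dvd Sl
    set g := Submodule.IsPrincipal.generator Sl with hg
    have hdvd : g ∣ (p:ℤ)^k := (hgen _).mp hpkSl
    have : g.natAbs ∣ p^k := by
      have h' := Int.natAbs_dvd_natAbs.mpr hdvd
      rwa [Int.natAbs_pow, Int.natAbs_natCast] at h'
    obtain ⟨j, hjk, hj⟩ := (Nat.dvd_prime_pow hp).mp this
    refine ⟨j, hjk, fun n => ?_⟩
    rw [hgen n, ← Int.natAbs_dvd, hj]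
    push_cast
    rfl
  have hJeq : J = Jtwo lam p j := by
    apply le_antisymm
    · intro f hf
      rw [mem_Jtwo]
      refine (hSl _).mp ?_
      show C (f.eval lam) ∈ J
      obtain ⟨q, hq⟩ := Polynomial.X_sub_C_dvd_sub_C_eval (a := lam) (p := f)
      have h1 : f - C (f.eval lam) ∈ J := by
        rw [hq]
        exact Ideal.mul_mem_right _ _ hXl
      have := Ideal.sub_mem _ hf h1
      simpa using this
    · rw [Jtwo, Ideal.span_le]
      rintro g hg
      simp only [Set.mem_insert_iff, Set.mem_singleton_iff] at hg
      rcases hg with rfl | rfl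
      · exact hXl
      · exact (hSl _).mpr dvd_rfl
  have hjk2 : j = k := by
    have h1 : (p:ℕ)^j = p^k := by
      rw [← card_Jtwo lam p j hp0, ← hJeq, hcard]
    exact Nat.pow_right_injective hp.two_le h1
  rw [hJeq, hjk2]

section CRT

variable (lam : ℤ) (p : ℕ)

lemma sup_eq_top_of (hp : p.Prime) (hpl : ¬ (p : ℤ) ∣ lam)
    (I J : Ideal (Polynomial ℤ)) (hX2 : X^2 ∈ I) (hXl : X - C lam ∈ J)
    (m : ℕ) (hpm : (C ((p:ℤ)^m) : Polynomial ℤ) ∈ I ⊔ J) : I ⊔ J = ⊤ := by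
  have hlam2 : (C (lam^2) : Polynomial ℤ) ∈ I ⊔ J := by
    have h1 : (X^2 : Polynomial ℤ) ∈ I ⊔ J := Ideal.mem_sup_left hX2
    have h2 : (X - C lam) * (X + C lam) ∈ I ⊔ J :=
      Ideal.mul_mem_right _ _ (Ideal.mem_sup_right hXl)
    have := Ideal.sub_mem _ h1 h2
    convert this using 1
    rw [map_pow]
    ring
  have hcop : IsCoprime ((p:ℤ)^m) (lam^2) := by
    have h := (Nat.prime_iff_prime_int.mp hp).coprime_iff_not_dvd.mpr hpl
    exact (h.pow : _)
  obtain ⟨u, v, huv⟩ := hcop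
  rw [Ideal.eq_top_iff_one]
  have : (1 : Polynomial ℤ) = C u * C ((p:ℤ)^m) + C v * C (lam^2) := by
    rw [← map_mul, ← map_mul, ← map_add, huv, map_one]
  rw [this]
  exact Ideal.add_mem _ (Ideal.mul_mem_left _ _ hpm) (Ideal.mul_mem_left _ _ hlam2)

lemma pab_mem_Jone (hp : p.Prime) (a b : ℕ) (c : ℤ) (hba : b ≤ a) :
    (C ((p:ℤ)^(a+b)) : Polynomial ℤ) ∈ Jone p a b c := by
  rw [mem_Jone p a b c hp.ne_zero hba]
  constructor
  · simp only [coeff_C]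
    norm_num
    exact pow_dvd_pow _ (by omega)
  · simp only [coeff_C]
    norm_num

lemma f_mem_Jone (a b : ℕ) (c : ℤ) (hp : p.Prime) (hba : b ≤ a) :
    (X^2 * (X - C lam) : Polynomial ℤ) ∈ Jone p a b c :=
  Ideal.mul_mem_right _ _ (Ideal.subset_span (by simp))

lemma f_mem_Jtwo (k : ℕ) : (X^2 * (X - C lam) : Polynomial ℤ) ∈ Jtwo lam p k := by
  rw [mem_Jtwo]
  simp

lemma coprime_Jone_Jtwo (hp : p.Prime) (hpl : ¬ (p : ℤ) ∣ lam)
    (a b k : ℕ) (c : ℤ) (hba : b ≤ a) :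
    IsCoprime (Jone p a b c) (Jtwo lam p k) := by
  rw [Ideal.isCoprime_iff_sup_eq]
  refine sup_eq_top_of lam p hp hpl _ _ (Ideal.subset_span (by simp))
    (Ideal.subset_span (by simp)) (a+b) (Ideal.mem_sup_left (pab_mem_Jone p hp a b c hba))

lemma card_inf (hp : p.Prime) (hpl : ¬ (p : ℤ) ∣ lam) (a b k : ℕ) (c : ℤ) (hba : b ≤ a) :
    Nat.card (Polynomial ℤ ⧸ (Jone p a b c ⊓ Jtwo lam p k)) = p^(a+b+k) := by
  have e := Ideal.quotientInfEquivQuotientProd _ _ (coprime_Jone_Jtwo lam p hp hpl a b k c hba)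
  rw [Nat.card_congr e.toEquiv, Nat.card_prod, card_Jone p a b c hp hba,
    card_Jtwo lam p k hp.ne_zero, ← pow_add]

end CRT

lemma memX_Jone (p : ℕ) (a b : ℕ) (c : ℤ) (hp0 : p ≠ 0) (hba : b ≤ a) (n : ℤ) :
    C n * X ∈ Jone p a b c ↔ (p:ℤ)^b ∣ n := by
  rw [mem_Jone p a b c hp0 hba]
  have e0 : (C n * X).coeff 0 = 0 := by simp
  have e1 : (C n * X).coeff 1 = n := by simp
  rw [e0, e1, mul_zero, sub_zero]
  constructor
  · rintro ⟨-, h⟩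
    rw [pow_add] at h
    exact (mul_dvd_mul_iff_left (pow_ne_zero a (show (p:ℤ) ≠ 0 by exact_mod_cast hp0))).mp h
  · intro h
    exact ⟨dvd_zero _, by rw [pow_add]; exact mul_dvd_mul_left _ h⟩

lemma memC_Jone (p : ℕ) (a b : ℕ) (c : ℤ) (hp0 : p ≠ 0) (hba : b ≤ a) (n : ℤ) :
    (∃ m : ℤ, C n + C m * X ∈ Jone p a b c) ↔ (p:ℤ)^a ∣ n := by
  constructor
  · rintro ⟨m, hm⟩
    rw [mem_Jone p a b c hp0 hba] at hm
    have e0 : (C n + C m * X).coeff 0 = n := by simp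
    rw [e0] at hm
    exact hm.1
  · rintro ⟨d, hd⟩
    refine ⟨d * c, ?_⟩
    rw [mem_Jone p a b c hp0 hba]
    have e0 : ∀ r s : ℤ, (C r + C s * X).coeff 0 = r := fun r s => by simp
    have e1 : ∀ r s : ℤ, (C r + C s * X).coeff 1 = s := fun r s => by
      rw [coeff_add, coeff_C]
      simp
    rw [e0, e1]
    exact ⟨⟨d, hd⟩, ⟨0, by rw [hd]; ring⟩⟩

section Main

variable (lam : ℤ) (p : ℕ) (l : ℕ)

noncomputable def Kid (t : ℕ × ℕ × ℕ) : Ideal (Polynomial ℤ) :=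
  Jone p t.1 t.2.1 (t.2.2 : ℤ) ⊓ Jtwo lam p (l - t.1 - t.2.1)

def Tset : Set (ℕ × ℕ × ℕ) := {t | t.2.1 ≤ t.1 ∧ t.1 + t.2.1 ≤ l ∧ t.2.2 < p^t.2.1}

lemma main_set_eq (hp : p.Prime) (hpl : ¬ (p : ℤ) ∣ lam) :
    {J : Ideal (Polynomial ℤ) | Ideal.span {X^2 * (X - C lam)} ≤ J ∧
      Nat.card (Polynomial ℤ ⧸ J) = p^l}
    = Kid lam p l '' Tset p l := by
  ext J
  simp only [Set.mem_setOf_eq, Set.mem_image]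
  constructor
  · rintro ⟨hfJ, hcard⟩
    have hf_mem : X^2 * (X - C lam) ∈ J := hfJ (Ideal.subset_span rfl)
    have hpl_mem : (C ((p:ℤ)^l) : Polynomial ℤ) ∈ J := by
      have := C_natCard_mem J (p^l) hcard
      rwa [show (((p^l : ℕ)) : ℤ) = (p:ℤ)^l by push_cast; rfl] at this
    set J₁ := J ⊔ Ideal.span {X^2} with hJ₁
    set J₂ := J ⊔ Ideal.span {X - C lam} with hJ₂
    have hX2J₁ : X^2 ∈ J₁ := Ideal.mem_sup_right (Ideal.subset_span rfl)
    have hXlJ₂ : X - C lam ∈ J₂ := Ideal.mem_sup_right (Ideal.subset_span rfl)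
    have htop : J₁ ⊔ J₂ = ⊤ :=
      sup_eq_top_of lam p hp hpl J₁ J₂ hX2J₁ hXlJ₂ l
        (Ideal.mem_sup_left (Ideal.mem_sup_left hpl_mem))
    have hJinf : J = J₁ ⊓ J₂ := by
      refine le_antisymm (le_inf le_sup_left le_sup_left) ?_
      rw [← Ideal.mul_eq_inf_of_coprime htop]
      rw [Ideal.mul_le]
      intro r hr s hs
      obtain ⟨j₁, hj₁, u, hu, hru⟩ := Submodule.mem_sup.mp hr
      obtain ⟨j₂, hj₂, v, hv, hsv⟩ := Submodule.mem_sup.mp hs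
      obtain ⟨q₁, hq₁⟩ := Ideal.mem_span_singleton'.mp hu
      obtain ⟨q₂, hq₂⟩ := Ideal.mem_span_singleton'.mp hv
      have hrs : r * s = s * j₁ + (q₁ * j₂) * (X^2) + (q₁ * q₂) * (X^2 * (X - C lam)) := by
        rw [← hru, ← hsv, ← hq₁, ← hq₂]
        ring
      rw [hrs]
      refine Ideal.add_mem _ (Ideal.add_mem _ (Ideal.mul_mem_left _ _ hj₁) ?_)
        (Ideal.mul_mem_left _ _ hf_mem)
      have : (q₁ * j₂) * X^2 = (q₁ * X^2) * j₂ := by ring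
      rw [this]
      exact Ideal.mul_mem_left _ _ hj₂
    have hcop12 : IsCoprime J₁ J₂ := Ideal.isCoprime_iff_sup_eq.mpr htop
    have hcard12 : Nat.card (Polynomial ℤ ⧸ J₁) * Nat.card (Polynomial ℤ ⧸ J₂) = p^l := by
      have e := Ideal.quotientInfEquivQuotientProd J₁ J₂ hcop12
      have h := Nat.card_congr e.toEquiv
      rw [Nat.card_prod] at h
      rw [← h, ← hJinf, hcard]
    obtain ⟨k₁, hk₁le, hk₁⟩ := (Nat.dvd_prime_pow hp).mp ⟨_, hcard12.symm⟩
    obtain ⟨k₂, hk₂le, hk₂⟩ := (Nat.dvd_prime_pow hp).mp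
      (⟨_, by rw [mul_comm] at hcard12; exact hcard12.symm⟩ :
        Nat.card (Polynomial ℤ ⧸ J₂) ∣ p^l)
    have hk12 : k₁ + k₂ = l := by
      rw [hk₁, hk₂, ← pow_add] at hcard12
      exact Nat.pow_right_injective hp.two_le hcard12
    obtain ⟨a, b, c, hba, habk, hclt, hJ₁eq⟩ := classify_Jone p hp k₁ J₁ hX2J₁ hk₁
    have hJ₂eq := classify_Jtwo lam p hp k₂ J₂ hXlJ₂ hk₂
    refine ⟨(a, b, c), ⟨hba, show a + b ≤ l by omega, hclt⟩, ?_⟩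
    rw [Kid]
    simp only
    rw [show l - a - b = k₂ by omega, hJinf, hJ₁eq, hJ₂eq]
  · rintro ⟨⟨a, b, c⟩, ⟨hba, habl, hclt⟩, rfl⟩
    replace hba : b ≤ a := hba
    replace habl : a + b ≤ l := habl
    constructor
    · rw [Ideal.span_le, Set.singleton_subset_iff]
      exact ⟨f_mem_Jone lam p a b (c:ℤ) hp hba, f_mem_Jtwo lam p _⟩
    · rw [Kid]
      simp only
      rw [card_inf lam p hp hpl a b _ (c:ℤ) hba]
      congr 1
      omega

lemma Kid_injOn (hp : p.Prime) (hpl : ¬ (p : ℤ) ∣ lam) :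
    Set.InjOn (Kid lam p l) (Tset p l) := by
  have hp0 : p ≠ 0 := hp.ne_zero
  have recover : ∀ t ∈ Tset p l,
      Ideal.span {(X:Polynomial ℤ)^2} ⊔ Kid lam p l t = Jone p t.1 t.2.1 (t.2.2 : ℤ) := by
    rintro ⟨a, b, c⟩ ⟨hba, habl, hclt⟩
    have htop2 : Ideal.span {(X:Polynomial ℤ)^2} ⊔ Jtwo lam p (l - a - b) = ⊤ := by
      refine sup_eq_top_of lam p hp hpl _ _ (Ideal.subset_span rfl)
        (Ideal.subset_span (by simp)) (l - a - b)
        (Ideal.mem_sup_right (Ideal.subset_span (by simp)))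
    have hle : Ideal.span {(X:Polynomial ℤ)^2} ≤ Jone p a b (c:ℤ) := by
      rw [Ideal.span_le, Set.singleton_subset_iff]
      exact Ideal.subset_span (by simp)
    rw [Kid]
    simp only
    rw [inf_comm, ← sup_inf_assoc_of_le _ hle, htop2, top_inf_eq]
  intro t ht t' ht' heq
  have hJoneEq : Jone p t.1 t.2.1 (t.2.2 : ℤ) = Jone p t'.1 t'.2.1 (t'.2.2 : ℤ) := by
    rw [← recover t ht, ← recover t' ht', heq]
  obtain ⟨a, b, c⟩ := t
  obtain ⟨a', b', c'⟩ := t'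
  obtain ⟨hba, -, hclt⟩ := ht
  obtain ⟨hba', -, hclt'⟩ := ht'
  simp only at hJoneEq hba hba' hclt hclt' ⊢
  have hpZ : Prime (p:ℤ) := Nat.prime_iff_prime_int.mp hp
  have hbb : b = b' := by
    have h1 : (p:ℤ)^b' ∣ (p:ℤ)^b := by
      rw [← memX_Jone p a' b' (c':ℤ) hp0 hba', ← hJoneEq, memX_Jone p a b (c:ℤ) hp0 hba]
    have h2 : (p:ℤ)^b ∣ (p:ℤ)^b' := by
      rw [← memX_Jone p a b (c:ℤ) hp0 hba, hJoneEq, memX_Jone p a' b' (c':ℤ) hp0 hba']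
    have hb1 := (pow_dvd_pow_iff (show (p:ℤ) ≠ 0 by exact_mod_cast hp0) hpZ.not_unit).mp h1
    have hb2 := (pow_dvd_pow_iff (show (p:ℤ) ≠ 0 by exact_mod_cast hp0) hpZ.not_unit).mp h2
    omega
  have haa : a = a' := by
    have h1 : (p:ℤ)^a' ∣ (p:ℤ)^a := by
      rw [← memC_Jone p a' b' (c':ℤ) hp0 hba']
      conv in (_ ∈ _) => rw [← hJoneEq]
      rw [memC_Jone p a b (c:ℤ) hp0 hba]
    have h2 : (p:ℤ)^a ∣ (p:ℤ)^a' := by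
      rw [← memC_Jone p a b (c:ℤ) hp0 hba]
      conv in (_ ∈ _) => rw [hJoneEq]
      rw [memC_Jone p a' b' (c':ℤ) hp0 hba']
    have hb1 := (pow_dvd_pow_iff (show (p:ℤ) ≠ 0 by exact_mod_cast hp0) hpZ.not_unit).mp h1
    have hb2 := (pow_dvd_pow_iff (show (p:ℤ) ≠ 0 by exact_mod_cast hp0) hpZ.not_unit).mp h2
    omega
  subst hbb
  subst haa
  have hcc : c = c' := by
    have hmem : C ((p:ℤ)^a) + C ((c':ℕ):ℤ) * X ∈ Jone p a b (c:ℤ) := by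
      rw [hJoneEq]
      exact Ideal.subset_span (by simp)
    rw [mem_Jone p a b (c:ℤ) hp0 hba] at hmem
    have e0 : ∀ r s : ℤ, (C r + C s * X).coeff 0 = r := fun r s => by simp
    have e1 : ∀ r s : ℤ, (C r + C s * X).coeff 1 = s := fun r s => by
      rw [coeff_add, coeff_C]
      simp
    rw [e0, e1] at hmem
    obtain ⟨-, hdvd⟩ := hmem
    have hdvd2 : (p:ℤ)^b ∣ ((c':ℕ):ℤ) - (c:ℕ) := by
      have h3 : (p:ℤ)^a * ((c':ℕ):ℤ) - ((c:ℕ):ℤ) * (p:ℤ)^a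
          = (p:ℤ)^a * (((c':ℕ):ℤ) - (c:ℕ)) := by ring
      rw [h3, pow_add] at hdvd
      exact (mul_dvd_mul_iff_left
        (pow_ne_zero a (show (p:ℤ) ≠ 0 by exact_mod_cast hp0))).mp hdvd
    have habs : |((c':ℕ):ℤ) - (c:ℕ)| < (p:ℤ)^b := by
      rw [abs_lt]
      constructor
      · have : ((c:ℕ):ℤ) < ((p^b : ℕ):ℤ) := by exact_mod_cast hclt
        push_cast at this ⊢
        omega
      · have : ((c':ℕ):ℤ) < ((p^b : ℕ):ℤ) := by exact_mod_cast hclt'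
        push_cast at this ⊢
        omega
    have := Int.eq_zero_of_abs_lt_dvd hdvd2 habs
    omega
  simp [hcc]

end Main

noncomputable def Tfin (p l : ℕ) : Finset (ℕ × ℕ × ℕ) :=
  (Finset.range (l+1) ×ˢ Finset.range (l+1) ×ˢ Finset.range (p^l)).filter
    (fun t => t.2.1 ≤ t.1 ∧ t.1 + t.2.1 ≤ l ∧ t.2.2 < p^t.2.1)

lemma Tset_eq_Tfin (p l : ℕ) (hp : 1 ≤ p) : Tset p l = ↑(Tfin p l) := by
  ext ⟨a, b, c⟩
  simp only [Tset, Set.mem_setOf_eq, Tfin, Finset.coe_filter, Finset.mem_product,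
    Finset.mem_range]
  constructor
  · rintro ⟨h1, h2, h3⟩
    have hbl : b ≤ l := by omega
    have : p^b ≤ p^l := Nat.pow_le_pow_right hp hbl
    exact ⟨⟨by omega, by omega, by omega⟩, h1, h2, h3⟩
  · rintro ⟨-, h⟩
    exact h

lemma Tfin_card (p l : ℕ) (hp : 1 ≤ p) : (Tfin p l).card = Acoef' p l := by
  rw [Tfin, Finset.card_filter]
  rw [Finset.sum_product]
  have step1 : ∀ a ∈ Finset.range (l+1),
      (∑ bc ∈ Finset.range (l+1) ×ˢ Finset.range (p^l),
        if bc.1 ≤ a ∧ a + bc.1 ≤ l ∧ bc.2 < p^bc.1 then 1 else 0)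
      = ∑ b ∈ Finset.range (l+1), if b ≤ a ∧ a + b ≤ l then p^b else 0 := by
    intro a _
    rw [Finset.sum_product]
    refine Finset.sum_congr rfl ?_
    intro b hb
    simp only [Finset.mem_range] at hb
    by_cases hcond : b ≤ a ∧ a + b ≤ l
    · rw [if_pos hcond]
      have hble : p^b ≤ p^l := Nat.pow_le_pow_right hp (by omega)
      have : ∀ c : ℕ, (if b ≤ a ∧ a + b ≤ l ∧ c < p^b then 1 else 0)
          = if c < p^b then 1 else 0 := by
        intro c
        by_cases hc : c < p^b
        · rw [if_pos ⟨hcond.1, hcond.2, hc⟩, if_pos hc]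
        · rw [if_neg (by tauto), if_neg hc]
      rw [Finset.sum_congr rfl (fun c _ => this c)]
      rw [← Finset.sum_filter,
        show (Finset.range (p^l)).filter (fun c => c < p^b) = Finset.range (p^b) from by
          ext c
          simp only [Finset.mem_filter, Finset.mem_range]
          omega,
        Finset.sum_const, Finset.card_range, smul_eq_mul, mul_one]
    · rw [if_neg hcond]
      refine Finset.sum_eq_zero ?_
      intro c _
      rw [if_neg (by tauto)]
  rw [Finset.sum_congr rfl step1, Finset.sum_comm]
  have step2 : ∀ b ∈ Finset.range (l+1),
      (∑ a ∈ Finset.range (l+1), if b ≤ a ∧ a + b ≤ l then p^b else 0)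
      = (l - b + 1 - b) * p^b := by
    intro b _
    rw [← Finset.sum_filter]
    rw [show (Finset.range (l+1)).filter (fun a => b ≤ a ∧ a + b ≤ l)
        = Finset.Icc b (l - b) from ?_]
    · rw [Finset.sum_const, Nat.card_Icc, smul_eq_mul]
    · ext a
      simp only [Finset.mem_filter, Finset.mem_range, Finset.mem_Icc]
      omega
  rw [Finset.sum_congr rfl step2]
  rw [Acoef']
  rw [← Finset.sum_subset (Finset.range_subset_range.mpr (show l/2 + 1 ≤ l + 1 by omega))]
  · refine Finset.sum_congr rfl ?_
    intro m hm
    simp only [Finset.mem_range] at hm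
    congr 1
    omega
  · intro m _ hm
    simp only [Finset.mem_range] at hm
    have : l - m + 1 - m = 0 := by omega
    rw [this, zero_mul]

section Transfer

variable (lam : ℤ) (p : ℕ) (l : ℕ)

lemma card_comap_eq (F : Ideal (Polynomial ℤ)) (I : Ideal (Polynomial ℤ ⧸ F)) :
    Nat.card (Polynomial ℤ ⧸ Ideal.comap (Ideal.Quotient.mk F) I)
      = Nat.card ((Polynomial ℤ ⧸ F) ⧸ I) := by
  let g := (Ideal.Quotient.mk I).comp (Ideal.Quotient.mk F)
  have hgsurj : Function.Surjective g :=
    (Ideal.Quotient.mk_surjective).comp (Ideal.Quotient.mk_surjective)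
  have hker : RingHom.ker g = Ideal.comap (Ideal.Quotient.mk F) I := by
    rw [show RingHom.ker g = (RingHom.ker (Ideal.Quotient.mk I)).comap (Ideal.Quotient.mk F)
      from (RingHom.comap_ker _ _).symm, Ideal.mk_ker]
  have := Nat.card_congr (RingHom.quotientKerEquivOfSurjective hgsurj).toEquiv
  rw [hker] at this
  exact this

noncomputable def idealEquiv (F : Ideal (Polynomial ℤ)) (n : ℕ) :
    {I : Ideal (Polynomial ℤ ⧸ F) | Nat.card ((Polynomial ℤ ⧸ F) ⧸ I) = n}
    ≃ {J : Ideal (Polynomial ℤ) | F ≤ J ∧ Nat.card (Polynomial ℤ ⧸ J) = n} where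
  toFun I := ⟨Ideal.comap (Ideal.Quotient.mk F) I.1, by
    intro x hx
    rw [Ideal.mem_comap]
    rw [Ideal.Quotient.eq_zero_iff_mem.mpr hx]
    exact I.1.zero_mem, by rw [card_comap_eq]; exact I.2⟩
  invFun J := ⟨Ideal.map (Ideal.Quotient.mk F) J.1, by
    have hcm : Ideal.comap (Ideal.Quotient.mk F) (Ideal.map (Ideal.Quotient.mk F) J.1) = J.1 := by
      rw [Ideal.comap_map_of_surjective _ Ideal.Quotient.mk_surjective]
      rw [← RingHom.ker_eq_comap_bot, Ideal.mk_ker]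
      exact sup_eq_left.mpr J.2.1
    simp only [Set.mem_setOf_eq]
    rw [← card_comap_eq, hcm]
    exact J.2.2⟩
  left_inv I := by
    ext1
    exact Ideal.map_comap_of_surjective _ Ideal.Quotient.mk_surjective I.1
  right_inv J := by
    ext1
    show Ideal.comap _ (Ideal.map _ J.1) = J.1
    rw [Ideal.comap_map_of_surjective _ Ideal.Quotient.mk_surjective]
    rw [← RingHom.ker_eq_comap_bot, Ideal.mk_ker]
    exact sup_eq_left.mpr J.2.1

lemma count_eq (hp : p.Prime) (hpl : ¬ (p : ℤ) ∣ lam) :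
    {I : Ideal (Polynomial ℤ ⧸ Ideal.span {X^2 * (X - C lam)}) |
      Nat.card ((Polynomial ℤ ⧸ Ideal.span {X^2 * (X - C lam)}) ⧸ I) = p^l}.ncard
      = Acoef' p l := by
  rw [← Nat.card_coe_set_eq, Nat.card_congr (idealEquiv (Ideal.span {X^2 * (X - C lam)}) (p^l)),
    Nat.card_coe_set_eq]
  rw [show {J : Ideal (Polynomial ℤ) | Ideal.span {X^2 * (X - C lam)} ≤ J ∧
      Nat.card (Polynomial ℤ ⧸ J) = p^l} = Kid lam p l '' Tset p l from
      main_set_eq lam p l hp hpl,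
    Set.ncard_image_of_injOn (Kid_injOn lam p l hp hpl),
    Tset_eq_Tfin p l hp.one_le, Set.ncard_coe_finset, Tfin_card p l hp.one_le]

end Transfer

end PartB

/-- For `f = X²(X - λ)` and a prime `p ∤ λ`, the local ideal zeta factor of `ℤ[X]/(f)`
at `p` equals `(1 - X)⁻² (1 - pX²)⁻¹`, i.e. its product with `(1 - X)² (1 - pX²)` is `1`
in `ℤ⟦X⟧`. -/
theorem local_factor_lambda_coprime (lam : ℤ) (hlam : lam ≠ 0)
    (p : ℕ) (hp : p.Prime) (hpl : ¬ (p : ℤ) ∣ lam) :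
    (PowerSeries.mk fun l =>
        (idealCount
          (Polynomial ℤ ⧸ Ideal.span
            {(Polynomial.X : Polynomial ℤ) ^ 2 * (Polynomial.X - Polynomial.C lam)})
          (p ^ l) : ℤ)) *
      (1 - PowerSeries.X) ^ 2 * (1 - PowerSeries.C (p : ℤ) * PowerSeries.X ^ 2) = 1 := by
  have key : ∀ l : ℕ,
      idealCount
        (Polynomial ℤ ⧸ Ideal.span
          {(Polynomial.X : Polynomial ℤ) ^ 2 * (Polynomial.X - Polynomial.C lam)})
        (p ^ l) = Acoef' p l := by
    intro l
    exact count_eq lam p l hp hpl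
  have hfun : (fun l =>
      (idealCount
        (Polynomial ℤ ⧸ Ideal.span
          {(Polynomial.X : Polynomial ℤ) ^ 2 * (Polynomial.X - Polynomial.C lam)})
        (p ^ l) : ℤ)) = fun l => (Acoef' p l : ℤ) := by
    funext l
    exact_mod_cast congrArg (fun n : ℕ => (n : ℤ)) (key l)
  rw [hfun]
  exact partA p
end
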